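/- arXiv:2007.05819 — 8 statements merged into one kernel-verified Lean document; each statement's English description precedes it below -/
import Mathlib

section
/- Let n > 2, G = C_{2^n} = ⟨a⟩, and F a finite field of characteristic 2. Let σ₃ be the F-linear extension of the automorphism a ↦ a^{2^{n-1}-1} to the group algebra FG. Then the order of the unitary subgroup V_{σ₃}(FG) equals |F|^{2^{n-1}}. -/
open AddMonoidAlgebra

set_option linter.unusedSectionVars false
set_option linter.unusedVariables false
set_option maxHeartbeats 1000000

/-- The group algebra of the cyclic group of order `2^n` over `F`. -/
abbrev GA (F : Type) [Field F] (n : ℕ) := AddMonoidAlgebra F (ZMod (2^n))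

/-- The ring endomorphism of `GA F n` induced by the group endomorphism
`a^i ↦ a^(c*i)` (written additively: `i ↦ c * i`). -/
noncomputable def sigma (F : Type) [Field F] (n : ℕ) (c : ZMod (2^n)) :
    GA F n →+* GA F n :=
  AddMonoidAlgebra.mapDomainRingHom F (AddMonoidHom.mulLeft c)

/-- The augmentation map of the group algebra. -/
noncomputable def aug (F : Type) [Field F] (n : ℕ) : GA F n →+* F :=
  ((AddMonoidAlgebra.lift F F (ZMod (2^n))) 1).toRingHom

/-- The group `V(FG)` of normalized units. -/
noncomputable def V (F : Type) [Field F] (n : ℕ) : Subgroup (GA F n)ˣ :=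
  (Units.map (aug F n).toMonoidHom).ker

/-- The unitary subgroup `V_σ(FG)` of normalized units `u` with `σ(u) = u⁻¹`,
for the involution `σ` induced by `a ↦ a^c`. -/
noncomputable def Vsig (F : Type) [Field F] (n : ℕ) (c : ZMod (2^n)) :
    Subgroup (GA F n)ˣ :=
  V F n ⊓ MonoidHom.ker (Units.map (sigma F n c).toMonoidHom * MonoidHom.id _)

namespace CU

variable (F : Type) [Field F] [Fintype F] [CharP F 2] (n : ℕ)

noncomputable def aa : GA F n := single (1 : ZMod (2^n)) (1 : F)

noncomputable def tt : GA F n := aa F n - 1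

variable {F n}

lemma charA : CharP (GA F n) 2 := by
  have hinj : Function.Injective (algebraMap F (GA F n)) := by
    intro x y h
    have : single (0 : ZMod (2^n)) x = single 0 y := h
    exact AddMonoidAlgebra.single_right_injective this
  exact charP_of_injective_algebraMap hinj 2

lemma aa_pow (k : ℕ) : (aa F n) ^ k = single ((k : ZMod (2^n))) (1 : F) := by
  rw [aa, AddMonoidAlgebra.single_pow, one_pow, nsmul_eq_mul, mul_one]

lemma aa_pow_card : (aa F n) ^ (2^n) = 1 := by
  rw [aa_pow, ZMod.natCast_self]; rfl

lemma isUnit_aa : IsUnit (aa F n) := by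
  refine IsUnit.of_mul_eq_one ((aa F n)^(2^n - 1)) ?_
  have h2 : 0 < 2^n := Nat.pow_pos (n := n) (by norm_num)
  rw [← pow_succ', Nat.sub_add_cancel h2, aa_pow_card]

lemma tt_pow_card : (tt F n) ^ (2^n) = 0 := by
  haveI : CharP (GA F n) 2 := charA
  haveI : Fact (Nat.Prime 2) := ⟨Nat.prime_two⟩
  rw [tt, sub_pow_char_pow, aa_pow_card, one_pow, sub_self]

lemma aug_single (g : ZMod (2^n)) (r : F) : aug F n (single g r) = r := by
  rw [aug]
  simp

-- sigma on single
lemma sigma_single (c g : ZMod (2^n)) (r : F) :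
    sigma F n c (single g r) = single (c * g) r := by
  simp [sigma, AddMonoidAlgebra.mapDomainRingHom]

lemma sigma_sigma {c : ZMod (2^n)} (hc : c * c = 1) (x : GA F n) :
    sigma F n c (sigma F n c x) = x := by
  have : (sigma F n c).comp (sigma F n c) = RingHom.id _ := by
    apply AddMonoidAlgebra.ringHom_ext <;> intro b <;>
      simp [sigma_single, ← mul_assoc, hc]
  exact RingHom.congr_fun this x

lemma aug_sigma (c : ZMod (2^n)) (x : GA F n) : aug F n (sigma F n c x) = aug F n x := by
  have : (aug F n).comp (sigma F n c) = aug F n := by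
    apply AddMonoidAlgebra.ringHom_ext <;> intro b <;> simp [sigma_single, aug_single]
  exact RingHom.congr_fun this x

lemma aug_aa : aug F n (aa F n) = 1 := aug_single _ _

lemma aug_tt : aug F n (tt F n) = 0 := by
  rw [tt, map_sub, aug_aa, map_one, sub_self]

instance : NeZero (2^n) := ⟨(Nat.pow_pos (n := n) (by norm_num)).ne'⟩

-- generic binomial lemma
lemma bin {R : Type} [CommRing R] (y : R) (k : ℕ) :
    ∃ cc : R, (1 + y)^k = 1 + (k : R) * y + y^2 * cc := by
  induction k with
  | zero => exact ⟨0, by simp⟩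
  | succ k ih =>
    obtain ⟨c, hc⟩ := ih
    refine ⟨c + (k : R) + y * c, ?_⟩
    rw [pow_succ, hc]
    push_cast
    ring

-- x with aug 0 is divisible by tt
lemma dvd_of_aug_eq_zero {x : GA F n} (h : aug F n x = 0) : tt F n ∣ x := by
  classical
  have hx : x = ∑ g ∈ x.coeff.support, single g (x.coeff g) := (AddMonoidAlgebra.sum_coeff_single x).symm
  have haug : ∑ g ∈ x.coeff.support, x.coeff g = 0 := by
    have := congrArg (aug F n) hx
    rw [map_sum] at this
    simp only [aug_single] at this
    rw [h] at this; exact this.symm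
  have key : ∀ g : ZMod (2^n), ∃ z, single g (1:F) = 1 + tt F n * z := by
    intro g
    refine ⟨∑ i ∈ Finset.range g.val, (aa F n)^i, ?_⟩
    have h1 : single g (1:F) = (aa F n)^(g.val) := by
      rw [aa_pow, ZMod.natCast_val, ZMod.cast_id]
    have h2 := geom_sum_mul (aa F n) g.val
    rw [h1, tt]
    linear_combination -h2
  choose z hz using key
  have : x = ∑ g ∈ x.coeff.support, ((x.coeff g) • (1 + tt F n * z g)) := by
    conv_lhs => rw [hx]
    refine Finset.sum_congr rfl fun g _ => ?_
    rw [← hz g]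
    rw [AddMonoidAlgebra.smul_single, smul_eq_mul, mul_one]
  rw [this]
  have expand : ∀ g ∈ x.coeff.support, (x.coeff g) • (1 + tt F n * z g)
      = algebraMap F _ (x.coeff g) + tt F n * ((x.coeff g) • z g) := by
    intro g _
    rw [smul_add, Algebra.smul_def, mul_one, mul_smul_comm]
  rw [Finset.sum_congr rfl expand, Finset.sum_add_distrib, ← map_sum, haug, map_zero, zero_add,
    ← Finset.mul_sum]
  exact Dvd.intro _ rfl

lemma pow_card_eq_zero_of_aug_eq_zero {x : GA F n} (h : aug F n x = 0) : x ^ (2^n) = 0 := by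
  obtain ⟨z, hz⟩ := dvd_of_aug_eq_zero h
  rw [hz, mul_pow, tt_pow_card, zero_mul]

lemma isUnit_of_aug_eq_one {x : GA F n} (h : aug F n x = 1) : IsUnit x := by
  have h0 : aug F n (1 - x) = 0 := by rw [map_sub, map_one, h, sub_self]
  have : IsNilpotent (1 - x) := ⟨2^n, pow_card_eq_zero_of_aug_eq_zero h0⟩
  simpa using this.isUnit_one_sub

-- top power
lemma tt_pow_range (r : ℕ) :
    (tt F n) ^ (2^r - 1) = ∑ j ∈ Finset.range (2^r), (aa F n)^j := by
  haveI : CharP (GA F n) 2 := charA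
  haveI : Fact (Nat.Prime 2) := ⟨Nat.prime_two⟩
  induction r with
  | zero => simp
  | succ r ih =>
    have hexp : 2^(r+1) - 1 = (2^r - 1) + 2^r := by
      have : 0 < 2^r := Nat.pow_pos (n := r) (by norm_num)
      omega
    rw [hexp, pow_add, ih]
    have htt : (tt F n)^(2^r) = (aa F n)^(2^r) - 1 := by
      rw [tt, sub_pow_char_pow, one_pow]
    have h2 : 2^(r+1) = 2^r + 2^r := by ring
    rw [htt, CharTwo.sub_eq_add, mul_add, mul_one, h2, Finset.sum_range_add, Finset.sum_mul,
      add_comm]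
    congr 1
    refine Finset.sum_congr rfl fun j _ => ?_
    rw [← pow_add, Nat.add_comm]

lemma tt_top : (tt F n) ^ (2^n - 1) = ∑ g : ZMod (2^n), single g (1:F) := by
  rw [tt_pow_range]
  refine Finset.sum_nbij' (fun j => ((j : ZMod (2^n)))) (fun g => g.val) ?_ ?_ ?_ ?_ ?_
  · intro j _; exact Finset.mem_univ _
  · intro g _; exact Finset.mem_range.mpr (ZMod.val_lt g)
  · intro j hj; exact ZMod.val_cast_of_lt (Finset.mem_range.mp hj)
  · intro g _; simp [ZMod.natCast_val, ZMod.cast_id]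
  · intro j _; rw [aa_pow]

lemma coe_tt_top_zero : ((tt F n) ^ (2^n - 1)).coeff 0 = 1 := by
  classical
  rw [tt_top, AddMonoidAlgebra.coeff_sum, Finsupp.finset_sum_apply]
  simp only [AddMonoidAlgebra.coeff_single]
  rw [Finset.sum_congr rfl (fun g _ => Finsupp.single_apply)]
  rw [Finset.sum_ite_eq' Finset.univ (0 : ZMod (2^n)) (fun _ => (1:F))]
  simp

lemma smul_tt_top_cancel {x : F} (h : x • (tt F n) ^ (2^n - 1) = 0) : x = 0 := by
  have h0 : (x • (tt F n)^(2^n-1)).coeff 0 = (0 : GA F n).coeff 0 := by rw [h]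
  rw [AddMonoidAlgebra.coeff_smul_apply, coe_tt_top_zero] at h0
  simpa using h0

lemma param_cancel {d : ℕ} (hd : d < 2^n) {x : F}
    (h : (tt F n)^(d+1) ∣ x • (tt F n)^d) : x = 0 := by
  obtain ⟨z, hz⟩ := h
  apply smul_tt_top_cancel (n := n)
  have hN : 2^n - 1 - d + (d + 1) = 2^n := by omega
  have he : 2^n - 1 - d + d = 2^n - 1 := by omega
  have : (tt F n)^(2^n - 1 - d) * (x • (tt F n)^d) = x • (tt F n)^(2^n - 1) := by
    rw [mul_smul_comm, ← pow_add, he]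
  rw [← this, hz, ← mul_assoc, ← pow_add, hN, tt_pow_card, zero_mul]

lemma aug_algebraMap (r : F) : aug F n (algebraMap F (GA F n) r) = r := by
  have : algebraMap F (GA F n) r = single 0 r := rfl
  rw [this, aug_single]

lemma tt_top_mul (x : GA F n) :
    (tt F n)^(2^n - 1) * x = aug F n x • (tt F n)^(2^n - 1) := by
  have h0 : aug F n (x - algebraMap F _ (aug F n x)) = 0 := by
    rw [map_sub, aug_algebraMap, sub_self]
  obtain ⟨z, hz⟩ := dvd_of_aug_eq_zero h0
  have hx : x = algebraMap F _ (aug F n x) + tt F n * z := by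
    rw [← hz]; ring
  calc (tt F n)^(2^n - 1) * x
      = (tt F n)^(2^n - 1) * algebraMap F _ (aug F n x)
        + (tt F n)^(2^n - 1) * tt F n * z := by conv_lhs => rw [hx, mul_add, ← mul_assoc]
    _ = aug F n x • (tt F n)^(2^n - 1) := by
        rw [← pow_succ, Nat.sub_add_cancel (Nat.pow_pos (n := n) (by norm_num)), tt_pow_card,
          zero_mul, add_zero, mul_comm, ← Algebra.smul_def]


-- ### sigma structure

variable (n) in
noncomputable def cc : ZMod (2^n) := 2^(n-1) - 1

lemma two_pow_zmod {k : ℕ} (hk : n ≤ k) : ((2:ZMod (2^n)))^k = 0 := by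
  have h : ((2:ZMod (2^n)))^k = ((2^k : ℕ) : ZMod (2^n)) := by push_cast; rfl
  rw [h, ZMod.natCast_eq_zero_iff]
  exact pow_dvd_pow 2 hk

lemma cc_mul_cc (hn : 2 < n) : cc n * cc n = 1 := by
  have h1 : ((2:ZMod (2^n)))^(n-1) * 2^(n-1) = 0 := by
    rw [← pow_add]; exact two_pow_zmod (by omega)
  have h2 : (2:ZMod (2^n)) * 2^(n-1) = 0 := by
    rw [← pow_succ']; exact two_pow_zmod (by omega)
  rw [cc]
  linear_combination h1 - h2

lemma sigma_aa : sigma F n (cc n) (aa F n) = (aa F n)^(2^(n-1) - 1) := by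
  rw [aa_pow, aa, sigma_single, mul_one]
  congr 1
  rw [cc]
  have h1 : (1:ℕ) ≤ 2^(n-1) := Nat.one_le_two_pow
  push_cast [Nat.cast_sub h1]
  ring

lemma aa_eq : aa F n = tt F n + 1 := by rw [tt]; ring

lemma aa_pow_half : (aa F n)^(2^(n-1)) = 1 + (tt F n)^(2^(n-1)) := by
  haveI : CharP (GA F n) 2 := charA
  haveI : Fact (Nat.Prime 2) := ⟨Nat.prime_two⟩
  rw [aa_eq, add_pow_char_pow, one_pow, add_comm]

lemma two_zero : (2 : GA F n) = 0 := by
  haveI : CharP (GA F n) 2 := charA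
  exact CharTwo.two_eq_zero

lemma sta (hn : 2 < n) :
    sigma F n (cc n) (tt F n) * aa F n = tt F n + (tt F n)^(2^(n-1)) := by
  have hs : sigma F n (cc n) (tt F n) = (aa F n)^(2^(n-1)-1) - 1 := by
    rw [tt, map_sub, map_one, sigma_aa]
  rw [hs, sub_mul, one_mul, ← pow_succ, Nat.sub_add_cancel Nat.one_le_two_pow, aa_pow_half, aa_eq]
  linear_combination (-(tt F n)) * (two_zero (F := F) (n := n))

lemma aa_inv_geom : (aa F n)^(2^n - 1) = ∑ k ∈ Finset.range (2^n), (tt F n)^k := by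
  haveI : CharP (GA F n) 2 := charA
  have hg := geom_sum_mul (tt F n) (2^n)
  rw [tt_pow_card] at hg
  have h1 : (∑ k ∈ Finset.range (2^n), (tt F n)^k) * aa F n = 1 := by
    rw [aa_eq]
    calc (∑ k ∈ Finset.range (2^n), (tt F n)^k) * (tt F n + 1)
        = (∑ k ∈ Finset.range (2^n), (tt F n)^k) * (tt F n - 1)
          + (∑ k ∈ Finset.range (2^n), (tt F n)^k) * 2 := by ring
      _ = 1 := by
          rw [hg, two_zero (F := F) (n := n), mul_zero, add_zero]
          linear_combination (-(1 : GA F n)) * two_zero (F := F) (n := n)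
  calc (aa F n)^(2^n - 1)
      = (aa F n)^(2^n - 1) * ((∑ k ∈ Finset.range (2^n), (tt F n)^k) * aa F n) := by
        rw [h1, mul_one]
    _ = ((aa F n)^(2^n - 1) * aa F n) * ∑ k ∈ Finset.range (2^n), (tt F n)^k := by
        ring
    _ = (aa F n)^(2^n) * ∑ k ∈ Finset.range (2^n), (tt F n)^k := by
        rw [← pow_succ, Nat.sub_add_cancel Nat.one_le_two_pow]
    _ = ∑ k ∈ Finset.range (2^n), (tt F n)^k := by rw [aa_pow_card, one_mul]

variable (F n) in
noncomputable def ee : GA F n := (1 + (tt F n)^(2^(n-1) - 1)) * (aa F n)^(2^n - 1)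

lemma sigma_tt_eq (hn : 2 < n) : sigma F n (cc n) (tt F n) = tt F n * ee F n := by
  have hm1 : tt F n * (tt F n)^(2^(n-1)-1) = (tt F n)^(2^(n-1)) := by
    rw [← pow_succ']
    congr 1
    have : (1:ℕ) ≤ 2^(n-1) := Nat.one_le_two_pow
    omega
  calc sigma F n (cc n) (tt F n)
      = sigma F n (cc n) (tt F n) * (aa F n * (aa F n)^(2^n - 1)) := by
        rw [← pow_succ', Nat.sub_add_cancel Nat.one_le_two_pow, aa_pow_card, mul_one]
    _ = (tt F n + (tt F n)^(2^(n-1))) * (aa F n)^(2^n - 1) := by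
        rw [← mul_assoc, sta hn]
    _ = tt F n * ee F n := by
        rw [ee, ← hm1]; ring

lemma ee_form (hn : 2 < n) : ∃ r, ee F n = 1 + tt F n + (tt F n)^2 * r := by
  obtain ⟨M, hM⟩ : ∃ M, 2^n = 2 + M := by
    refine ⟨2^n - 2, ?_⟩
    have : (4:ℕ) ≤ 2^n := by calc (4:ℕ) = 2^2 := by norm_num
                                  _ ≤ 2^n := Nat.pow_le_pow_right (by norm_num) (by omega)
    omega
  obtain ⟨K, hK⟩ : ∃ K, 2^(n-1) - 1 = 2 + K := by
    refine ⟨2^(n-1) - 3, ?_⟩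
    have : (4:ℕ) ≤ 2^(n-1) := by calc (4:ℕ) = 2^2 := by norm_num
                                    _ ≤ 2^(n-1) := Nat.pow_le_pow_right (by norm_num) (by omega)
    omega
  have hsum : ∑ k ∈ Finset.range (2^n), (tt F n)^k
      = 1 + tt F n + (tt F n)^2 * ∑ k ∈ Finset.range M, (tt F n)^k := by
    have hR : Finset.range (2^n) = Finset.range (2 + M) := by rw [hM]
    rw [hR, Finset.sum_range_add]
    have h2 : ∑ x ∈ Finset.range 2, (tt F n)^x = 1 + tt F n := by
      rw [Finset.sum_range_succ, Finset.sum_range_one, pow_zero, pow_one]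
    rw [h2, Finset.mul_sum]
    congr 1
    refine Finset.sum_congr rfl fun k _ => ?_
    rw [← pow_add]
  have hpow : (tt F n)^(2^(n-1) - 1) = (tt F n)^2 * (tt F n)^K := by
    rw [← pow_add, ← hK]
  refine ⟨(∑ k ∈ Finset.range M, (tt F n)^k)
      + (1 + tt F n + (tt F n)^2 * ∑ k ∈ Finset.range M, (tt F n)^k) * (tt F n)^K, ?_⟩
  rw [ee, aa_inv_geom, hsum, hpow]
  ring

lemma aug_ee (hn : 2 < n) : aug F n (ee F n) = 1 := by
  have h1 : 2^(n-1) - 1 ≠ 0 := by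
    have : (2:ℕ) ≤ 2^(n-1) := by
      calc (2:ℕ) = 2^1 := by norm_num
        _ ≤ 2^(n-1) := Nat.pow_le_pow_right (by norm_num) (by omega)
    omega
  rw [ee, map_mul, map_add, map_one, map_pow, map_pow, aug_tt, aug_aa, one_pow,
    zero_pow h1, add_zero, one_mul]

lemma odd_cast {j : ℕ} (hj : Odd j) : ((j : GA F n)) = 1 := by
  obtain ⟨k, hk⟩ := hj
  subst hk
  push_cast
  linear_combination (k : GA F n) * two_zero (F := F) (n := n)

lemma ee_pow_form (hn : 2 < n) {j : ℕ} (hj : Odd j) :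
    ∃ r, (ee F n)^j = 1 + tt F n + (tt F n)^2 * r := by
  obtain ⟨r0, h0⟩ := ee_form (F := F) (n := n) hn
  obtain ⟨c, hc⟩ := bin (tt F n + (tt F n)^2 * r0) j
  refine ⟨r0 + (1 + tt F n * r0)^2 * c, ?_⟩
  have hy : ee F n = 1 + (tt F n + (tt F n)^2 * r0) := by rw [h0]; ring
  rw [hy, hc, odd_cast (F := F) (n := n) hj]
  ring

lemma sigma_tt_pow_odd (hn : 2 < n) {j : ℕ} (hj : Odd j) :
    ∃ r, (sigma F n (cc n) (tt F n))^j
      = (tt F n)^j + (tt F n)^(j+1) + (tt F n)^(j+2) * r := by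
  obtain ⟨r, hr⟩ := ee_pow_form (F := F) (n := n) hn hj
  refine ⟨r, ?_⟩
  rw [sigma_tt_eq hn, mul_pow, hr]
  ring

lemma sigma_tt_top (hn : 2 < n) :
    (sigma F n (cc n) (tt F n))^(2^n - 1) = (tt F n)^(2^n - 1) := by
  rw [sigma_tt_eq hn, mul_pow, tt_top_mul, map_pow, aug_ee hn, one_pow, one_smul]

lemma unit_inv_sub_one (w : (GA F n)ˣ) : (↑w⁻¹ : GA F n) - 1 = (1 - ↑w) * ↑w⁻¹ := by
  linear_combination (Units.mul_inv w)


-- ### units and homomorphisms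

variable (F n) in
noncomputable def fhat : (GA F n)ˣ →* (GA F n)ˣ :=
  (Units.map (sigma F n (cc n)).toMonoidHom) * MonoidHom.id _

lemma fhat_val (u : (GA F n)ˣ) :
    ((fhat F n u : (GA F n)ˣ) : GA F n) = sigma F n (cc n) ↑u * ↑u := rfl

lemma mem_V_iff {u : (GA F n)ˣ} : u ∈ V F n ↔ aug F n (u : GA F n) = 1 := by
  rw [V, MonoidHom.mem_ker, Units.ext_iff]
  constructor
  · intro h; exact h
  · intro h; exact h

noncomputable def mkV (x : GA F n) (h : aug F n x = 1) : ↥(V F n) :=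
  ⟨(isUnit_of_aug_eq_one h).unit, by
    rw [mem_V_iff, IsUnit.unit_spec]; exact h⟩

@[simp] lemma mkV_val (x : GA F n) (h : aug F n x = 1) :
    ((mkV x h : ↥(V F n)) : (GA F n)ˣ) = (isUnit_of_aug_eq_one h).unit := rfl

@[simp] lemma mkV_val' (x : GA F n) (h : aug F n x = 1) :
    (((mkV x h : ↥(V F n)) : (GA F n)ˣ) : GA F n) = x := IsUnit.unit_spec _

variable (F n) in
noncomputable def fV : ↥(V F n) →* (GA F n)ˣ := (fhat F n).comp (V F n).subtype

lemma fV_val (u : ↥(V F n)) :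
    ((fV F n u : (GA F n)ˣ) : GA F n)
      = sigma F n (cc n) ((u : (GA F n)ˣ) : GA F n) * ((u : (GA F n)ˣ) : GA F n) := rfl

-- algebraMap shorthand lemmas
lemma CC_def (α : F) : algebraMap F (GA F n) α = single 0 α := rfl

lemma sigma_CC (α : F) :
    sigma F n (cc n) (algebraMap F (GA F n) α) = algebraMap F (GA F n) α := by
  rw [CC_def, sigma_single, mul_zero]

-- the gU construction
variable (F n) in
noncomputable def gU (w : (GA F n)ˣ) : (GA F n)ˣ :=
  (Units.map (sigma F n (cc n)).toMonoidHom w) * w⁻¹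

lemma gU_val (w : (GA F n)ˣ) :
    ((gU F n w : (GA F n)ˣ) : GA F n) = sigma F n (cc n) ↑w * ↑w⁻¹ := rfl

lemma gU_mem_V (w : (GA F n)ˣ) : gU F n w ∈ V F n := by
  rw [mem_V_iff, gU_val, map_mul, aug_sigma, ← map_mul, Units.mul_inv, map_one]

lemma fhat_gU (hn : 2 < n) (w : (GA F n)ˣ) : fhat F n (gU F n w) = 1 := by
  apply Units.ext
  rw [fhat_val, gU_val, map_mul, sigma_sigma (cc_mul_cc hn)]
  have h1 : (↑w : GA F n) * (sigma F n (cc n) ↑w⁻¹) * (sigma F n (cc n) ↑w * ↑w⁻¹)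
      = ((↑w : GA F n) * ↑w⁻¹) * sigma F n (cc n) (↑w⁻¹ * ↑w) := by
    rw [map_mul]; ring
  rw [h1, Units.mul_inv, Units.inv_mul, map_one, one_mul]
  rfl

-- the elements 1 + C α * tt^j
lemma aug_one_add {j : ℕ} (hj : j ≠ 0) (α : F) :
    aug F n (1 + algebraMap F (GA F n) α * (tt F n)^j) = 1 := by
  rw [map_add, map_one, map_mul, aug_algebraMap, map_pow, aug_tt, zero_pow hj, mul_zero, add_zero]

variable (F n) in
noncomputable def wV (j : ℕ) (hj : j ≠ 0) (α : F) : ↥(V F n) :=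
  mkV (1 + algebraMap F (GA F n) α * (tt F n)^j) (aug_one_add hj α)

-- kernel factors: gU of wV, as elements of V
variable (F n) in
noncomputable def kerF (j : ℕ) (hj : j ≠ 0) (α : F) : ↥(V F n) :=
  ⟨gU F n ↑(wV F n j hj α), gU_mem_V _⟩

lemma kerF_in_ker (hn : 2 < n) (j : ℕ) (hj : j ≠ 0) (α : F) :
    fV F n (kerF F n j hj α) = 1 := fhat_gU hn _

-- the value form of the kernel factors
lemma kerF_form (hn : 2 < n) (i : ℕ) (α : F) :
    ∃ z, (((kerF F n (2*i+1) (by omega) α : ↥(V F n)) : (GA F n)ˣ) : GA F n)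
      = 1 + algebraMap F (GA F n) α * (tt F n)^(2*i+2) + (tt F n)^(2*i+3) * z := by
  set C := algebraMap F (GA F n)
  set t := tt F n
  obtain ⟨r, hr⟩ := sigma_tt_pow_odd (F := F) (n := n) hn (j := 2*i+1) ⟨i, by ring⟩
  set w : (GA F n)ˣ := ↑(wV F n (2*i+1) (by omega) α)
  have hW : (↑w : GA F n) = 1 + C α * t^(2*i+1) := mkV_val' _ _
  have hWiv : (1 + C α * t^(2*i+1)) * ↑w⁻¹ = 1 := by rw [← hW, Units.mul_inv]
  have hiv : (↑w⁻¹ : GA F n) = 1 - (C α * t^(2*i+1)) * ↑w⁻¹ := by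
    have h := unit_inv_sub_one w
    rw [hW] at h
    linear_combination h
  have hσW : sigma F n (cc n) ↑w
      = 1 + C α * t^(2*i+1) + C α * (t^(2*i+2) + t^(2*i+3) * r) := by
    rw [hW, map_add, map_one, map_mul, sigma_CC, map_pow, hr]
    ring
  refine ⟨C α * r - C α * C α * ↑w⁻¹ * (t^(2*i) + t^(2*i+1) * r), ?_⟩
  have hval : (((kerF F n (2*i+1) (by omega) α : ↥(V F n)) : (GA F n)ˣ) : GA F n)
      = sigma F n (cc n) ↑w * ↑w⁻¹ := rfl
  rw [hval, hσW]
  linear_combination hWiv + (C α * (t^(2*i+2) + t^(2*i+3) * r)) * hiv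

-- image middle factors value form
lemma fIm_form (hn : 2 < n) (i : ℕ) (α : F) :
    ∃ z, ((fV F n (wV F n (2*i+3) (by omega) α) : (GA F n)ˣ) : GA F n)
      = 1 + algebraMap F (GA F n) α * (tt F n)^(2*i+4) + (tt F n)^(2*i+5) * z := by
  set C := algebraMap F (GA F n)
  set t := tt F n
  obtain ⟨r, hr⟩ := sigma_tt_pow_odd (F := F) (n := n) hn (j := 2*i+3) ⟨i+1, by ring⟩
  set w : ↥(V F n) := wV F n (2*i+3) (by omega) α with hww
  have hW : ((w : (GA F n)ˣ) : GA F n) = 1 + C α * t^(2*i+3) := mkV_val' _ _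
  have hσW : sigma F n (cc n) ((w : (GA F n)ˣ) : GA F n)
      = 1 + C α * t^(2*i+3) + C α * (t^(2*i+4) + t^(2*i+5) * r) := by
    rw [hW, map_add, map_one, map_mul, sigma_CC, map_pow, hr]
    ring
  refine ⟨C α * r + C α * C α * (t^(2*i+1) + t^(2*i+2) + t^(2*i+3) * r), ?_⟩
  rw [fV_val, hσW, hW]
  linear_combination (C α * t^(2*i+3)) * two_zero (F := F) (n := n)

-- image first factor value form
lemma fIm_first_form (hn : 2 < n) (γ : F) :
    ∃ z, ((fV F n (wV F n 1 (by omega) γ) : (GA F n)ˣ) : GA F n)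
      = 1 + algebraMap F (GA F n) (γ*γ + γ) * (tt F n)^2 + (tt F n)^3 * z := by
  set C := algebraMap F (GA F n)
  set t := tt F n
  obtain ⟨r, hr⟩ := sigma_tt_pow_odd (F := F) (n := n) hn (j := 1) ⟨0, by ring⟩
  set w : ↥(V F n) := wV F n 1 (by omega) γ with hww
  have hW : ((w : (GA F n)ˣ) : GA F n) = 1 + C γ * t^1 := mkV_val' _ _
  have hσW : sigma F n (cc n) ((w : (GA F n)ˣ) : GA F n)
      = 1 + C γ * t^1 + C γ * (t^2 + t^3 * r) := by
    rw [hW, map_add, map_one, map_mul, sigma_CC, map_pow, hr]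
    ring
  refine ⟨C γ * r + C γ * C γ * (1 + t * r), ?_⟩
  rw [fV_val, hσW, hW]
  have hCmul : C (γ*γ + γ) = C γ * C γ + C γ := by rw [map_add, map_mul]
  rw [hCmul]
  linear_combination (C γ * t) * two_zero (F := F) (n := n)


-- ### top factors

lemma tt_pow_ge {k : ℕ} (hk : 2^n ≤ k) : (tt F n)^k = 0 := by
  calc (tt F n)^k = (tt F n)^(2^n) * (tt F n)^(k - 2^n) := by
        rw [← pow_add]; congr 1; omega
    _ = 0 := by rw [tt_pow_card, zero_mul]

lemma top_sq' (β : F) (hn : 2 < n) :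
    (1 + algebraMap F (GA F n) β * (tt F n)^(2^n - 1))
      * (1 + algebraMap F (GA F n) β * (tt F n)^(2^n - 1)) = 1 := by
  have h2 : (2:ℕ) ≤ 2^n := by
    calc (2:ℕ) = 2^1 := by norm_num
      _ ≤ 2^n := Nat.pow_le_pow_right (by norm_num) (by omega)
  have hb : (tt F n)^(2^n - 1) * (tt F n)^(2^n - 1) = 0 := by
    rw [← pow_add]; exact tt_pow_ge (by omega)
  linear_combination (algebraMap F (GA F n) β * (tt F n)^(2^n - 1)) * two_zero (F := F) (n := n)
    + (algebraMap F (GA F n) β * algebraMap F (GA F n) β) * hb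

lemma top_pow_ne (hn : 2 < n) : 2^n - 1 ≠ 0 := by
  have h2 : (2:ℕ) ≤ 2^n := by
    calc (2:ℕ) = 2^1 := by norm_num
      _ ≤ 2^n := Nat.pow_le_pow_right (by norm_num) (by omega)
  omega

lemma top_in_ker (hn : 2 < n) (β : F) :
    fV F n (wV F n (2^n - 1) (top_pow_ne hn) β) = 1 := by
  apply Units.ext
  rw [fV_val]
  have hW : ((↑(wV F n (2^n - 1) (top_pow_ne hn) β) : (GA F n)ˣ) : GA F n)
      = 1 + algebraMap F (GA F n) β * (tt F n)^(2^n - 1) := mkV_val' _ _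
  have hσ : sigma F n (cc n) (1 + algebraMap F (GA F n) β * (tt F n)^(2^n - 1))
      = 1 + algebraMap F (GA F n) β * (tt F n)^(2^n - 1) := by
    rw [map_add, map_one, map_mul, sigma_CC, map_pow, sigma_tt_top hn]
  rw [hW, hσ, top_sq' β hn]
  rfl

-- ### the image top element : f(a(1 + t^(m-1))) = 1 + t^(2m-1)

lemma m_sub_one_ne (hn : 2 < n) : 2^(n-1) - 1 ≠ 0 := by
  have : (2:ℕ) ≤ 2^(n-1) := by
    calc (2:ℕ) = 2^1 := by norm_num
      _ ≤ 2^(n-1) := Nat.pow_le_pow_right (by norm_num) (by omega)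
  omega

lemma aug_vv (hn : 2 < n) : aug F n (aa F n * (1 + (tt F n)^(2^(n-1) - 1))) = 1 := by
  rw [map_mul, aug_aa, one_mul, map_add, map_one, map_pow, aug_tt,
    zero_pow (m_sub_one_ne hn), add_zero]

variable (F n) in
noncomputable def vV (hn : 2 < n) : ↥(V F n) :=
  mkV (aa F n * (1 + (tt F n)^(2^(n-1) - 1))) (aug_vv hn)

lemma fIm_last_form (hn : 2 < n) :
    ((fV F n (vV F n hn) : (GA F n)ˣ) : GA F n) = 1 + (tt F n)^(2^n - 1) := by
  haveI : CharP (GA F n) 2 := charA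
  haveI : Fact (Nat.Prime 2) := ⟨Nat.prime_two⟩
  obtain ⟨k, hk, hk3⟩ : ∃ k, 2^(n-1) = k + 1 ∧ 3 ≤ k := by
    refine ⟨2^(n-1) - 1, ?_, ?_⟩ <;>
    · have : (4:ℕ) ≤ 2^(n-1) := by
        calc (4:ℕ) = 2^2 := by norm_num
          _ ≤ 2^(n-1) := Nat.pow_le_pow_right (by norm_num) (by omega)
      omega
  have h2n : 2^n = 2*k + 2 := by
    have : 2^n = 2 * 2^(n-1) := by
      rw [← pow_succ']; congr 1; omega
    omega
  set t := tt F n with ht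
  set b := (aa F n)^k with hbdef
  -- zero powers
  have hz3k : t^(3*k) = 0 := tt_pow_ge (by omega)
  have hz3k1 : t^(3*k+1) = 0 := tt_pow_ge (by omega)
  have hz4k1 : t^(4*k+1) = 0 := tt_pow_ge (by omega)
  -- (1+t^k)^(k+1) = 1
  have hP : (1 + t^k)^(k+1) = 1 := by
    have h1 : (1 + t^k)^(2^(n-1)) = 1 + (t^k)^(2^(n-1)) := by
      rw [add_pow_char_pow, one_pow]
    rw [hk] at h1
    have h2 : (t^k)^(k+1) = 0 := by
      rw [← pow_mul]; exact tt_pow_ge (by nlinarith)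
    rw [h2, add_zero] at h1
    exact h1
  -- (1+t^k)^k = 1 + t^k + t^(2k)
  have hQ : (1 + t^k)^k = 1 + t^k + t^(2*k) := by
    have hinv : (1 + t^k) * (1 + t^k + t^(2*k)) = 1 := by
      linear_combination hz3k + (t^k + t^(2*k)) * two_zero (F := F) (n := n)
    calc (1+t^k)^k = (1+t^k)^k * ((1+t^k)*(1+t^k+t^(2*k))) := by rw [hinv, mul_one]
      _ = (1+t^k)^(k+1) * (1+t^k+t^(2*k)) := by ring
      _ = 1 + t^k + t^(2*k) := by rw [hP, one_mul]
  -- sigma a = b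
  have hsa : sigma F n (cc n) (aa F n) = b := by
    rw [sigma_aa, hbdef]
    congr 1
    omega
  -- hc1 : sigma a * a = 1 + t^(k+1)
  have hc1 : sigma F n (cc n) (aa F n) * aa F n = 1 + t^(k+1) := by
    rw [sigma_aa, ← pow_succ]
    have he : 2^(n-1) - 1 + 1 = 2^(n-1) := by omega
    rw [he, aa_pow_half, hk]
  -- hc2 : (sigma t)^k * b = t^k + t^(2k)
  have hc2 : (sigma F n (cc n) t)^k * b = t^k + t^(2*k) := by
    have hsta : sigma F n (cc n) t * aa F n = t + t^(k+1) := by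
      rw [ht, sta hn, hk]
    calc (sigma F n (cc n) t)^k * b = (sigma F n (cc n) t * aa F n)^k := by
          rw [mul_pow, hbdef]
      _ = (t * (1 + t^k))^k := by rw [hsta]; ring_nf
      _ = t^k * (1 + t^k + t^(2*k)) := by rw [mul_pow, hQ]
      _ = t^k + t^(2*k) := by linear_combination hz3k
  -- hba and H1
  have hba : b * aa F n = 1 + t^(k+1) := by rw [← hsa]; exact hc1
  have H1 : b * t^k + b * t^(k+1) = t^k + t^(2*k+1) := by
    linear_combination t^k * hba - (t^k * b) * (aa_eq (F := F) (n := n))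
  -- the core polynomial identity
  have e1 : (1 + t^(k+1)) * (1 + t^k) * (b + t^k + t^(2*k)) = (1 + t^(2*k+1)) * b := by
    linear_combination H1 + hz3k + hz4k1
      + (t^k + t^(2*k) + t^(2*k+1) + t^(3*k+1)) * two_zero (F := F) (n := n)
  -- value of f on vV
  have hvval : ((↑(vV F n hn) : (GA F n)ˣ) : GA F n) = aa F n * (1 + t^k) := by
    rw [vV, mkV_val']
    congr 3
    omega
  have hval : ((fV F n (vV F n hn) : (GA F n)ˣ) : GA F n)
      = (b * (1 + (sigma F n (cc n) t)^k)) * (aa F n * (1 + t^k)) := by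
    rw [fV_val, hvval, map_mul, map_add, map_one, map_pow, hsa]
  have hvb : ((fV F n (vV F n hn) : (GA F n)ˣ) : GA F n) * b = (1 + t^(2*k+1)) * b := by
    rw [hval, ← e1]
    linear_combination ((1 + (sigma F n (cc n) t)^k) * (1 + t^k) * b) * hba
      + ((1 + t^(k+1)) * (1 + t^k)) * hc2
  have hcan : IsUnit b := (isUnit_aa (F := F) (n := n)).pow k
  have := hcan.mul_right_cancel hvb
  rw [this]
  congr 2
  omega


-- ### triangular injectivity

lemma param_cancel' {d : ℕ} (hd : d < 2^n) {x : F}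
    (h : (tt F n)^(d+1) ∣ algebraMap F (GA F n) x * (tt F n)^d) : x = 0 :=
  param_cancel hd (by rwa [← Algebra.smul_def] at h)

lemma shift_form {e dd : ℕ} (he : e ≤ dd) (x z : GA F n) :
    ∃ z', x * (tt F n)^dd + (tt F n)^(dd+1) * z = (tt F n)^e * z' := by
  refine ⟨(tt F n)^(dd - e) * (x + tt F n * z), ?_⟩
  have h1 : (tt F n)^e * (tt F n)^(dd - e) = (tt F n)^dd := by
    rw [← pow_add]; congr 1; omega
  calc x * (tt F n)^dd + (tt F n)^(dd+1) * z
      = ((tt F n)^e * (tt F n)^(dd - e)) * (x + tt F n * z) := by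
        rw [h1]; ring
    _ = (tt F n)^e * ((tt F n)^(dd - e) * (x + tt F n * z)) := by ring

lemma prod_one_add {ι : Type} (s : Finset ι) (f : ι → GA F n) (e : ℕ)
    (h : ∀ i ∈ s, ∃ z, f i = 1 + (tt F n)^e * z) :
    ∃ z, ∏ i ∈ s, f i = 1 + (tt F n)^e * z := by
  classical
  induction s using Finset.cons_induction with
  | empty => exact ⟨0, by simp⟩
  | cons a s ha ih =>
    obtain ⟨z1, hz1⟩ := h a (Finset.mem_cons_self a s)
    obtain ⟨z2, hz2⟩ := ih (fun i hi => h i (Finset.mem_cons_of_mem hi))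
    refine ⟨z1 + z2 + (tt F n)^e * (z1 * z2), ?_⟩
    rw [Finset.prod_cons, hz1, hz2]
    ring

lemma prod_inj (hn : 2 < n) {r : ℕ} (S : Fin r → Set F)
    (d : Fin r → ℕ) (hd : StrictMono d) (hdN : ∀ i, d i < 2^n)
    (U : ∀ i, ↥(S i) → GA F n)
    (hU1 : ∀ i x, IsUnit (U i x))
    (hU : ∀ i x, ∃ z, U i x
      = 1 + algebraMap F (GA F n) (x : F) * (tt F n)^(d i) + (tt F n)^(d i + 1) * z) :
    Function.Injective (fun v : (∀ i, ↥(S i)) => ∏ i, U i (v i)) := by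
  induction r with
  | zero =>
    intro v w _
    funext i
    exact Fin.elim0 i
  | succ r ih =>
    intro v w hvw
    simp only [Fin.prod_univ_succ] at hvw
    -- tail forms
    have htail : ∀ (u : ∀ i, ↥(S i)), ∃ z,
        ∏ i : Fin r, U i.succ (u i.succ) = 1 + (tt F n)^(d 0 + 1) * z := by
      intro u
      refine prod_one_add Finset.univ _ _ (fun i _ => ?_)
      obtain ⟨z, hz⟩ := hU i.succ (u i.succ)
      have hle : d 0 + 1 ≤ d i.succ := by
        have : d 0 < d i.succ := hd (by
          simp [Fin.lt_def])
        omega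
      obtain ⟨z', hz'⟩ := shift_form (F := F) (n := n) hle
        (algebraMap F (GA F n) ((u i.succ : F))) z
      exact ⟨z', by rw [hz, add_assoc, hz']⟩
    obtain ⟨z0v, h0v⟩ := hU 0 (v 0)
    obtain ⟨z0w, h0w⟩ := hU 0 (w 0)
    obtain ⟨ztv, htv⟩ := htail v
    obtain ⟨ztw, htw⟩ := htail w
    -- head coefficients agree
    have hv0 : v 0 = w 0 := by
      have hdvd : (tt F n)^(d 0 + 1) ∣
          algebraMap F (GA F n) ((v 0 : F) - (w 0 : F)) * (tt F n)^(d 0) := by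
        refine ⟨ztw + z0w + (algebraMap F (GA F n) ((w 0 : F)) * (tt F n)^(d 0)
            + (tt F n)^(d 0 + 1) * z0w) * ztw
            - (ztv + z0v + (algebraMap F (GA F n) ((v 0 : F)) * (tt F n)^(d 0)
            + (tt F n)^(d 0 + 1) * z0v) * ztv), ?_⟩
        have expand : ∀ (x : F) (z0 zt : GA F n),
            (1 + algebraMap F (GA F n) x * (tt F n)^(d 0) + (tt F n)^(d 0 + 1) * z0)
              * (1 + (tt F n)^(d 0 + 1) * zt)
            = 1 + algebraMap F (GA F n) x * (tt F n)^(d 0)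
              + (tt F n)^(d 0 + 1) * (zt + z0 + (algebraMap F (GA F n) x * (tt F n)^(d 0)
                + (tt F n)^(d 0 + 1) * z0) * zt) := by
          intro x z0 zt; ring
        have heq := hvw
        rw [h0v, htv, h0w, htw, expand, expand] at heq
        rw [map_sub]
        linear_combination heq
      have := param_cancel' (hdN 0) hdvd
      have hsub : (v 0 : F) = (w 0 : F) := by
        have := sub_eq_zero.mp (by rwa [] at this)
        exact this
      exact Subtype.ext hsub
    -- cancel the head
    have htails : ∏ i : Fin r, U i.succ (v i.succ) = ∏ i : Fin r, U i.succ (w i.succ) := by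
      rw [hv0] at hvw
      exact (hU1 0 (w 0)).mul_left_cancel hvw
    have := ih (fun i => S i.succ) (fun i => d i.succ)
      (fun i j hij => hd (by simpa using hij))
      (fun i => hdN i.succ) (fun i => U i.succ) (fun i x => hU1 i.succ x)
      (fun i x => hU i.succ x) htails
    funext i
    induction i using Fin.cases with
    | zero => exact hv0
    | succ i => exact congrFun this i


-- ### cardinality of V

instance : Finite (GA F n) := Finite.of_equiv _ (AddMonoidAlgebra.coeffEquiv.trans (Finsupp.equivFunOnFinite (α := ZMod (2^n)) (M := F))).symm

lemma card_GA : Nat.card (GA F n) = Nat.card F ^ (2^n) := by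
  have e : GA F n ≃ (ZMod (2^n) → F) := AddMonoidAlgebra.coeffEquiv.trans Finsupp.equivFunOnFinite
  rw [Nat.card_congr e, Nat.card_fun]
  congr 1
  rw [Nat.card_eq_fintype_card, ZMod.card]

lemma card_aug_ker : Nat.card ↥((aug F n).toAddMonoidHom.ker) = Nat.card F ^ (2^n - 1) := by
  have hsurj : Function.Surjective (aug F n).toAddMonoidHom := by
    intro r
    exact ⟨single 0 r, aug_single _ _⟩
  have h1 := AddSubgroup.card_eq_card_quotient_mul_card_addSubgroup
    ((aug F n).toAddMonoidHom.ker)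
  have h2 : Nat.card (GA F n ⧸ (aug F n).toAddMonoidHom.ker) = Nat.card F := by
    rw [Nat.card_congr (QuotientAddGroup.quotientKerEquivRange (aug F n).toAddMonoidHom).toEquiv]
    rw [AddMonoidHom.range_eq_top.mpr hsurj]
    exact Nat.card_congr AddSubgroup.topEquiv.toEquiv
  rw [card_GA, h2] at h1
  have hq : 0 < Nat.card F := Nat.card_pos
  have hexp : Nat.card F ^ (2^n) = Nat.card F * Nat.card F ^ (2^n - 1) := by
    rw [← pow_succ']
    congr 1
    have := Nat.one_le_two_pow (n := n)
    omega
  rw [hexp] at h1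
  exact (Nat.eq_of_mul_eq_mul_left hq h1.symm)

lemma card_V : Nat.card ↥(V F n) = Nat.card F ^ (2^n - 1) := by
  have e1 : ↥(V F n) ≃ {x : GA F n // aug F n x = 1} :=
    { toFun := fun u => ⟨((u : (GA F n)ˣ) : GA F n), mem_V_iff.mp u.2⟩
      invFun := fun x => mkV x.1 x.2
      left_inv := by
        intro u
        apply Subtype.ext
        apply Units.ext
        exact mkV_val' _ (mem_V_iff.mp u.2)
      right_inv := by
        intro x
        apply Subtype.ext
        exact mkV_val' x.1 x.2 }
  have e2 : {x : GA F n // aug F n x = 1} ≃ {x : GA F n // aug F n x = 0} := by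
    refine ⟨fun x => ⟨x.1 - 1, by rw [map_sub, x.2, map_one, sub_self]⟩,
      fun x => ⟨x.1 + 1, by rw [map_add, x.2, map_one, zero_add]⟩, ?_, ?_⟩
    · intro x; apply Subtype.ext; simp
    · intro x; apply Subtype.ext; simp
  have e3 : {x : GA F n // aug F n x = 0} ≃ ↥((aug F n).toAddMonoidHom.ker) :=
    Equiv.subtypeEquivRight (fun x => by
      constructor
      · intro h; exact AddMonoidHom.mem_ker.mpr h
      · intro h; exact AddMonoidHom.mem_ker.mp h)
  rw [Nat.card_congr ((e1.trans e2).trans e3), card_aug_ker]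

-- ### the Artin-Schreier map
variable (F) in
noncomputable def pAdd : F →+ F where
  toFun γ := γ*γ + γ
  map_zero' := by ring
  map_add' a b := by
    have h2 : (2:F) = 0 := CharTwo.two_eq_zero
    linear_combination (a*b) * h2

lemma two_mul_card_pAdd_range : 2 * Nat.card ↥((pAdd F).range) = Nat.card F := by
  have h1 := AddSubgroup.card_eq_card_quotient_mul_card_addSubgroup ((pAdd F).ker)
  have h2 : Nat.card (F ⧸ (pAdd F).ker) = Nat.card ↥((pAdd F).range) :=
    Nat.card_congr (QuotientAddGroup.quotientKerEquivRange (pAdd F)).toEquiv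
  have h3 : ((pAdd F).ker : Set F) = {0, 1} := by
    ext γ
    simp only [SetLike.mem_coe, AddMonoidHom.mem_ker, Set.mem_insert_iff,
      Set.mem_singleton_iff]
    have h2 : (2:F) = 0 := CharTwo.two_eq_zero
    constructor
    · intro h
      have h' : γ*γ + γ = 0 := h
      have hγ : γ * (γ + 1) = 0 := by linear_combination h'
      rcases mul_eq_zero.mp hγ with h'' | h''
      · exact Or.inl h''
      · exact Or.inr (by linear_combination h'' - h2)
    · intro h
      rcases h with h | h <;> subst h
      · show (0:F)*0 + 0 = 0; ring
      · show (1:F)*1 + 1 = 0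
        linear_combination h2
  have h4 : Nat.card ↥((pAdd F).ker) = 2 := by
    have : Nat.card ↥((pAdd F).ker : Set F) = 2 := by
      rw [h3, Nat.card_coe_set_eq, Set.ncard_pair (zero_ne_one)]
    exact this
  rw [h2, h4] at h1
  omega


-- ### the two counting injections

variable (F n) in
noncomputable def valV : ↥(V F n) →* GA F n := (Units.coeHom (GA F n)).comp (V F n).subtype

lemma valV_apply (u : ↥(V F n)) : valV F n u = ((u : (GA F n)ˣ) : GA F n) := rfl

lemma m_facts (hn : 2 < n) : 2^n = 2 * 2^(n-1) ∧ 4 ≤ 2^(n-1) := by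
  constructor
  · rw [← pow_succ']; congr 1; omega
  · calc (4:ℕ) = 2^2 := by norm_num
      _ ≤ 2^(n-1) := Nat.pow_le_pow_right (by norm_num) (by omega)

lemma ker_ge (hn : 2 < n) :
    Nat.card F ^ (2^(n-1)) ≤ Nat.card ↥((fV F n).ker) := by
  obtain ⟨h2n, hm4⟩ := m_facts (n := n) hn
  set m := 2^(n-1) with hm
  -- the factors
  have hWdef : ∀ (i : Fin m) (α : F), ∃ w : ↥(V F n),
      (((i:ℕ) < m - 1 → w = kerF F n (2*(i:ℕ)+1) (by omega) α)
        ∧ (¬((i:ℕ) < m - 1) → w = wV F n (2^n - 1) (top_pow_ne hn) α)) := by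
    intro i α
    by_cases h : (i:ℕ) < m - 1
    · exact ⟨kerF F n (2*(i:ℕ)+1) (by omega) α, fun _ => rfl, fun h' => absurd h h'⟩
    · exact ⟨wV F n (2^n - 1) (top_pow_ne hn) α, fun h' => absurd h' h, fun _ => rfl⟩
  choose W hW1 hW2 using hWdef
  have hWker : ∀ i α, fV F n (W i α) = 1 := by
    intro i α
    by_cases h : (i:ℕ) < m - 1
    · rw [hW1 i α h]; exact kerF_in_ker hn _ _ α
    · rw [hW2 i α h]; exact top_in_ker hn α
  set d : Fin m → ℕ := fun i => if (i:ℕ) < m - 1 then 2*(i:ℕ)+2 else 2^n - 1 with hd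
  have hdmono : StrictMono d := by
    intro i j hij
    have hij' : (i:ℕ) < (j:ℕ) := hij
    have hi2 := i.isLt
    have hj2 := j.isLt
    rw [hd]
    dsimp only
    split_ifs <;> omega
  have hdN : ∀ i, d i < 2^n := by
    intro i
    have hi2 := i.isLt
    rw [hd]
    dsimp only
    split_ifs <;> omega
  set U : ∀ i : Fin m, ↥((Set.univ : Set F)) → GA F n :=
    fun i x => valV F n (W i (x : F)) with hU
  have hU1 : ∀ i x, IsUnit (U i x) := fun i x => Units.isUnit _
  have hUform : ∀ i x, ∃ z, U i x
      = 1 + algebraMap F (GA F n) (x : F) * (tt F n)^(d i) + (tt F n)^(d i + 1) * z := by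
    intro i x
    by_cases h : (i:ℕ) < m - 1
    · obtain ⟨z, hz⟩ := kerF_form hn (i:ℕ) (x : F)
      refine ⟨z, ?_⟩
      rw [hU]
      dsimp only
      rw [hW1 i _ h, hd]
      dsimp only
      rw [if_pos h]
      exact hz
    · refine ⟨0, ?_⟩
      rw [hU]
      dsimp only
      rw [hW2 i _ h, hd]
      dsimp only
      rw [if_neg h, mul_zero, add_zero]
      exact mkV_val' _ (aug_one_add (top_pow_ne hn) (x : F))
  have key := prod_inj hn (fun _ => (Set.univ : Set F)) d hdmono hdN U hU1 hUform
  -- the injection into the kernel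
  have hmem : ∀ v : (∀ _ : Fin m, ↥((Set.univ : Set F))),
      (∏ i, W i ((v i : F))) ∈ (fV F n).ker := by
    intro v
    rw [MonoidHom.mem_ker, map_prod]
    exact Finset.prod_eq_one (fun i _ => hWker i _)
  set Φ : (∀ _ : Fin m, ↥((Set.univ : Set F))) → ↥((fV F n).ker) :=
    fun v => ⟨∏ i, W i ((v i : F)), hmem v⟩ with hΦ
  have hΦinj : Function.Injective Φ := by
    intro v w h
    have h' : (∏ i, W i ((v i : F))) = ∏ i, W i ((w i : F)) := Subtype.ext_iff.mp h
    apply key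
    dsimp only
    calc ∏ i, valV F n (W i ((v i : F)))
        = valV F n (∏ i, W i ((v i : F))) := (map_prod _ _ _).symm
      _ = valV F n (∏ i, W i ((w i : F))) := by rw [h']
      _ = ∏ i, valV F n (W i ((w i : F))) := map_prod _ _ _
  have hcard := Nat.card_le_card_of_injective Φ hΦinj
  have hdom : Nat.card (∀ _ : Fin m, ↥((Set.univ : Set F))) = Nat.card F ^ m := by
    rw [Nat.card_pi]
    have : ∀ i ∈ (Finset.univ : Finset (Fin m)), Nat.card ↥((Set.univ : Set F)) = Nat.card F :=
      fun i _ => Nat.card_univ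
    rw [Finset.prod_congr rfl this, Finset.prod_const, Finset.card_univ, Fintype.card_fin]
  rwa [hdom] at hcard


-- ### the range injection

variable (F) in
open Classical in
noncomputable def secP (δ : F) : F := if h : ∃ γ : F, pAdd F γ = δ then h.choose else 0

open Classical in
lemma secP_spec {δ : F} (h : ∃ γ : F, pAdd F γ = δ) : pAdd F (secP F δ) = δ := by
  rw [secP, dif_pos h]
  exact h.choose_spec

variable (F n) in
noncomputable def fVval : ↥(V F n) →* GA F n := (Units.coeHom (GA F n)).comp (fV F n)

lemma fIm_first_form' (hn : 2 < n) {δ : F} (h : ∃ γ : F, pAdd F γ = δ) :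
    ∃ z, ((fV F n (wV F n 1 one_ne_zero (secP F δ)) : (GA F n)ˣ) : GA F n)
      = 1 + algebraMap F (GA F n) δ * (tt F n)^2 + (tt F n)^3 * z := by
  obtain ⟨z, hz⟩ := fIm_first_form hn (secP F δ)
  refine ⟨z, ?_⟩
  have hs : secP F δ * secP F δ + secP F δ = δ := secP_spec h
  rw [hz, hs]

lemma fIm_form' (hn : 2 < n) (p j : ℕ) (hp : p = 2*j+3) (hpne : p ≠ 0) (α : F) :
    ∃ z, ((fV F n (wV F n p hpne α) : (GA F n)ˣ) : GA F n)
      = 1 + algebraMap F (GA F n) α * (tt F n)^(p+1) + (tt F n)^(p+2) * z := by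
  subst hp
  exact fIm_form hn j α

lemma prod_fin_ite (M mm : ℕ) (hM : M = mm + 2) (A B C : ℕ) :
    ∏ i : Fin M, (if (i:ℕ) = 0 then A else if (i:ℕ) < M - 1 then B else C)
      = A * B^mm * C := by
  subst hM
  rw [Fin.prod_univ_succ, Fin.prod_univ_castSucc]
  have h0 : (((0 : Fin (mm+2)) : ℕ) = 0) := rfl
  rw [if_pos h0]
  have hmid : ∀ i : Fin mm,
      (if ((i.castSucc.succ : Fin (mm+2)) : ℕ) = 0 then A
        else if ((i.castSucc.succ : Fin (mm+2)) : ℕ) < mm + 2 - 1 then B else C) = B := by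
    intro i
    have h1 : ((i.castSucc.succ : Fin (mm+2)) : ℕ) = (i:ℕ)+1 := by simp
    have := i.isLt
    rw [h1, if_neg (by omega), if_pos (by omega)]
  have hlast : (if (((Fin.last mm).succ : Fin (mm+2)) : ℕ) = 0 then A
      else if (((Fin.last mm).succ : Fin (mm+2)) : ℕ) < mm + 2 - 1 then B else C) = C := by
    have h1 : (((Fin.last mm).succ : Fin (mm+2)) : ℕ) = mm+1 := by
      rw [Fin.val_succ, Fin.val_last]
    rw [h1, if_neg (by omega), if_neg (by omega)]
  rw [Finset.prod_congr rfl (fun i _ => hmid i), hlast, Finset.prod_const, Finset.card_univ,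
    Fintype.card_fin]
  ring

lemma range_ge (hn : 2 < n) :
    Nat.card F ^ (2^(n-1) - 1) ≤ Nat.card ↥((fV F n).range) := by
  obtain ⟨h2n, hm4⟩ := m_facts (n := n) hn
  set m := 2^(n-1) with hm
  set S : Fin m → Set F := fun i =>
    if (i:ℕ) = 0 then ((pAdd F).range : Set F)
    else if (i:ℕ) < m - 1 then Set.univ else ({0, 1} : Set F) with hS
  have hWdef : ∀ (i : Fin m) (γ : F), ∃ w : ↥(V F n),
      ((i:ℕ) = 0 → w = wV F n 1 one_ne_zero (secP F γ))
      ∧ ((i:ℕ) ≠ 0 → (i:ℕ) < m - 1 → w = wV F n (2*(i:ℕ)+1) (by omega) γ)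
      ∧ ((i:ℕ) ≠ 0 → ¬((i:ℕ) < m - 1) → γ = 1 → w = vV F n hn)
      ∧ ((i:ℕ) ≠ 0 → ¬((i:ℕ) < m - 1) → γ ≠ 1 → w = 1) := by
    intro i γ
    by_cases h0 : (i:ℕ) = 0
    · exact ⟨wV F n 1 one_ne_zero (secP F γ), fun _ => rfl, fun h _ => absurd h0 h,
        fun h _ _ => absurd h0 h, fun h _ _ => absurd h0 h⟩
    · by_cases h1 : (i:ℕ) < m - 1
      · exact ⟨wV F n (2*(i:ℕ)+1) (by omega) γ, fun h => absurd h h0, fun _ _ => rfl,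
          fun _ h _ => absurd h1 h, fun _ h _ => absurd h1 h⟩
      · by_cases h2 : γ = 1
        · exact ⟨vV F n hn, fun h => absurd h h0, fun _ h => absurd h h1, fun _ _ _ => rfl,
            fun _ _ h => absurd h2 h⟩
        · exact ⟨1, fun h => absurd h h0, fun _ h => absurd h h1, fun _ _ h => absurd h h2,
            fun _ _ _ => rfl⟩
  choose W hW0 hWmid hWlast1 hWlast0 using hWdef
  set d : Fin m → ℕ := fun i => if (i:ℕ) < m - 1 then 2*(i:ℕ)+2 else 2^n - 1 with hd
  have hdmono : StrictMono d := by
    intro i j hij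
    have hij' : (i:ℕ) < (j:ℕ) := hij
    have hi2 := i.isLt
    have hj2 := j.isLt
    rw [hd]
    dsimp only
    split_ifs <;> omega
  have hdN : ∀ i, d i < 2^n := by
    intro i
    have hi2 := i.isLt
    rw [hd]
    dsimp only
    split_ifs <;> omega
  set U : ∀ i : Fin m, ↥(S i) → GA F n :=
    fun i x => ((fV F n (W i (x : F)) : (GA F n)ˣ) : GA F n) with hU
  have hU1 : ∀ i x, IsUnit (U i x) := fun i x => Units.isUnit _
  have hUform : ∀ i x, ∃ z, U i x
      = 1 + algebraMap F (GA F n) (x : F) * (tt F n)^(d i) + (tt F n)^(d i + 1) * z := by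
    intro i x
    by_cases h0 : (i:ℕ) = 0
    · have hdi : d i = 2 := by
        rw [hd]; dsimp only; rw [if_pos (by omega), h0]
      have hx : ∃ γ : F, pAdd F γ = (x : F) := by
        have hmem : (x : F) ∈ (if (i:ℕ) = 0 then ((pAdd F).range : Set F)
            else if (i:ℕ) < m - 1 then Set.univ else ({0, 1} : Set F)) := x.2
        rw [if_pos h0] at hmem
        exact hmem
      obtain ⟨z, hz⟩ := fIm_first_form' hn hx
      refine ⟨z, ?_⟩
      rw [hU]
      dsimp only
      rw [hW0 i _ h0, hdi]
      exact hz
    · by_cases h1 : (i:ℕ) < m - 1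
      · have hdi : d i = 2*(i:ℕ)+2 := by
          rw [hd]; dsimp only; rw [if_pos h1]
        obtain ⟨z, hz⟩ := fIm_form' hn (2*(i:ℕ)+1) ((i:ℕ)-1) (by omega) (by omega) (x : F)
        refine ⟨z, ?_⟩
        rw [hU]
        dsimp only
        rw [hWmid i _ h0 h1, hdi]
        exact hz
      · have hdi : d i = 2^n - 1 := by
          rw [hd]; dsimp only; rw [if_neg h1]
        have hx01 : (x : F) = 0 ∨ (x : F) = 1 := by
          have hmem : (x : F) ∈ (if (i:ℕ) = 0 then ((pAdd F).range : Set F)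
              else if (i:ℕ) < m - 1 then Set.univ else ({0, 1} : Set F)) := x.2
          rw [if_neg h0, if_neg h1] at hmem
          simpa using hmem
        by_cases hx1 : (x : F) = 1
        · refine ⟨0, ?_⟩
          rw [hU]
          dsimp only
          rw [hWlast1 i _ h0 h1 hx1, hdi, hx1, map_one, one_mul, mul_zero, add_zero]
          exact fIm_last_form hn
        · have hx0 : (x : F) = 0 := by tauto
          refine ⟨0, ?_⟩
          rw [hU]
          dsimp only
          rw [hWlast0 i _ h0 h1 hx1, hdi, hx0, map_zero, zero_mul, add_zero, mul_zero, add_zero]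
          rw [map_one]
          rfl
  have key := prod_inj hn S d hdmono hdN U hU1 hUform
  set Φ : (∀ i : Fin m, ↥(S i)) → ↥((fV F n).range) :=
    fun v => ⟨fV F n (∏ i, W i ((v i : F))), ⟨∏ i, W i ((v i : F)), rfl⟩⟩ with hΦ
  have hΦinj : Function.Injective Φ := by
    intro v w h
    have h' : fV F n (∏ i, W i ((v i : F))) = fV F n (∏ i, W i ((w i : F))) :=
      Subtype.ext_iff.mp h
    apply key
    dsimp only
    calc ∏ i, U i (v i)
        = fVval F n (∏ i, W i ((v i : F))) := (map_prod (fVval F n) _ _).symm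
      _ = fVval F n (∏ i, W i ((w i : F))) := congrArg Units.val h'
      _ = ∏ i, U i (w i) := map_prod (fVval F n) _ _
  have hcard := Nat.card_le_card_of_injective Φ hΦinj
  have hdom : Nat.card (∀ i : Fin m, ↥(S i)) = Nat.card F ^ (m - 1) := by
    rw [Nat.card_pi]
    have hc : ∀ i ∈ (Finset.univ : Finset (Fin m)), Nat.card ↥(S i)
        = (if (i:ℕ) = 0 then Nat.card ↥((pAdd F).range : Set F)
            else if (i:ℕ) < m - 1 then Nat.card F else 2) := by
      intro i _
      rw [hS]
      dsimp only
      by_cases h0 : (i:ℕ) = 0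
      · rw [if_pos h0, if_pos h0]
      · rw [if_neg h0, if_neg h0]
        by_cases h1 : (i:ℕ) < m - 1
        · rw [if_pos h1, if_pos h1, Nat.card_univ]
        · rw [if_neg h1, if_neg h1, Nat.card_coe_set_eq, Set.ncard_pair zero_ne_one]
    rw [Finset.prod_congr rfl hc, prod_fin_ite m (m-2) (by omega)]
    have hP2 : 2 * Nat.card ↥(((pAdd F).range : Set F)) = Nat.card F :=
      two_mul_card_pAdd_range (F := F)
    have hm1 : m - 1 = (m - 2) + 1 := by omega
    rw [hm1, pow_succ, ← hP2]
    ring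
  rwa [hdom] at hcard

-- ### final assembly

lemma card_Vsig (hn : 2 < n) :
    Nat.card ↥(Vsig F n (cc n)) = Nat.card F ^ (2^(n-1)) := by
  obtain ⟨h2n, hm4⟩ := m_facts (n := n) hn
  have e : ↥(Vsig F n (cc n)) ≃ ↥((fV F n).ker) :=
    { toFun := fun u => ⟨⟨u.1, (Subgroup.mem_inf.mp u.2).1⟩, by
        rw [MonoidHom.mem_ker]
        exact (Subgroup.mem_inf.mp u.2).2⟩
      invFun := fun v => ⟨(v.1 : (GA F n)ˣ), Subgroup.mem_inf.mpr ⟨v.1.2, by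
        have hv := v.2
        rw [MonoidHom.mem_ker] at hv
        exact hv⟩⟩
      left_inv := fun u => rfl
      right_inv := fun v => rfl }
  rw [Nat.card_congr e]
  have h1 : Nat.card ↥(V F n)
      = Nat.card (↥(V F n) ⧸ (fV F n).ker) * Nat.card ↥((fV F n).ker) :=
    Subgroup.card_eq_card_quotient_mul_card_subgroup _
  have h2 : Nat.card (↥(V F n) ⧸ (fV F n).ker) = Nat.card ↥((fV F n).range) :=
    Nat.card_congr (QuotientGroup.quotientKerEquivRange (fV F n)).toEquiv
  have hV := card_V (F := F) (n := n)
  have hK := ker_ge (F := F) hn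
  have hR := range_ge (F := F) hn
  set q := Nat.card F with hq
  set m := 2^(n-1) with hm
  set K := Nat.card ↥((fV F n).ker) with hKdef
  set R := Nat.card ↥((fV F n).range) with hRdef
  have hq1 : 0 < q := Nat.card_pos
  have hsplit : q^(2^n - 1) = q^(m-1) * q^m := by
    rw [← pow_add]
    congr 1
    omega
  have hRK : q^(m-1) * q^m = R * K := by
    rw [← hsplit, ← hV, h1, h2]
  have hKle : K ≤ q^m := by
    have hle : q^(m-1) * K ≤ R * K := Nat.mul_le_mul_right K hR
    rw [← hRK] at hle
    exact Nat.le_of_mul_le_mul_left hle (Nat.pow_pos hq1)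
  exact le_antisymm hKle hK

end CU

/-- For `n > 2` and the involution `σ₃ : a ↦ a^{2^{n-1}-1}`,
`|V_{σ₃}(FC_{2^n})| = |F|^{2^{n-1}}`. -/
theorem card_unitary_sigma3_cyclic (F : Type) [Field F] [Fintype F] (hF : CharP F 2)
    (n : ℕ) (hn : 2 < n) :
    Nat.card (Vsig F n (2^(n-1) - 1)) = Nat.card F ^ 2^(n-1) := by
  haveI := hF
  have hcc : (2^(n-1) - 1 : ZMod (2^n)) = CU.cc n := rfl
  rw [hcc]
  exact CU.card_Vsig hn
end

section
/- Let n > 2, G = C_{2^n} = ⟨a⟩, and F a finite field of characteristic 2. Let σ₄ be the F-linear extension of the automorphism a ↦ a^{2^{n-1}+1}. Then V_{σ₄}(FG) is an elementary abelian 2-group of order |F|^{2^{n-1}}. -/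
open AddMonoidAlgebra

namespace S4

variable {F : Type} [Field F] [CharP F 2] {n : ℕ}

/-- `c = 2^(n-1)` in `ZMod (2^n)`. -/
def cn (n : ℕ) : ZMod (2^n) := ((2^(n-1) : ℕ) : ZMod (2^n))

/-- `z = a^(2^(n-1))`, central element of order 2. -/
noncomputable def z (F : Type) [Field F] (n : ℕ) : GA F n :=
  AddMonoidAlgebra.single (cn n) 1

lemma npos (hn : 2 < n) : NeZero (2^n) := ⟨(pow_pos (by norm_num : (0:ℕ) < 2) n).ne'⟩

lemma castval (hn : 2 < n) (x : ZMod (2^n)) : ((x.val : ℕ) : ZMod (2^n)) = x := by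
  haveI := npos hn
  rw [ZMod.natCast_val, ZMod.cast_id]

lemma cval (hn : 2 < n) : (cn (n := n)).val = 2^(n-1) := by
  haveI := npos hn
  rw [cn, ZMod.val_natCast, Nat.mod_eq_of_lt (Nat.pow_lt_pow_right one_lt_two (by omega))]

lemma hc2 (hn : 2 < n) : cn n + cn n = 0 := by
  rw [cn, ← Nat.cast_add]
  have : 2^(n-1) + 2^(n-1) = 2^n := by
    have : n - 1 + 1 = n := by omega
    conv_rhs => rw [← this]
    rw [pow_succ]; ring
  rw [this, ZMod.natCast_self]

lemma cne (hn : 2 < n) : cn (n := n) ≠ 0 := by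
  intro h
  have h2 := cval hn
  haveI := npos hn
  rw [h, ZMod.val_zero] at h2
  exact absurd h2.symm (pow_pos (by norm_num : (0:ℕ) < 2) (n-1)).ne'


/-! char two facts -/

lemma addself (x : GA F n) : x + x = 0 := by
  apply AddMonoidAlgebra.ext; apply Finsupp.ext; intro k
  show x.coeff k + x.coeff k = (0 : F)
  exact CharTwo.add_self_eq_zero _

lemma add_eq_zero_iff {a b : GA F n} : a + b = 0 ↔ a = b := by
  constructor
  · intro h
    have : a + (a + b) = a + 0 := by rw [h]
    rwa [← add_assoc, addself, zero_add, add_zero, eq_comm] at this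
  · rintro rfl; exact addself a

lemma addsq (x y : GA F n) : (x + y) * (x + y) = x * x + y * y := by
  have h : (x + y) * (x + y) = x * x + y * y + (x * y + x * y) := by ring
  rw [h, addself, add_zero]

lemma Fsq_add (x y : F) : (x + y) * (x + y) = x * x + y * y := by
  have h : (x + y) * (x + y) = x * x + y * y + (x * y + x * y) := by ring
  rw [h, CharTwo.add_self_eq_zero, add_zero]

lemma Fsq_inj {x y : F} (h : x * x = y * y) : x = y := by
  have : (x + y) * (x + y) = 0 := by rw [Fsq_add, h, CharTwo.add_self_eq_zero]
  have h2 : x + y = 0 := by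
    rcases mul_eq_zero.mp this with h' | h' <;> exact h'
  have : x + (x + y) = x + 0 := by rw [h2]
  rwa [← add_assoc, CharTwo.add_self_eq_zero, zero_add, add_zero, eq_comm] at this

/-! squaring formula -/

lemma sq_eq (u : GA F n) :
    u * u = AddMonoidAlgebra.ofCoeff (Finsupp.mapDomain (fun i => 2 * i)
      (Finsupp.mapRange (fun x => x * x) (by simp) u.coeff)) := by
  induction u using AddMonoidAlgebra.induction with
  | zero => simp
  | single_add a b f haf hb ih =>
    rw [addsq, ih, AddMonoidAlgebra.single_mul_single]
    rw [AddMonoidAlgebra.coeff_add, Finsupp.mapRange_add (fun x y => Fsq_add x y),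
      AddMonoidAlgebra.coeff_single, Finsupp.mapRange_single,
      Finsupp.mapDomain_add, Finsupp.mapDomain_single, two_mul, AddMonoidAlgebra.ofCoeff_add,
      AddMonoidAlgebra.ofCoeff_single]

/-! z multiplication -/

lemma zmul_apply (hn : 2 < n) (x : GA F n) (j : ZMod (2^n)) :
    (z F n * x).coeff j = x.coeff (j + cn n) := by
  rw [z, AddMonoidAlgebra.coeff_single_mul_apply, one_mul]
  congr 1
  have h := hc2 hn
  have : -cn n = cn n := by
    rw [neg_eq_iff_add_eq_zero, h]
  rw [this, add_comm]

lemma zfix_apply (hn : 2 < n) {x : GA F n} (h : z F n * x = x) (j : ZMod (2^n)) :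
    x.coeff (j + cn n) = x.coeff j := by
  conv_rhs => rw [← h]
  rw [zmul_apply hn]

/-! parity -/

lemma pr_add (hn : 2 < n) (i j : ZMod (2^n)) :
    (i + j).val % 2 = (i.val + j.val) % 2 := by
  haveI := npos hn
  rw [ZMod.val_add, Nat.mod_mod_of_dvd _ (dvd_pow_self 2 (by omega))]

lemma pr_c (hn : 2 < n) : (cn (n := n)).val % 2 = 0 := by
  have h1 : n - 1 ≠ 0 := by omega
  rw [cval hn, Nat.pow_mod]
  norm_num [zero_pow h1]

/-- even part -/
noncomputable def eP (u : GA F n) : GA F n :=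
  AddMonoidAlgebra.ofCoeff (Finsupp.filter (fun i : ZMod (2^n) => i.val % 2 = 0) u.coeff)

/-- odd part -/
noncomputable def oP (u : GA F n) : GA F n :=
  AddMonoidAlgebra.ofCoeff (Finsupp.filter (fun i : ZMod (2^n) => ¬ i.val % 2 = 0) u.coeff)

lemma eP_add_oP (u : GA F n) : eP u + oP u = u :=
  congrArg AddMonoidAlgebra.ofCoeff (Finsupp.filter_pos_add_filter_neg _ _)

lemma eP_supp (u : GA F n) : ∀ i ∈ (eP u).coeff.support, i.val % 2 = 0 := by
  intro i hi
  rw [eP, AddMonoidAlgebra.coeff_ofCoeff, Finsupp.support_filter, Finset.mem_filter] at hi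
  exact hi.2

lemma oP_supp (u : GA F n) : ∀ i ∈ (oP u).coeff.support, i.val % 2 = 1 := by
  intro i hi
  rw [oP, AddMonoidAlgebra.coeff_ofCoeff, Finsupp.support_filter, Finset.mem_filter] at hi
  omega

lemma z_supp (hn : 2 < n) : ∀ i ∈ (z F n).coeff.support, i.val % 2 = 0 := by
  intro i hi
  rw [z, AddMonoidAlgebra.coeff_single] at hi
  have := Finsupp.support_single_subset hi
  rw [Finset.mem_singleton] at this
  subst this
  exact pr_c hn

lemma one_supp : ∀ i ∈ ((1 : GA F n)).coeff.support, i.val % 2 = 0 := by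
  intro i hi
  have : (1 : GA F n) = AddMonoidAlgebra.single 0 1 := rfl
  rw [this, AddMonoidAlgebra.coeff_single] at hi
  have := Finsupp.support_single_subset hi
  rw [Finset.mem_singleton] at this
  subst this
  simp

lemma mul_supp (hn : 2 < n) {a b : ℕ} {x y : GA F n}
    (hx : ∀ i ∈ x.coeff.support, i.val % 2 = a) (hy : ∀ j ∈ y.coeff.support, j.val % 2 = b) :
    ∀ k ∈ (x * y).coeff.support, k.val % 2 = (a + b) % 2 := by
  intro k hk
  have := AddMonoidAlgebra.support_coeff_mul_subset x y hk
  rw [Finset.mem_add] at this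
  obtain ⟨i, hi, j, hj, rfl⟩ := this
  rw [pr_add hn]
  have h1 := hx i hi
  have h2 := hy j hj
  omega

lemma filter_homog {p : ZMod (2^n) → Prop} [DecidablePred p] {x : GA F n}
    (hx : ∀ i ∈ x.coeff.support, p i) : Finsupp.filter p x.coeff = x.coeff := by
  rw [Finsupp.filter_eq_self_iff]
  intro i hi
  exact hx i (Finsupp.mem_support_iff.mpr hi)

lemma filter_homog' {p : ZMod (2^n) → Prop} [DecidablePred p] {x : GA F n}
    (hx : ∀ i ∈ x.coeff.support, ¬ p i) : Finsupp.filter p x.coeff = 0 := by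
  rw [Finsupp.filter_eq_zero_iff]
  intro i hi
  by_contra h
  exact hx i (Finsupp.mem_support_iff.mpr h) hi

/-- splitting an equation into even and odd parts -/
lemma split_parity {x y x' y' : GA F n}
    (hx : ∀ i ∈ x.coeff.support, i.val % 2 = 0) (hy : ∀ i ∈ y.coeff.support, i.val % 2 = 1)
    (hx' : ∀ i ∈ x'.coeff.support, i.val % 2 = 0) (hy' : ∀ i ∈ y'.coeff.support, i.val % 2 = 1)
    (h : x + y = x' + y') : x = x' ∧ y = y' := by
  have f1 : ∀ w : GA F n, (∀ i ∈ w.coeff.support, i.val % 2 = 0) →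
      Finsupp.filter (fun i : ZMod (2^n) => i.val % 2 = 0) w.coeff = w.coeff := fun w hw => filter_homog hw
  have f2 : ∀ w : GA F n, (∀ i ∈ w.coeff.support, i.val % 2 = 1) →
      Finsupp.filter (fun i : ZMod (2^n) => i.val % 2 = 0) w.coeff = 0 := by
    intro w hw
    apply filter_homog'
    intro i hi
    have := hw i hi
    omega
  have f3 : ∀ w : GA F n, (∀ i ∈ w.coeff.support, i.val % 2 = 1) →
      Finsupp.filter (fun i : ZMod (2^n) => ¬ i.val % 2 = 0) w.coeff = w.coeff := by
    intro w hw
    apply filter_homog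
    intro i hi
    have := hw i hi
    omega
  have f4 : ∀ w : GA F n, (∀ i ∈ w.coeff.support, i.val % 2 = 0) →
      Finsupp.filter (fun i : ZMod (2^n) => ¬ i.val % 2 = 0) w.coeff = 0 := by
    intro w hw
    apply filter_homog'
    intro i hi
    have := hw i hi
    omega
  constructor
  · have h0 := congrArg (Finsupp.filter (fun i : ZMod (2^n) => i.val % 2 = 0))
      (congrArg AddMonoidAlgebra.coeff h)
    apply AddMonoidAlgebra.coeff_injective
    rwa [AddMonoidAlgebra.coeff_add, AddMonoidAlgebra.coeff_add, Finsupp.filter_add, Finsupp.filter_add, f1 x hx, f1 x' hx',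
      f2 y hy, f2 y' hy', add_zero, add_zero] at h0
  · have h0 := congrArg (Finsupp.filter (fun i : ZMod (2^n) => ¬ i.val % 2 = 0))
      (congrArg AddMonoidAlgebra.coeff h)
    apply AddMonoidAlgebra.coeff_injective
    rwa [AddMonoidAlgebra.coeff_add, AddMonoidAlgebra.coeff_add, Finsupp.filter_add, Finsupp.filter_add, f3 y hy, f3 y' hy',
      f4 x hx, f4 x' hx', zero_add, zero_add] at h0


/-! coefficients of mapDomain -/

lemma mdapply (f : ZMod (2^n) → ZMod (2^n)) (v : ZMod (2^n) →₀ F) (k : ZMod (2^n)) :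
    (Finsupp.mapDomain f v) k = ∑ i ∈ v.support, if f i = k then v i else 0 := by
  rw [Finsupp.mapDomain, Finsupp.sum_apply, Finsupp.sum]
  apply Finset.sum_congr rfl
  intro i _
  rw [Finsupp.single_apply]

lemma two_mul_eq_zero (hn : 2 < n) (x : ZMod (2^n)) :
    2 * x = 0 ↔ x = 0 ∨ x = cn n := by
  constructor
  · intro h
    have hv : ((2 * x.val : ℕ) : ZMod (2^n)) = 0 := by
      push_cast
      rw [castval hn]
      exact h
    haveI := npos hn
    rw [ZMod.natCast_eq_zero_iff] at hv
    obtain ⟨k, hk⟩ := hv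
    have h2 : 2^n = 2 * 2^(n-1) := by
      conv_lhs => rw [show n = n - 1 + 1 by omega]
      rw [pow_succ]; ring
    have hk' : 2 * x.val = 2 * (2^(n-1) * k) := by rw [hk, h2]; ring
    have hx : x.val = 2^(n-1) * k := Nat.eq_of_mul_eq_mul_left (by norm_num) hk'
    have hlt : x.val < 2 * 2^(n-1) := h2 ▸ ZMod.val_lt x
    have hk2 : k < 2 := by
      by_contra hc
      push_neg at hc
      have : 2^(n-1) * 2 ≤ 2^(n-1) * k := Nat.mul_le_mul_left _ hc
      omega
    interval_cases k
    · left
      have : x.val = 0 := by omega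
      rw [← castval hn x, this, Nat.cast_zero]
    · right
      rw [← castval hn x, hx, mul_one, cn]
  · rintro (rfl | rfl)
    · rw [mul_zero]
    · rw [two_mul, hc2 hn]

lemma odd_two_mul_ne (hn : 2 < n) (i : ZMod (2^n)) (hi : i.val % 2 = 1) :
    2 * i ≠ cn n := by
  intro h
  haveI := npos hn
  have hv : (2 * i).val = 2^(n-1) := by rw [h, cval hn]
  have h2 : (2 * i).val = (i.val + i.val) % 2^n := by
    rw [two_mul]; exact ZMod.val_add i i
  have e4 : n - 2 + 2 = n := by omega
  have h4 : 2^n = 4 * 2^(n-2) := by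
    conv_lhs => rw [← e4]
    rw [pow_add]; ring
  have e1 : n - 2 + 1 = n - 1 := by omega
  have hK : 2^(n-1) = 2 * 2^(n-2) := by
    conv_lhs => rw [← e1]
    rw [pow_add]; ring
  have hmod : (i.val + i.val) % (4 * 2^(n-2)) = 2 * 2^(n-2) := by
    rw [← h4, ← h2, hv, hK]
  have hdm := Nat.div_add_mod (i.val + i.val) (4 * 2^(n-2))
  rw [hmod] at hdm
  have hBdef : 4 * 2^(n-2) * ((i.val + i.val) / (4 * 2^(n-2)))
      = 4 * (2^(n-2) * ((i.val + i.val) / (4 * 2^(n-2)))) := by ring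
  rw [hBdef] at hdm
  generalize hq : 2^(n-2) * ((i.val + i.val) / (4 * 2^(n-2))) = B at hdm
  obtain ⟨A', hA'⟩ : 2 ∣ 2^(n-2) := dvd_pow_self 2 (by omega)
  rw [hA'] at hdm
  omega

/-! `w * w = 0 ↔ z * w = w` -/

lemma sqzero_iff (hn : 2 < n) (w : GA F n) :
    w * w = 0 ↔ z F n * w = w := by
  constructor
  · intro h
    apply AddMonoidAlgebra.ext; apply Finsupp.ext
    intro j
    rw [zmul_apply hn]
    set w' := Finsupp.mapRange (fun x => x * x) (by simp) w.coeff with hw'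
    have hw'app : ∀ i, w' i = w.coeff i * w.coeff i := fun i => Finsupp.mapRange_apply
    have hcoef : (w * w).coeff (2 * j) = 0 := by rw [h]; rfl
    rw [sq_eq, ← hw', AddMonoidAlgebra.coeff_ofCoeff, mdapply] at hcoef
    have hne : j ≠ j + cn n := by
      intro hj
      have : cn n = 0 := by
        have := congrArg (fun t => t - j) hj
        simpa [add_comm] using this.symm
      exact cne hn this
    have hsplit : ∀ i ∈ w'.support,
        (if 2 * i = 2 * j then w' i else 0)
        = (if i = j then w' i else 0) + (if i = j + cn n then w' i else 0) := by
      intro i _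
      have hiff : 2 * i = 2 * j ↔ i = j ∨ i = j + cn n := by
        constructor
        · intro hh
          have : 2 * (i - j) = 0 := by
            rw [mul_sub, hh, sub_self]
          rcases (two_mul_eq_zero hn _).mp this with h' | h'
          · left
            have := sub_eq_zero.mp h'
            exact this
          · right
            have : i = cn n + j := eq_add_of_sub_eq h'
            rw [this, add_comm]
        · rintro (rfl | rfl)
          · rfl
          · rw [mul_add, two_mul (cn n), hc2 hn, add_zero]
      rw [if_congr hiff rfl rfl]
      by_cases h1 : i = j
      · subst h1
        simp [hne]
      · by_cases h2 : i = j + cn n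
        · subst h2
          simp [h1]
        · simp [h1, h2]
    rw [Finset.sum_congr rfl hsplit, Finset.sum_add_distrib,
      Finset.sum_ite_eq' w'.support j w', Finset.sum_ite_eq' w'.support (j + cn n) w'] at hcoef
    have hv1 : (if j ∈ w'.support then w' j else 0) = w' j := by
      split
      · rfl
      · rw [eq_comm]
        exact Finsupp.notMem_support_iff.mp (by assumption)
    have hv2 : (if j + cn n ∈ w'.support then w' (j + cn n) else 0) = w' (j + cn n) := by
      split
      · rfl
      · rw [eq_comm]
        exact Finsupp.notMem_support_iff.mp (by assumption)
    rw [hv1, hv2] at hcoef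
    have : w' j = w' (j + cn n) := by
      have h0 : w' j + w' (j + cn n) = 0 := hcoef
      have : w' j + (w' j + w' (j + cn n)) = w' j + 0 := by rw [h0]
      rwa [← add_assoc, CharTwo.add_self_eq_zero, zero_add, add_zero, eq_comm] at this
    rw [hw'app, hw'app] at this
    exact (Fsq_inj this.symm)
  · intro h
    apply AddMonoidAlgebra.ext; apply Finsupp.ext
    intro k
    rw [sq_eq, AddMonoidAlgebra.coeff_ofCoeff, mdapply]
    show _ = (0 : GA F n).coeff k
    rw [AddMonoidAlgebra.coeff_zero, Finsupp.coe_zero, Pi.zero_apply]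
    set w' := Finsupp.mapRange (fun x => x * x) (by simp) w.coeff with hw'
    have hw'app : ∀ i, w' i = w.coeff i * w.coeff i := fun i => Finsupp.mapRange_apply
    have hfix : ∀ i, w' (i + cn n) = w' i := by
      intro i
      rw [hw'app, hw'app, zfix_apply hn h]
    apply Finset.sum_involution (fun i _ => i + cn n)
    · intro i _
      have h2 : 2 * (i + cn n) = 2 * i := by
        rw [mul_add, two_mul (cn n), hc2 hn, add_zero]
      rw [h2, hfix]
      split
      · exact CharTwo.add_self_eq_zero _
      · rw [add_zero]
    · intro i _ _
      intro hc
      have : cn n = 0 := by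
        have := congrArg (fun t => t - i) hc
        simpa [add_comm] using this
      exact cne hn this
    · intro i hi
      rw [Finsupp.mem_support_iff] at hi ⊢
      rwa [hfix]
    · intro i _
      rw [add_assoc, hc2 hn, add_zero]


/-! augmentation -/

lemma aug_single (i : ZMod (2^n)) (b : F) :
    aug F n (AddMonoidAlgebra.single i b) = b := by
  rw [aug]
  show ((AddMonoidAlgebra.lift F F (ZMod (2^n))) 1) (AddMonoidAlgebra.single i b) = b
  rw [AddMonoidAlgebra.lift_single]
  simp

lemma aug_z (hn : 2 < n) : aug F n (z F n) = 1 := aug_single _ _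

/-! the key power lemma: `x ^ (2^n) = (aug x)^(2^n) • 1` -/

lemma pow2add (k : ℕ) (x y : GA F n) :
    (x + y)^(2^k) = x^(2^k) + y^(2^k) := by
  induction k generalizing x y with
  | zero => simp
  | succ m ih =>
    rw [pow_succ, pow_mul, pow_mul, pow_mul, ih, pow_two, pow_two, pow_two, addsq]

lemma powP (hn : 2 < n) (x : GA F n) :
    x ^ (2^n) = AddMonoidAlgebra.single 0 (aug F n x ^ (2^n)) := by
  haveI : Fact (Nat.Prime 2) := ⟨Nat.prime_two⟩
  induction x using AddMonoidAlgebra.induction with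
  | zero =>
    have h2 : (2:ℕ)^n ≠ 0 := by positivity
    rw [zero_pow h2, map_zero, zero_pow h2]
    exact (AddMonoidAlgebra.single_zero 0).symm
  | single_add a b f haf hb ih =>
    rw [pow2add, ih, AddMonoidAlgebra.single_pow]
    have hz : (2^n) • a = 0 := by
      rw [nsmul_eq_mul]
      push_cast
      rw [show ((2:ZMod (2^n)))^n = ((2^n : ℕ) : ZMod (2^n)) by push_cast; ring, ZMod.natCast_self, zero_mul]
    rw [hz]
    have : (AddMonoidAlgebra.single (0 : ZMod (2^n)) (b^(2^n)) : GA F n)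
        + AddMonoidAlgebra.single 0 (aug F n f ^ (2^n))
        = AddMonoidAlgebra.single 0 (b^(2^n) + aug F n f ^ (2^n)) :=
      (AddMonoidAlgebra.single_add 0 _ _).symm
    rw [this, ← add_pow_char_pow, map_add, aug_single]

lemma cancel (hn : 2 < n) {x y : GA F n} (hx : aug F n x ≠ 0) (h : x * y = 0) :
    y = 0 := by
  have h1 : x^(2^n) * y = 0 := by
    have hx1 : x^(2^n) = x^(2^n - 1) * x := by
      rw [← pow_succ]
      congr 1
      have : 0 < 2^n := pow_pos (by norm_num : (0:ℕ) < 2) n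
      omega
    rw [hx1, mul_assoc, h, mul_zero]
  rw [powP hn] at h1
  have h2 : (aug F n x ^ (2^n)) • y = 0 := by
    have : (AddMonoidAlgebra.single (0 : ZMod (2^n)) (aug F n x ^ (2^n)) : GA F n)
        = (aug F n x ^ (2^n)) • (1 : GA F n) := by
      show _ = (aug F n x ^ (2^n)) • (AddMonoidAlgebra.single (0 : ZMod (2^n)) (1:F))
      rw [AddMonoidAlgebra.smul_single, smul_eq_mul, mul_one]
    rw [this, smul_mul_assoc, one_mul] at h1
    exact h1
  apply AddMonoidAlgebra.ext; apply Finsupp.ext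
  intro j
  have := congrArg (fun t : GA F n => t.coeff j) h2
  simp only [AddMonoidAlgebra.coeff_zero, Finsupp.coe_zero, Pi.zero_apply] at this ⊢
  rw [AddMonoidAlgebra.coeff_smul, Finsupp.smul_apply, smul_eq_mul] at this
  rcases mul_eq_zero.mp this with h' | h'
  · exact absurd h' (pow_ne_zero _ hx)
  · exact h'

/-! computing sigma -/

lemma hnn (hn : 2 < n) : 2^n = 2^(n-1) * 2 := by
  conv_lhs => rw [show n = n - 1 + 1 by omega]
  rw [pow_succ]

lemma c_mul_even (hn : 2 < n) (i : ZMod (2^n)) (hi : i.val % 2 = 0) :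
    cn n * i = 0 := by
  obtain ⟨m, hm⟩ : 2 ∣ i.val := by omega
  have hcast : cn n * i = ((2^(n-1) * i.val : ℕ) : ZMod (2^n)) := by
    rw [cn]
    push_cast
    rw [castval hn]
  rw [hcast, hm, show 2^(n-1) * (2 * m) = 2^n * m by rw [hnn hn]; ring,
    Nat.cast_mul, ZMod.natCast_self, zero_mul]

lemma c_mul_odd (hn : 2 < n) (i : ZMod (2^n)) (hi : i.val % 2 = 1) :
    cn n * i = cn n := by
  obtain ⟨m, hm⟩ : ∃ m, i.val = 2 * m + 1 := ⟨i.val / 2, by omega⟩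
  have hcast : cn n * i = ((2^(n-1) * i.val : ℕ) : ZMod (2^n)) := by
    rw [cn]
    push_cast
    rw [castval hn]
  rw [hcast, hm, show 2^(n-1) * (2 * m + 1) = 2^n * m + 2^(n-1) by rw [hnn hn]; ring,
    Nat.cast_add, Nat.cast_mul, ZMod.natCast_self, zero_mul, zero_add]
  rfl

lemma sigma_apply (c : ZMod (2^n)) (u : GA F n) :
    sigma F n c u = AddMonoidAlgebra.ofCoeff (Finsupp.mapDomain (fun i => c * i) u.coeff) := by
  rfl

lemma sigma_eq (hn : 2 < n) (u : GA F n) :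
    sigma F n ((2:ZMod (2^n))^(n-1) + 1) u = eP u + z F n * oP u := by
  have hc : (2:ZMod (2^n))^(n-1) = cn n := by rw [cn]; push_cast; ring
  conv_lhs => rw [← eP_add_oP u]
  rw [map_add, hc]
  congr 1
  · rw [sigma_apply]
    have : Finsupp.mapDomain (fun i => (cn n + 1) * i) (eP u).coeff
        = Finsupp.mapDomain id (eP u).coeff := by
      apply Finsupp.mapDomain_congr
      intro i hi
      have := eP_supp u i hi
      show (cn n + 1) * i = i
      rw [add_mul, one_mul, c_mul_even hn i this, zero_add]
    rw [this, Finsupp.mapDomain_id, AddMonoidAlgebra.ofCoeff_coeff]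
  · rw [sigma_apply]
    have h1 : Finsupp.mapDomain (fun i => (cn n + 1) * i) (oP u).coeff
        = Finsupp.mapDomain (fun i => cn n + i) (oP u).coeff := by
      apply Finsupp.mapDomain_congr
      intro i hi
      have := oP_supp u i hi
      show (cn n + 1) * i = cn n + i
      rw [add_mul, one_mul, c_mul_odd hn i this]
    rw [h1]
    apply AddMonoidAlgebra.ext; apply Finsupp.ext
    intro j
    have hinj : Function.Injective (fun i : ZMod (2^n) => cn n + i) :=
      fun a b hab => by simpa using hab
    have : j = (fun i : ZMod (2^n) => cn n + i) (j + cn n) := by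
      show j = cn n + (j + cn n)
      rw [add_comm (cn n), add_assoc, hc2 hn, add_zero]
    conv_lhs => rw [this]
    rw [AddMonoidAlgebra.coeff_ofCoeff, Finsupp.mapDomain_apply hinj, zmul_apply hn]


lemma addsupp {a : ℕ} {p q : GA F n}
    (hp : ∀ i ∈ p.coeff.support, i.val % 2 = a) (hq : ∀ i ∈ q.coeff.support, i.val % 2 = a) :
    ∀ i ∈ (p + q).coeff.support, i.val % 2 = a := by
  intro i hi
  rcases Finset.mem_union.mp (Finsupp.support_add hi) with h | h
  · exact hp i h
  · exact hq i h

lemma zz1 (hn : 2 < n) : z F n * z F n = 1 := by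
  rw [z, AddMonoidAlgebra.single_mul_single, hc2 hn, mul_one]
  rfl

lemma y_sq_ne_z (hn : 2 < n) {y : GA F n} (hys : ∀ i ∈ y.coeff.support, i.val % 2 = 1)
    (h : y * y = z F n) : False := by
  have hc := congrArg (fun t : GA F n => t.coeff (cn n)) h
  rw [sq_eq, AddMonoidAlgebra.coeff_ofCoeff, mdapply] at hc
  have hzc : (z F n).coeff (cn n) = 1 := by
    rw [z, AddMonoidAlgebra.coeff_single]
    exact Finsupp.single_eq_same
  rw [hzc] at hc
  have : (∑ i ∈ (Finsupp.mapRange (fun x => x * x) (by simp) y.coeff).support,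
      if 2 * i = cn n then (Finsupp.mapRange (fun x : F => x * x) (by simp) y.coeff) i else 0) = 0 := by
    apply Finset.sum_eq_zero
    intro i hi
    have hiy : i ∈ y.coeff.support := Finsupp.support_mapRange hi
    exact if_neg (odd_two_mul_ne hn i (hys i hiy))
  rw [this] at hc
  exact one_ne_zero hc.symm

lemma charIff (hn : 2 < n) (u : GA F n) :
    (aug F n u = 1 ∧ sigma F n ((2:ZMod (2^n))^(n-1) + 1) u * u = 1)
    ↔ (eP u * eP u = 1 ∧ z F n * oP u = oP u) := by
  have hxs := eP_supp u
  have hys := oP_supp u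
  have hzys : ∀ i ∈ (z F n * oP u).coeff.support, i.val % 2 = 1 := by
    have := mul_supp hn (z_supp hn) hys
    simpa using this
  constructor
  · rintro ⟨haug, hmul⟩
    rw [sigma_eq hn] at hmul
    nth_rewrite 3 [← eP_add_oP u] at hmul
    set x := eP u with hx
    set y := oP u with hy
    have hexp : (x + z F n * y) * (x + y)
        = (x * x + (z F n * y) * y) + (x * y + (z F n * y) * x) := by ring
    rw [hexp] at hmul
    rw [show (1 : GA F n) = 1 + 0 by rw [add_zero]] at hmul
    have hEsup : ∀ i ∈ (x * x + (z F n * y) * y).coeff.support, i.val % 2 = 0 := by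
      apply addsupp
      · simpa using mul_supp hn hxs hxs
      · simpa using mul_supp hn hzys hys
    have hOsup : ∀ i ∈ (x * y + (z F n * y) * x).coeff.support, i.val % 2 = 1 := by
      apply addsupp
      · simpa using mul_supp hn hxs hys
      · simpa using mul_supp hn hzys hxs
    have hzero : ∀ i ∈ ((0:GA F n)).coeff.support, i.val % 2 = 1 := by simp
    obtain ⟨hE, hO⟩ := split_parity hEsup hOsup one_supp hzero hmul
    by_cases hax : aug F n x ≠ 0
    · have hfac : x * (y + z F n * y) = 0 := by
        rw [← hO]; ring
      have hyz : y + z F n * y = 0 := cancel hn hax hfac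
      have hfix : z F n * y = y := (add_eq_zero_iff.mp hyz).symm
      have hyy : y * y = 0 := (sqzero_iff hn y).mpr hfix
      refine ⟨?_, hfix⟩
      rw [← hE, mul_assoc, hyy, mul_zero, add_zero]
    · push_neg at hax
      exfalso
      have hay : aug F n y ≠ 0 := by
        have : aug F n u = aug F n x + aug F n y := by
          conv_lhs => rw [← eP_add_oP u]
          rw [map_add]
        rw [haug, hax, zero_add] at this
        rw [← this]
        exact one_ne_zero
      have hfac : y * (x + z F n * x) = 0 := by
        rw [← hO]; ring
      have hxz : x + z F n * x = 0 := cancel hn hay hfac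
      have hfixx : z F n * x = x := (add_eq_zero_iff.mp hxz).symm
      have hxx : x * x = 0 := (sqzero_iff hn x).mpr hfixx
      rw [hxx, zero_add] at hE
      have hyyz : y * y = z F n := by
        have := congrArg (fun t => z F n * t) hE
        rw [← mul_assoc, ← mul_assoc, zz1 hn, one_mul, mul_one] at this
        exact this
      exact y_sq_ne_z hn hys hyyz
  · rintro ⟨hE, hfix⟩
    have hyy : oP u * oP u = 0 := (sqzero_iff hn (oP u)).mpr hfix
    constructor
    · have haux : aug F n (eP u) = 1 := by
        apply Fsq_inj
        rw [← map_mul, hE, map_one, mul_one]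
      have hauy : aug F n (oP u) = 0 := by
        apply Fsq_inj
        rw [← map_mul, hyy, map_zero, mul_zero]
      conv_lhs => rw [← eP_add_oP u]
      rw [map_add, haux, hauy, add_zero]
    · rw [sigma_eq hn, hfix]
      nth_rewrite 3 [← eP_add_oP u]
      rw [addsq, hyy, add_zero, hE]

/-! z-fixedness and the shift by 1 -/

lemma eP_zmul (hn : 2 < n) (w : GA F n) : eP (z F n * w) = z F n * eP w := by
  apply AddMonoidAlgebra.ext; apply Finsupp.ext
  intro j
  rw [eP, eP, AddMonoidAlgebra.coeff_ofCoeff, Finsupp.filter_apply, zmul_apply hn, zmul_apply hn,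
    AddMonoidAlgebra.coeff_ofCoeff, Finsupp.filter_apply]
  have hpar : (j + cn n).val % 2 = j.val % 2 := by
    rw [pr_add hn]
    have := pr_c hn
    omega
  by_cases hj : j.val % 2 = 0
  · rw [if_pos hj, if_pos (by omega)]
  · rw [if_neg hj, if_neg (by omega)]

lemma oP_zmul (hn : 2 < n) (w : GA F n) : oP (z F n * w) = z F n * oP w := by
  apply AddMonoidAlgebra.ext; apply Finsupp.ext
  intro j
  rw [oP, oP, AddMonoidAlgebra.coeff_ofCoeff, Finsupp.filter_apply, zmul_apply hn, zmul_apply hn,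
    AddMonoidAlgebra.coeff_ofCoeff, Finsupp.filter_apply]
  have hpar : (j + cn n).val % 2 = j.val % 2 := by
    rw [pr_add hn]
    have := pr_c hn
    omega
  by_cases hj : j.val % 2 = 0
  · rw [if_neg (by omega), if_neg (by omega)]
  · rw [if_pos hj, if_pos (by omega)]

lemma zsplit (hn : 2 < n) (w : GA F n) :
    z F n * w = w ↔ (z F n * eP w = eP w ∧ z F n * oP w = oP w) := by
  constructor
  · intro h
    constructor
    · conv_rhs => rw [← h]
      rw [eP_zmul hn]
    · conv_rhs => rw [← h]
      rw [oP_zmul hn]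
  · rintro ⟨h1, h2⟩
    conv_lhs => rw [← eP_add_oP w]
    rw [mul_add, h1, h2, eP_add_oP]

lemma eP_one : eP (1 : GA F n) = 1 := by
  show AddMonoidAlgebra.ofCoeff _ = AddMonoidAlgebra.ofCoeff (Finsupp.single 0 1)
  congr 1
  apply Finsupp.filter_single_of_pos
  simp

lemma oP_one : oP (1 : GA F n) = 0 := by
  show AddMonoidAlgebra.ofCoeff _ = AddMonoidAlgebra.ofCoeff 0
  congr 1
  apply Finsupp.filter_single_of_neg
  simp

lemma mainIff (hn : 2 < n) (u : GA F n) :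
    (aug F n u = 1 ∧ sigma F n ((2:ZMod (2^n))^(n-1) + 1) u * u = 1)
    ↔ z F n * (u + 1) = u + 1 := by
  rw [charIff hn, zsplit hn (u+1)]
  have he : eP (u + 1) = eP u + 1 := by
    rw [eP, eP, AddMonoidAlgebra.coeff_add, Finsupp.filter_add, AddMonoidAlgebra.ofCoeff_add]
    congr 1
    exact eP_one
  have ho : oP (u + 1) = oP u := by
    rw [oP, oP, AddMonoidAlgebra.coeff_add, Finsupp.filter_add, AddMonoidAlgebra.ofCoeff_add]
    have h0 : AddMonoidAlgebra.ofCoeff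
        (Finsupp.filter (fun i : ZMod (2^n) => ¬ i.val % 2 = 0) (1 : GA F n).coeff) = 0 := oP_one
    rw [h0, add_zero]
  rw [he, ho]
  have hsq : (eP u + 1) * (eP u + 1) = eP u * eP u + 1 := by rw [addsq, one_mul]
  have key : (eP u * eP u = 1) ↔ z F n * (eP u + 1) = eP u + 1 := by
    rw [← sqzero_iff hn, hsq]
    constructor
    · intro h
      rw [h]
      exact addself 1
    · intro h
      exact add_eq_zero_iff.mp h
  exact and_congr key Iff.rfl


/-! counting -/

lemma vswap (hn : 2 < n) (j : ZMod (2^n)) :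
    (j + cn n).val < 2^(n-1) ↔ ¬ (j.val < 2^(n-1)) := by
  haveI := npos hn
  have hva : (j + cn n).val = (j.val + 2^(n-1)) % 2^n := by
    rw [ZMod.val_add, cval hn]
  have hj : j.val < 2^n := ZMod.val_lt j
  have h2 : 2^n = 2^(n-1) * 2 := hnn hn
  rw [hva]
  by_cases hl : j.val < 2^(n-1)
  · rw [Nat.mod_eq_of_lt (by omega)]
    omega
  · push_neg at hl
    have h3 : (j.val + 2^(n-1)) % 2^n = j.val - 2^(n-1) := by
      rw [Nat.mod_eq_sub_mod (by omega), Nat.mod_eq_of_lt (by omega)]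
      omega
    rw [h3]
    omega

/-- the element of `GA F n` built from coefficients on the lower half -/
noncomputable def wg (hn : 2 < n) (g : {i : ZMod (2^n) // i.val < 2^(n-1)} → F) : GA F n :=
  haveI := npos hn
  AddMonoidAlgebra.ofCoeff (Finsupp.equivFunOnFinite.symm
    (fun j => if h : j.val < 2^(n-1) then g ⟨j, h⟩ else g ⟨j + cn n, (vswap hn j).mpr h⟩))

lemma wg_apply (hn : 2 < n) (g : {i : ZMod (2^n) // i.val < 2^(n-1)} → F) (j : ZMod (2^n)) :
    (wg hn g).coeff j = if h : j.val < 2^(n-1) then g ⟨j, h⟩ else g ⟨j + cn n, (vswap hn j).mpr h⟩ := by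
  haveI := npos hn
  rw [wg]
  rfl

lemma hcc (hn : 2 < n) (j : ZMod (2^n)) : j + cn n + cn n = j := by
  rw [add_assoc, hc2 hn, add_zero]

lemma wg_fix (hn : 2 < n) (g : {i : ZMod (2^n) // i.val < 2^(n-1)} → F) :
    z F n * wg hn g = wg hn g := by
  apply AddMonoidAlgebra.ext; apply Finsupp.ext
  intro j
  rw [zmul_apply hn, wg_apply hn, wg_apply hn]
  by_cases hj : j.val < 2^(n-1)
  · have hne : ¬ (j + cn n).val < 2^(n-1) := fun hc => (vswap hn j).mp hc hj
    rw [dif_neg hne, dif_pos hj]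
    exact congrArg g (Subtype.ext (hcc hn j))
  · have hpos : (j + cn n).val < 2^(n-1) := (vswap hn j).mpr hj
    rw [dif_pos hpos, dif_neg hj]

noncomputable def invFix (hn : 2 < n) :
    ({i : ZMod (2^n) // i.val < 2^(n-1)} → F) → {w : GA F n // z F n * w = w} :=
  fun g => ⟨wg hn g, wg_fix hn g⟩

noncomputable def eqFix (hn : 2 < n) :
    {w : GA F n // z F n * w = w} ≃ ({i : ZMod (2^n) // i.val < 2^(n-1)} → F) where
  toFun w i := w.1.coeff i.1
  invFun := invFix hn
  left_inv w := by
    apply Subtype.ext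
    apply AddMonoidAlgebra.ext; apply Finsupp.ext
    intro j
    show (wg hn (fun i => w.1.coeff i.1)).coeff j = w.1.coeff j
    rw [wg_apply hn]
    by_cases hj : j.val < 2^(n-1)
    · rw [dif_pos hj]
    · rw [dif_neg hj]
      show w.1.coeff (j + cn n) = w.1.coeff j
      exact zfix_apply hn w.2 j
  right_inv g := by
    funext i
    show (wg hn g).coeff i.1 = g i
    rw [wg_apply hn, dif_pos i.2]

lemma card_fix (hn : 2 < n) :
    Nat.card {w : GA F n // z F n * w = w} = Nat.card F ^ 2^(n-1) := by
  haveI := npos hn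
  rw [Nat.card_congr (eqFix hn), Nat.card_fun]
  congr 1
  let e2 : {i : ZMod (2^n) // i.val < 2^(n-1)} ≃ Fin (2^(n-1)) :=
  { toFun := fun i => ⟨i.1.val, i.2⟩
    invFun := fun k => ⟨((k : ℕ) : ZMod (2^n)), by
      rw [ZMod.val_natCast,
        Nat.mod_eq_of_lt (lt_trans k.2 (Nat.pow_lt_pow_right one_lt_two (by omega)))]
      exact k.2⟩
    left_inv := fun i => Subtype.ext (castval hn i.1)
    right_inv := fun k => Fin.ext (by
      show (((k : ℕ) : ZMod (2^n))).val = (k : ℕ)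
      rw [ZMod.val_natCast,
        Nat.mod_eq_of_lt (lt_trans k.2 (Nat.pow_lt_pow_right one_lt_two (by omega)))]) }
  rw [Nat.card_congr e2, Nat.card_eq_fintype_card, Fintype.card_fin]

/-! membership -/

lemma mem_Vsig (u : (GA F n)ˣ) (c : ZMod (2^n)) :
    u ∈ Vsig F n c ↔ (aug F n u.val = 1 ∧ sigma F n c u.val * u.val = 1) := by
  rw [Vsig, Subgroup.mem_inf, V, MonoidHom.mem_ker, MonoidHom.mem_ker]
  rw [Units.ext_iff, Units.ext_iff]
  simp only [MonoidHom.mul_apply, MonoidHom.id_apply, Units.val_mul, Units.coe_map,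
    RingHom.toMonoidHom_eq_coe, MonoidHom.coe_coe, Units.val_one]

end S4

/-- For `n > 2` and the involution `σ₄ : a ↦ a^{2^{n-1}+1}`, the unitary subgroup
`V_{σ₄}(FC_{2^n})` is an elementary abelian `2`-group of order `|F|^{2^{n-1}}`. -/
theorem unitary_sigma4_elementary_abelian (F : Type) [Field F] [Fintype F] (hF : CharP F 2)
    (n : ℕ) (hn : 2 < n) :
    (∀ u ∈ Vsig F n (2^(n-1) + 1), u^2 = 1) ∧
      Nat.card (Vsig F n (2^(n-1) + 1)) = Nat.card F ^ 2^(n-1) := by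
  haveI := hF
  constructor
  · intro u hu
    rw [S4.mem_Vsig] at hu
    obtain ⟨hE, hfix⟩ := (S4.charIff hn u.val).mp hu
    have hyy := (S4.sqzero_iff hn _).mpr hfix
    have hval : (u.val : GA F n) * u.val = 1 := by
      rw [← S4.eP_add_oP u.val, S4.addsq, hE, hyy, add_zero]
    apply Units.ext
    rw [Units.val_pow_eq_pow_val, pow_two, hval, Units.val_one]
  · have hwp : ∀ w : {w : GA F n // S4.z F n * w = w},
        aug F n (w.1 + 1) = 1 ∧
          sigma F n (2^(n-1) + 1) (w.1 + 1) * (w.1 + 1) = 1 := by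
      intro w
      apply (S4.mainIff hn (w.1 + 1)).mpr
      have h11 : w.1 + 1 + 1 = w.1 := by
        rw [add_assoc, S4.addself, add_zero]
      rw [h11]
      exact w.2
    let e1 : ↥(Vsig F n (2^(n-1) + 1)) ≃ {w : GA F n // S4.z F n * w = w} :=
    { toFun := fun x => ⟨x.1.val + 1, by
        apply (S4.mainIff hn x.1.val).mp
        exact (S4.mem_Vsig x.1 _).mp x.2⟩
      invFun := fun w => ⟨⟨w.1 + 1, sigma F n (2^(n-1) + 1) (w.1 + 1),
          by rw [mul_comm]; exact (hwp w).2, (hwp w).2⟩,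
          (S4.mem_Vsig _ _).mpr ⟨(hwp w).1, (hwp w).2⟩⟩
      left_inv := fun x => by
        apply Subtype.ext
        apply Units.ext
        show x.1.val + 1 + 1 = x.1.val
        rw [add_assoc, S4.addself, add_zero]
      right_inv := fun w => by
        apply Subtype.ext
        show w.1 + 1 + 1 = w.1
        rw [add_assoc, S4.addself, add_zero] }
    rw [Nat.card_congr e1, S4.card_fix hn]
end

section
/- Let n > 2, G = C_{2^n} = ⟨a⟩, and F a finite field of characteristic 2 with involution σ₄ on FG induced by a ↦ a^{2^{n-1}+1}. If x ∈ V(FG) satisfies x·x^{σ₄} = 1, then x is σ₄-symmetric (x^{σ₄} = x) and hence x² = 1. -/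
open AddMonoidAlgebra

/- ### Auxiliary polynomial lemmas -/

open Polynomial

lemma coeff_mul_one' {R : Type*} [CommSemiring R] (p q : R[X]) :
    (p * q).coeff 1 = p.coeff 0 * q.coeff 1 + p.coeff 1 * q.coeff 0 := by
  rw [Polynomial.coeff_mul, Finset.Nat.sum_antidiagonal_eq_sum_range_succ_mk]
  simp [Finset.sum_range_succ]

lemma compD {F : Type} [CommRing F] (m : ℕ) :
    ∀ k : ℕ, (X:F[X])^(2*m) ∣
      (X + X^m*(1+X))^k - ((X:F[X])^k + (k:F[X]) * (X^m*(1+X)) * X^(k-1)) := by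
  intro k
  induction k with
  | zero => simp
  | succ k IH =>
    match k, IH with
    | 0, _ => simp [pow_one]
    | (j+1), IH =>
      obtain ⟨s, hs⟩ := IH
      refine ⟨(X + X^m*(1+X)) * s + ((j:F[X])+1) * ((1+X)*(1+X)) * X^j, ?_⟩
      have h1 : ((j+1+1 : ℕ) : F[X]) = (j:F[X]) + 1 + 1 := by push_cast; ring
      have h2 : ((j+1 : ℕ) : F[X]) = (j:F[X]) + 1 := by push_cast; ring
      rw [Nat.add_sub_cancel] at hs ⊢
      rw [h1]
      rw [h2] at hs
      calc (X + X^m*(1+X))^(j+1+1) - ((X:F[X])^(j+1+1) + ((j:F[X])+1+1) * (X^m*(1+X)) * X^(j+1))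
          = (X + X^m*(1+X)) * ((X + X^m*(1+X))^(j+1) - ((X:F[X])^(j+1) + ((j:F[X])+1) * (X^m*(1+X)) * X^j)) + ((j:F[X])+1) * ((X^m*(1+X))*(X^m*(1+X))) * X^j := by
            ring
        _ = X^(2*m) * ((X + X^m*(1+X)) * s + ((j:F[X])+1) * ((1+X)*(1+X)) * X^j) := by
            rw [hs]; ring

lemma compB {F : Type} [CommRing F] (m : ℕ) (q : F[X]) :
    (X:F[X])^(2*m) ∣
      q.comp (X + X^m*(1+X)) - (q + X^m*(1+X) * derivative q) := by
  induction q using Polynomial.induction_on' with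
  | add p r hp hr =>
    obtain ⟨s1, h1⟩ := hp; obtain ⟨s2, h2⟩ := hr
    exact ⟨s1 + s2, by rw [add_comp]; rw [derivative_add]; linear_combination h1 + h2⟩
  | monomial k a =>
    obtain ⟨s, hs⟩ := compD (F := F) m k
    refine ⟨C a * s, ?_⟩
    rw [monomial_comp, derivative_monomial]
    have hm : (monomial k a : F[X]) = C a * X^k := by
      rw [C_mul_X_pow_eq_monomial]
    have hm2 : (monomial (k-1) (a * k) : F[X]) = C a * (k:F[X]) * X^(k-1) := by
      rw [← C_mul_X_pow_eq_monomial, C_mul, C_eq_natCast]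
    rw [hm, hm2]
    calc C a * (X + X^m*(1+X))^k - (C a * X^k + X^m*(1+X) * (C a * (k:F[X]) * X^(k-1)))
        = C a * ((X + X^m*(1+X))^k - ((X:F[X])^k + (k:F[X]) * (X^m*(1+X)) * X^(k-1))) := by ring
      _ = X^(2*m) * (C a * s) := by rw [hs]; ring

lemma key_coeff (F : Type) [Field F] [CharP F 2] (m : ℕ) (hm : 4 ≤ m) (hme : 2 ∣ m)
    (q : F[X]) (hq0 : q.coeff 0 = 1)
    (E0 : (X:F[X])^(2*m) ∣ q * (q + X^m*(1+X) * derivative q) - 1) :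
    ∀ j < m, (derivative q).coeff j = 0 := by
  have h2 : (2 : F[X]) = 0 := by
    have := CharP.cast_eq_zero F[X] 2
    exact_mod_cast this
  have hodd : ∀ j : ℕ, 2 ∣ (j+1) → (derivative q).coeff j = 0 := by
    intro j hj
    rw [coeff_derivative]
    have : ((j:F) + 1) = 0 := by
      have h' : ((j+1 : ℕ) : F) = 0 := (CharP.cast_eq_zero_iff F 2 (j+1)).mpr hj
      push_cast at h'; exact h'
    rw [this, mul_zero]
  by_contra hcon
  push_neg at hcon
  obtain ⟨j, hjm, hjne⟩ := hcon
  set g : F[X] := q - 1 with hgdef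
  have hg0 : g.coeff 0 = 0 := by simp [hgdef, hq0]
  have hdg : derivative g = derivative q := by simp [hgdef]
  have E : (X:F[X])^(2*m) ∣ g*g + (1+X)*(1+g)*((X:F[X])^m * derivative q) := by
    obtain ⟨s, hs⟩ := E0
    refine ⟨s, ?_⟩
    rw [hgdef]
    linear_combination hs - (q - 1) * h2
  have hg'ne : derivative q ≠ 0 := fun h0 => hjne (by simp [h0])
  have hgne : g ≠ 0 := fun h0 => hg'ne (by rw [← hdg, h0, derivative_zero])
  set K := (derivative q).natTrailingDegree with hKdef
  have hKne : (derivative q).coeff K ≠ 0 := by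
    rw [hKdef]
    exact fun h0 => hg'ne (coeff_natTrailingDegree_eq_zero.mp h0)
  set J := g.natTrailingDegree with hJdef
  have hJne : g.coeff J ≠ 0 := by
    rw [hJdef]
    exact fun h0 => hgne (coeff_natTrailingDegree_eq_zero.mp h0)
  have hKj : K ≤ j := natTrailingDegree_le_of_ne_zero hjne
  have hKm2 : K ≤ m - 2 := by
    rcases Nat.lt_or_ge K (m-1) with h | h
    · omega
    · have hK : K = m - 1 := by omega
      exfalso; exact hKne (hodd K (by omega))
  have hJ1 : 1 ≤ J := by
    rcases Nat.eq_zero_or_pos J with h | h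
    · exfalso; exact hJne (h ▸ hg0)
    · exact h
  obtain ⟨s, hs⟩ : (X:F[X])^J ∣ g :=
    X_pow_dvd_iff.mpr fun d hd => coeff_eq_zero_of_lt_natTrailingDegree (hJdef ▸ hd)
  obtain ⟨t, ht⟩ : (X:F[X])^K ∣ derivative q :=
    X_pow_dvd_iff.mpr fun d hd => coeff_eq_zero_of_lt_natTrailingDegree (hKdef ▸ hd)
  have hs0 : s.coeff 0 = g.coeff J := by
    have := coeff_X_pow_mul s J 0
    rw [← hs] at this; simpa using this.symm
  have ht0 : t.coeff 0 = (derivative q).coeff K := by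
    have := coeff_X_pow_mul t K 0
    rw [← ht] at this; simpa using this.symm
  set u : F[X] := (1+X)*(1+g) with hudef
  have hu0 : u.coeff 0 = 1 := by
    rw [hudef, mul_coeff_zero]
    simp [hg0]
  have E' : (X:F[X])^(2*m) ∣ (X:F[X])^(2*J) * (s*s) + (X:F[X])^(m+K) * (u*t) := by
    obtain ⟨w, hw⟩ := E
    refine ⟨w, ?_⟩
    rw [← hw, hs, ht, hudef]
    ring
  have hcoeff : ∀ r < 2*m,
      ((X:F[X])^(2*J) * (s*s) + (X:F[X])^(m+K) * (u*t)).coeff r = 0 :=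
    fun r hr => X_pow_dvd_iff.mp E' r hr
  have clow : ∀ (A : F[X]) (a r : ℕ), r < a → ((X:F[X])^a * A).coeff r = 0 :=
    fun A a r hr => X_pow_dvd_iff.mp (dvd_mul_right _ _) r hr
  have h1 : ¬ (2*J < m + K) := by
    intro hlt
    have hr : 2*J < 2*m := by omega
    have := hcoeff (2*J) hr
    rw [Polynomial.coeff_add, clow _ _ _ hlt] at this
    have hc : ((X:F[X])^(2*J) * (s*s)).coeff (2*J) = s.coeff 0 * s.coeff 0 := by
      have := coeff_X_pow_mul (s*s) (2*J) 0
      simpa [mul_coeff_zero] using this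
    rw [hc, add_zero] at this
    exact hJne (hs0 ▸ mul_self_eq_zero.mp this)
  have h2' : ¬ (m + K < 2*J) := by
    intro hlt
    have hr : m + K < 2*m := by omega
    have := hcoeff (m+K) hr
    rw [Polynomial.coeff_add, clow _ _ _ hlt, zero_add] at this
    have hc : ((X:F[X])^(m+K) * (u*t)).coeff (m+K) = u.coeff 0 * t.coeff 0 := by
      have := coeff_X_pow_mul (u*t) (m+K) 0
      simpa [mul_coeff_zero] using this
    rw [hc, hu0, one_mul] at this
    exact hKne (ht0 ▸ this)
  have heq : 2*J = m + K := by omega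
  have hKeven : 2 ∣ K := by omega
  have hJK : J ≤ K + 1 := by
    have hcast : ((K:F) + 1) = 1 := by
      have : ((K:ℕ) : F) = 0 := (CharP.cast_eq_zero_iff F 2 K).mpr hKeven
      rw [this, zero_add]
    have : g.coeff (K+1) ≠ 0 := by
      have hd := coeff_derivative g K
      rw [hdg, hcast, mul_one] at hd
      rw [← hd]; exact hKne
    exact natTrailingDegree_le_of_ne_zero this
  have hJval : J = m - 1 ∧ K = m - 2 := by omega
  have hfin := hcoeff (2*m-1) (by omega)
  have e1 : 2*m-1 = 1 + 2*J := by omega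
  have e2 : 2*m-1 = 1 + (m+K) := by omega
  have cA : ((X:F[X])^(2*J) * (s*s)).coeff (2*m-1) = 0 := by
    rw [e1, coeff_X_pow_mul, coeff_mul_one']
    rw [mul_comm (s.coeff 1) (s.coeff 0)]
    exact CharTwo.add_self_eq_zero _
  have ct1 : t.coeff 1 = 0 := by
    have h3 := coeff_X_pow_mul t K 1
    rw [← ht] at h3
    rw [← h3]
    have h4 : K + 1 = 1 + K := by omega
    rw [← h4]
    exact hodd (K+1) (by omega)
  have cg1 : g.coeff 1 = 0 := by
    apply coeff_eq_zero_of_lt_natTrailingDegree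
    rw [← hJdef]; omega
  have cu1 : u.coeff 1 = 1 := by
    rw [hudef, coeff_mul_one']
    simp [hg0, cg1, coeff_one]
  have cB : ((X:F[X])^(m+K) * (u*t)).coeff (2*m-1) = t.coeff 0 := by
    rw [e2, coeff_X_pow_mul, coeff_mul_one', hu0, cu1, ct1]; ring
  rw [Polynomial.coeff_add, cA, cB, zero_add] at hfin
  exact hKne (ht0 ▸ hfin)

/- ### The bridge between the group algebra and polynomials -/

set_option linter.unusedSectionVars false

section Bridge
variable (F : Type) [Field F] [CharP F 2] (n : ℕ)

/-- The generator `a` of the group inside the group algebra. -/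
noncomputable def aGA : GA F n := AddMonoidAlgebra.single (1 : ZMod (2^n)) (1:F)

/-- The algebra map `F[X] → FG`, `X ↦ a + 1`. -/
noncomputable def PhiGA : Polynomial F →ₐ[F] GA F n :=
  Polynomial.aeval (aGA F n + 1)

lemma charGA : CharP (GA F n) 2 :=
  charP_of_injective_algebraMap (algebraMap F (GA F n)).injective 2

lemma aGA_pow (k : ℕ) : (aGA F n)^k = AddMonoidAlgebra.single ((k : ZMod (2^n))) (1:F) := by
  rw [aGA, AddMonoidAlgebra.single_pow]
  congr 1
  · simp
  · simp

lemma PhiGA_single (i : ZMod (2^n)) (r : F) :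
    PhiGA F n (Polynomial.C r * (X+1)^(i.val)) = AddMonoidAlgebra.single i r := by
  haveI := charGA F n
  have hb1 : (aGA F n + 1) + 1 = aGA F n := by
    rw [add_assoc]
    simp [CharTwo.add_self_eq_zero]
  rw [map_mul, map_pow, map_add, map_one]
  simp only [PhiGA, Polynomial.aeval_X, Polynomial.aeval_C]
  rw [hb1, aGA_pow, ZMod.natCast_rightInverse i]
  rw [AddMonoidAlgebra.coe_algebraMap]
  simp only [Function.comp_apply, Algebra.algebraMap_self, RingHom.id_apply]
  rw [AddMonoidAlgebra.single_mul_single]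
  simp

lemma PhiGA_surj : Function.Surjective (PhiGA F n) := by
  intro y
  induction y using AddMonoidAlgebra.induction_on with
  | of g =>
    exact ⟨Polynomial.C 1 * (X+1)^(g.val), by rw [PhiGA_single]; rfl⟩
  | add f g hf hg =>
    obtain ⟨p, hp⟩ := hf; obtain ⟨q, hq⟩ := hg
    exact ⟨p + q, by rw [map_add, hp, hq]⟩
  | smul r f hf =>
    obtain ⟨p, hp⟩ := hf
    exact ⟨r • p, by rw [map_smul, hp]⟩

/-- The truncated polynomial ring. -/
noncomputable abbrev SQ := Polynomial F ⧸ Ideal.span {(X:Polynomial F)^(2^n)}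

lemma spanX_ne_top : Ideal.span {(X:Polynomial F)^(2^n)} ≠ ⊤ := by
  rw [Ne, Ideal.span_singleton_eq_top]
  intro hu
  have : IsUnit (X : Polynomial F) := by
    exact (isUnit_pow_iff (by positivity)).mp hu
  exact Polynomial.not_isUnit_X this

noncomputable instance : Nontrivial (SQ F n) :=
  Ideal.Quotient.nontrivial_iff.mpr (spanX_ne_top F n)

noncomputable def vQ : SQ F n := Ideal.Quotient.mk _ (X + 1)

lemma vQ_pow_N : (vQ F n)^(2^n) = 1 := by
  haveI : CharP (Polynomial F) 2 := inferInstance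
  have hx : ((X:Polynomial F) + 1)^(2^n) = X^(2^n) + 1 := by
    have := add_pow_char_pow (R := Polynomial F) (p := 2) (n := n) (x := (X:Polynomial F)) (y := 1)
    simpa using this
  rw [vQ, ← map_pow, hx, map_add, map_one]
  have : (Ideal.Quotient.mk (Ideal.span {(X:Polynomial F)^(2^n)})) (X^(2^n)) = 0 := by
    rw [Ideal.Quotient.eq_zero_iff_mem]
    exact Ideal.mem_span_singleton_self _
  rw [this, zero_add]

lemma vQ_pow_mod (k : ℕ) : (vQ F n)^(k % 2^n) = (vQ F n)^k := by
  conv_rhs => rw [← Nat.div_add_mod k (2^n)]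
  rw [pow_add, pow_mul, vQ_pow_N, one_pow, one_mul]

noncomputable def fQ : Multiplicative (ZMod (2^n)) →* SQ F n where
  toFun i := (vQ F n) ^ (Multiplicative.toAdd i).val
  map_one' := by
    haveI : NeZero (2^n) := ⟨by positivity⟩
    show (vQ F n) ^ (Multiplicative.toAdd (1 : Multiplicative (ZMod (2^n)))).val = 1
    have : Multiplicative.toAdd (1 : Multiplicative (ZMod (2^n))) = 0 := rfl
    rw [this, ZMod.val_zero, pow_zero]
  map_mul' := by
    intro i j
    haveI : NeZero (2^n) := ⟨by positivity⟩
    show (vQ F n) ^ (Multiplicative.toAdd (i * j)).val = _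
    have : Multiplicative.toAdd (i * j) = Multiplicative.toAdd i + Multiplicative.toAdd j := rfl
    rw [this, ZMod.val_add, vQ_pow_mod, pow_add]

/-- The algebra map `FG → F[X]/(X^(2^n))`, `a ↦ X + 1`. -/
noncomputable def PsiGA : GA F n →ₐ[F] SQ F n :=
  AddMonoidAlgebra.lift F (SQ F n) (ZMod (2^n)) (fQ F n)

lemma PsiGA_single (i : ZMod (2^n)) (r : F) :
    PsiGA F n (AddMonoidAlgebra.single i r) = r • (vQ F n)^(i.val) := by
  rw [PsiGA, AddMonoidAlgebra.lift_single]
  rfl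

lemma PsiPhi (hn : 0 < n) (q : Polynomial F) :
    PsiGA F n (PhiGA F n q) = Ideal.Quotient.mk (Ideal.span {(X:Polynomial F)^(2^n)}) q := by
  haveI : CharP (Polynomial F) 2 := inferInstance
  haveI : Fact (1 < 2^n) := ⟨Nat.one_lt_two_pow_iff.mpr (by omega)⟩
  have hext : (PsiGA F n).comp (PhiGA F n)
      = Ideal.Quotient.mkₐ F (Ideal.span {(X:Polynomial F)^(2^n)}) := by
    apply Polynomial.algHom_ext
    rw [AlgHom.comp_apply]
    have hPX : PhiGA F n X = aGA F n + 1 := by rw [PhiGA, Polynomial.aeval_X]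
    rw [hPX, map_add, map_one]
    have hPa : PsiGA F n (aGA F n) = vQ F n := by
      rw [aGA, PsiGA_single, ZMod.val_one, pow_one, one_smul]
    rw [hPa]
    have : (Ideal.Quotient.mkₐ F (Ideal.span {(X:Polynomial F)^(2^n)})) X
        = Ideal.Quotient.mk _ X := rfl
    rw [this, vQ]
    rw [← map_one (Ideal.Quotient.mk (Ideal.span {(X:Polynomial F)^(2^n)})), ← map_add]
    congr 1
    rw [add_assoc]
    simp [CharTwo.add_self_eq_zero]
  calc PsiGA F n (PhiGA F n q) = ((PsiGA F n).comp (PhiGA F n)) q := rfl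
    _ = Ideal.Quotient.mk _ q := by rw [hext]; rfl

lemma PhiGA_ker (hn : 0 < n) (q : Polynomial F) (h : PhiGA F n q = 0) :
    (X:Polynomial F)^(2^n) ∣ q := by
  have h1 := PsiPhi F n hn q
  rw [h, map_zero] at h1
  exact Ideal.mem_span_singleton.mp (Ideal.Quotient.eq_zero_iff_mem.mp h1.symm)

lemma PhiGA_Xpow : PhiGA F n ((X:Polynomial F)^(2^n)) = 0 := by
  haveI := charGA F n
  rw [map_pow]
  have hPX : PhiGA F n X = aGA F n + 1 := by rw [PhiGA, Polynomial.aeval_X]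
  rw [hPX]
  have hb : (aGA F n + 1)^(2^n) = (aGA F n)^(2^n) + 1 := by
    have := add_pow_char_pow (R := GA F n) (p := 2) (n := n) (x := aGA F n) (y := 1)
    simpa using this
  rw [hb, aGA_pow]
  rw [ZMod.natCast_self]
  rw [← AddMonoidAlgebra.one_def]
  exact CharTwo.add_self_eq_zero _

lemma PhiGA_dvd (q : Polynomial F) (h : (X:Polynomial F)^(2^n) ∣ q) : PhiGA F n q = 0 := by
  obtain ⟨s, rfl⟩ := h
  rw [map_mul, PhiGA_Xpow, zero_mul]

lemma aug_single (i : ZMod (2^n)) (r : F) : aug F n (AddMonoidAlgebra.single i r) = r := by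
  rw [aug]
  show ((AddMonoidAlgebra.lift F F (ZMod (2^n))) 1) (AddMonoidAlgebra.single i r) = r
  rw [AddMonoidAlgebra.lift_single]
  simp

lemma augPhi (q : Polynomial F) : aug F n (PhiGA F n q) = q.eval 0 := by
  haveI := charGA F n
  have hext : (aug F n).comp (PhiGA F n).toRingHom = Polynomial.evalRingHom 0 := by
    apply Polynomial.ringHom_ext
    · intro r
      simp only [RingHom.comp_apply, AlgHom.toRingHom_eq_coe, RingHom.coe_coe,
        Polynomial.coe_evalRingHom, Polynomial.eval_C]
      have : PhiGA F n (C r) = AddMonoidAlgebra.single 0 r := by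
        rw [PhiGA, Polynomial.aeval_C, AddMonoidAlgebra.coe_algebraMap]
        simp
      rw [this, aug_single]
    · simp only [RingHom.comp_apply, AlgHom.toRingHom_eq_coe, RingHom.coe_coe,
        Polynomial.coe_evalRingHom, Polynomial.eval_X]
      have hPX : PhiGA F n X = aGA F n + 1 := by rw [PhiGA, Polynomial.aeval_X]
      rw [hPX, map_add, map_one]
      rw [aGA, aug_single]
      exact CharTwo.add_self_eq_zero _
  calc aug F n (PhiGA F n q) = ((aug F n).comp (PhiGA F n).toRingHom) q := rfl
    _ = q.eval 0 := by rw [hext]; rfl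

end Bridge

/-- For `σ₄ : a ↦ a^{2^{n-1}+1}`: if a normalized unit `x` satisfies `x ⬝ x^{σ₄} = 1`,
then `x` is `σ₄`-symmetric and `x² = 1`. -/
theorem sigma4_unitary_symmetric (F : Type) [Field F] [Fintype F] (hF : CharP F 2)
    (n : ℕ) (hn : 2 < n) (x : (GA F n)ˣ) (hx : x ∈ V F n)
    (h : (x : GA F n) * sigma F n (2^(n-1) + 1) x = 1) :
    sigma F n (2^(n-1) + 1) x = (x : GA F n) ∧ (x : GA F n)^2 = 1 := by
  haveI := hF
  haveI : CharP (GA F n) 2 := charGA F n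
  haveI : CharP (Polynomial F) 2 := inferInstance
  have h2GA : (2 : GA F n) = 0 := by
    have := CharP.cast_eq_zero (GA F n) 2
    exact_mod_cast this
  have hNm : 2^n = 2*2^(n-1) := by
    conv_lhs => rw [show n = (n-1)+1 by omega, pow_succ]
    ring
  have hm4 : 4 ≤ 2^(n-1) := by
    calc (4:ℕ) = 2^2 := rfl
    _ ≤ 2^(n-1) := Nat.pow_le_pow_right (by norm_num) (by omega)
  have hme : 2 ∣ 2^(n-1) := by
    refine ⟨2^(n-2), ?_⟩
    conv_lhs => rw [show n-1 = (n-2)+1 by omega, pow_succ]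
    ring
  have hc : (2^(n-1) + 1 : ZMod (2^n)) = ((2^(n-1)+1 : ℕ) : ZMod (2^n)) := by push_cast; ring
  set c : ZMod (2^n) := 2^(n-1) + 1 with hcdef
  set w : Polynomial F := X + X^(2^(n-1))*(1+X) with hwdef
  -- sigma-Phi compatibility
  have hsig : ∀ p : Polynomial F, sigma F n c (PhiGA F n p) = PhiGA F n (p.comp w) := by
    have hext : (sigma F n c).comp (PhiGA F n).toRingHom
        = (PhiGA F n).toRingHom.comp (Polynomial.compRingHom w) := by
      apply Polynomial.ringHom_ext
      · intro r
        simp only [RingHom.comp_apply, AlgHom.toRingHom_eq_coe, RingHom.coe_coe,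
          Polynomial.coe_compRingHom_apply, Polynomial.C_comp]
        have hCr : PhiGA F n (C r) = AddMonoidAlgebra.single 0 r := by
          rw [PhiGA, Polynomial.aeval_C, AddMonoidAlgebra.coe_algebraMap]
          simp
        rw [hCr, sigma]
        simp [Finsupp.mapDomain_single]
      · simp only [RingHom.comp_apply, AlgHom.toRingHom_eq_coe, RingHom.coe_coe,
          Polynomial.coe_compRingHom_apply, Polynomial.X_comp]
        have hPX : PhiGA F n X = aGA F n + 1 := by rw [PhiGA, Polynomial.aeval_X]
        rw [hPX]
        have hsa : sigma F n c (aGA F n) = AddMonoidAlgebra.single c 1 := by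
          rw [sigma, aGA]
          simp [Finsupp.mapDomain_single]
        rw [map_add, map_one, hsa]
        rw [hwdef, map_add, map_mul, map_pow, map_add, map_one, hPX]
        have hbm : (aGA F n + 1)^(2^(n-1)) = (aGA F n)^(2^(n-1)) + 1 := by
          have := add_pow_char_pow (R := GA F n) (p := 2) (n := n-1) (x := aGA F n) (y := 1)
          simpa using this
        have hsc : AddMonoidAlgebra.single c (1:F) = (aGA F n)^(2^(n-1)+1) := by
          rw [aGA_pow, hc]
        rw [hsc, hbm]
        linear_combination (-(aGA F n + (aGA F n)^(2^(n-1)) + 1)) * h2GA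
    intro p
    calc sigma F n c (PhiGA F n p)
        = ((sigma F n c).comp (PhiGA F n).toRingHom) p := rfl
      _ = PhiGA F n (p.comp w) := by rw [hext]; rfl
  -- normalization
  have haugx : aug F n (x : GA F n) = 1 := by
    have hx' := hx
    rw [V, MonoidHom.mem_ker] at hx'
    have := congrArg (Units.val) hx'
    simpa using this
  obtain ⟨q, hq⟩ := PhiGA_surj F n (x : GA F n)
  have hq0 : q.coeff 0 = 1 := by
    rw [Polynomial.coeff_zero_eq_eval_zero, ← augPhi F n q, hq, haugx]
  -- transfer the unitary hypothesis
  have hmul : PhiGA F n (q * q.comp w - 1) = 0 := by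
    rw [map_sub, map_mul, map_one, ← hsig, hq, h, sub_self]
  have hdvd1 : (X:Polynomial F)^(2*2^(n-1)) ∣ q * q.comp w - 1 := by
    rw [← hNm]; exact PhiGA_ker F n (by omega) _ hmul
  have hcomp := compB (F := F) (2^(n-1)) q
  rw [← hwdef] at hcomp
  have E0 : (X:Polynomial F)^(2*2^(n-1)) ∣
      q * (q + X^(2^(n-1))*(1+X) * derivative q) - 1 := by
    obtain ⟨s1, h1⟩ := hdvd1
    obtain ⟨s2, h2⟩ := hcomp
    exact ⟨s1 - q*s2, by linear_combination h1 - q * h2⟩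
  have hvanish := key_coeff F (2^(n-1)) hm4 hme q hq0 E0
  -- X^(2m) divides X^m (1+X) q'
  have hdvd2 : (X:Polynomial F)^(2*2^(n-1)) ∣ X^(2^(n-1))*(1+X)*derivative q := by
    have hXm : (X:Polynomial F)^(2^(n-1)) ∣ (1+X)*derivative q := by
      rw [Polynomial.X_pow_dvd_iff]
      intro d hd
      rcases d with _ | d
      · rw [mul_coeff_zero]
        rw [hvanish 0 (by omega), mul_zero]
      · rw [add_mul, one_mul, Polynomial.coeff_add, coeff_X_mul]
        rw [hvanish (d+1) hd, hvanish d (by omega), add_zero]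
    obtain ⟨t, ht⟩ := hXm
    exact ⟨t, by rw [mul_assoc, ht, ← mul_assoc, ← pow_add, ← two_mul]⟩
  -- conclusion
  have hsym : sigma F n c (x : GA F n) = x := by
    have hdvd3 : (X:Polynomial F)^(2^n) ∣ (q.comp w - q) := by
      rw [hNm]
      obtain ⟨s2, h2⟩ := hcomp
      obtain ⟨s3, h3⟩ := hdvd2
      exact ⟨s2 + s3, by linear_combination h2 + h3⟩
    have h4 := PhiGA_dvd F n _ hdvd3
    rw [map_sub] at h4
    have h5 : PhiGA F n (q.comp w) = PhiGA F n q := sub_eq_zero.mp h4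
    calc sigma F n c (x : GA F n) = sigma F n c (PhiGA F n q) := by rw [hq]
      _ = PhiGA F n (q.comp w) := hsig q
      _ = (x : GA F n) := by rw [h5, hq]
  refine ⟨hsym, ?_⟩
  rw [pow_two]
  calc (x : GA F n) * x = (x : GA F n) * sigma F n c x := by rw [hsym]
    _ = 1 := h
end

section
/- Let n > 2, G = C_{2^n} = ⟨a⟩, F a finite field of characteristic 2, and σ₄ the involution induced by a ↦ a^{2^{n-1}+1}. For x = Σ_{i=0}^{2^n-1} α_i a^i ∈ FG, in the product x·x^{σ₄} the coefficients of a^{2j+1} and a^{2j+1+2^{n-1}} coincide for every 0 ≤ j < 2^{n-1}; consequently the sum of the coefficients of the odd-exponent terms of x·x^{σ₄} is zero. -/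
open AddMonoidAlgebra

lemma sigma_apply {F : Type} [Field F] {n : ℕ} (c : ZMod (2^n)) (hc : c * c = 1)
    (x : GA F n) (t : ZMod (2^n)) : (sigma F n c x).coeff t = x.coeff (c * t) := by
  have hinj : Function.Injective (fun s : ZMod (2^n) => c * s) := by
    intro a b hab
    have := congrArg (fun t => c * t) hab
    simpa [← mul_assoc, hc] using this
  have heq : (sigma F n c x).coeff = Finsupp.mapDomain (fun s : ZMod (2^n) => c * s) x.coeff := rfl
  have ht : t = c * (c * t) := by rw [← mul_assoc, hc, one_mul]
  nth_rewrite 1 [ht]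
  rw [heq, Finsupp.mapDomain_apply hinj x.coeff (c*t)]

lemma conv_apply {F : Type} [Field F] {n : ℕ} (f g : GA F n) (k : ZMod (2^n)) :
    (f * g).coeff k = ∑ i : ZMod (2^n), f.coeff i * g.coeff (k - i) := by
  classical
  rw [AddMonoidAlgebra.mul_apply_antidiagonal f g k
    (Finset.univ.map ⟨fun i : ZMod (2^n) => (i, k - i),
      fun a b h => by simpa using congrArg Prod.fst h⟩) ?_]
  · rw [Finset.sum_map]; rfl
  · intro p
    simp only [Finset.mem_map, Finset.mem_univ, Function.Embedding.coeFn_mk, true_and]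
    constructor
    · rintro ⟨i, rfl⟩; show i + (k - i) = k; simp
    · intro hp
      exact ⟨p.1, Prod.ext rfl (show k - p.1 = p.2 by rw [← hp]; simp)⟩

/-- For `σ₄ : a ↦ a^{2^{n-1}+1}`: in `x ⬝ x^{σ₄}`, the coefficients of `a^{2j+1}`
and `a^{2j+1+2^{n-1}}` coincide, and the sum of all odd-exponent coefficients is zero. -/
theorem sigma4_odd_coefficients (F : Type) [Field F] [Fintype F] (hF : CharP F 2)
    (n : ℕ) (hn : 2 < n) (x : GA F n) :
    (∀ j : ℕ, j < 2^(n-1) →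
      (x * sigma F n (2^(n-1) + 1) x).coeff ((2*j+1 : ℕ) : ZMod (2^n)) =
        (x * sigma F n (2^(n-1) + 1) x).coeff ((2*j+1+2^(n-1) : ℕ) : ZMod (2^n))) ∧
    ∑ j ∈ Finset.range (2^(n-1)),
      (x * sigma F n (2^(n-1) + 1) x).coeff ((2*j+1 : ℕ) : ZMod (2^n)) = 0 := by
  classical
  haveI := hF
  set H : ZMod (2^n) := 2^(n-1) with hHdef
  set c : ZMod (2^n) := H + 1 with hcdef
  have hpow0 : (2 : ZMod (2^n))^n = 0 := by
    have := ZMod.natCast_self (2^n)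
    push_cast at this
    exact this
  have hH2 : H + H = 0 := by
    have : H + H = (2:ZMod (2^n))^n := by
      rw [hHdef, ← two_mul, ← pow_succ']
      congr 1
      omega
    rw [this, hpow0]
  have hHH : H * H = 0 := by
    have : H * H = (2:ZMod (2^n))^n * 2^(n-2) := by
      rw [hHdef, ← pow_add, ← pow_add]
      congr 1
      omega
    rw [this, hpow0, zero_mul]
  have hc2 : c * c = 1 := by
    rw [hcdef]
    have : (H+1)*(H+1) = H*H + (H + H) + 1 := by ring
    rw [this, hHH, hH2, zero_add, zero_add]
  have hcH : c * H = H := by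
    rw [hcdef, add_mul, one_mul, hHH, zero_add]
  have hck : ∀ j : ℕ, c * ((2*j+1 : ℕ) : ZMod (2^n)) = ((2*j+1 : ℕ) : ZMod (2^n)) + H := by
    intro j
    have h1 : ((2*j+1 : ℕ) : ZMod (2^n)) = 2 * (j : ZMod (2^n)) + 1 := by push_cast; ring
    rw [hcdef, h1]
    have h2 : (H + 1) * (2 * (j:ZMod (2^n)) + 1) =
        (H + H) * (j:ZMod (2^n)) + (2 * (j:ZMod (2^n)) + 1) + H := by ring
    rw [h2, hH2, zero_mul, zero_add]
  -- main coefficient identity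
  have key : ∀ k : ZMod (2^n), c * k = k + H →
      (x * sigma F n c x).coeff k = (x * sigma F n c x).coeff (k + H) := by
    intro k hk
    rw [conv_apply, conv_apply]
    simp only [sigma_apply (F := F) (n := n) c hc2 x]
    refine Fintype.sum_bijective (fun i => c * (k - i)) ?_ _ _ ?_
    · rw [← Finite.injective_iff_bijective]
      intro a b hab
      have := congrArg (fun t => c * t) hab
      simp only [← mul_assoc, hc2, one_mul] at this
      exact (sub_right_injective this)
    · intro i
      have harg : c * (k + H - c * (k - i)) = i := by
        have : c * (k + H - c * (k - i)) = c * k + c * H - (c*c) * (k - i) := by ring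
        rw [this, hc2, hk, hcH, one_mul]
        have : k + H + H - (k - i) = (H + H) + i := by ring
        rw [this, hH2, zero_add]
      rw [harg]
      ring
  have hcast : ∀ j : ℕ, ((2*j+1+2^(n-1) : ℕ) : ZMod (2^n)) = ((2*j+1 : ℕ) : ZMod (2^n)) + H := by
    intro j
    rw [hHdef]; push_cast; ring
  constructor
  · intro j _
    rw [hcast j]
    exact key _ (hck j)
  · have hsplit : 2^(n-1) = 2^(n-2) + 2^(n-2) := by
      have h1 : n - 1 = (n-2) + 1 := by omega
      rw [h1, pow_succ]; ring
    rw [hsplit, Finset.sum_range_add, ← Finset.sum_add_distrib]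
    refine Finset.sum_eq_zero fun j _ => ?_
    have hnat : 2*(2^(n-2)+j)+1 = 2*j+1+2^(n-1) := by
      have : 2^(n-1) = 2 * 2^(n-2) := by
        rw [← pow_succ']
        congr 1
        omega
      omega
    rw [hnat, hcast j, ← key _ (hck j), CharTwo.add_self_eq_zero]
end

section
/- Let n > 2, G = C_{2^n} = ⟨a⟩, F a finite field of characteristic 2, and σ₄ the involution induced by a ↦ a^{2^{n-1}+1}. For x = Σ_{i=0}^{2^n-1} α_i a^i, the coefficient of a^{4t} in x·x^{σ₄} equals (α_{2t} + α_{2t+2^{n-1}})², where indices are taken modulo 2^n. -/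
open AddMonoidAlgebra

lemma aux_pow2_zero (n m : ℕ) (h : n ≤ m) : (2 : ZMod (2^n))^m = 0 := by
  have h1 : ((2^n : ℕ) : ZMod (2^n)) = 0 := ZMod.natCast_self _
  have h2 : ((2:ℕ) : ZMod (2^n)) = 2 := by push_cast; ring
  calc (2 : ZMod (2^n))^m = 2^(n + (m - n)) := by rw [Nat.add_sub_cancel' h]
    _ = 2^n * 2^(m-n) := pow_add _ _ _
    _ = 0 := by rw [← h2, ← Nat.cast_pow, h1, zero_mul]

lemma aux_two_mul_eq_zero (n : ℕ) (hn : 1 ≤ n) (z : ZMod (2^n)) :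
    2 * z = 0 ↔ z = 0 ∨ z = 2^(n-1) := by
  haveI : NeZero ((2:ℕ)^n) := ⟨pow_ne_zero n two_ne_zero⟩
  constructor
  · intro h
    have hv : ((z.val : ℕ) : ZMod (2^n)) = z := ZMod.natCast_rightInverse z
    have hdvd : 2^n ∣ 2 * z.val := by
      have h0 : ((2 * z.val : ℕ) : ZMod (2^n)) = 0 := by push_cast [hv]; exact h
      exact (ZMod.natCast_eq_zero_iff _ _).mp h0
    have hdvd2 : 2^(n-1) ∣ z.val := by
      have hrw : (2:ℕ)^n = 2 * 2^(n-1) := by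
        rw [← pow_succ']; congr 1; omega
      have hdvd' : 2 * 2^(n-1) ∣ 2 * z.val := hrw ▸ hdvd
      exact (Nat.mul_dvd_mul_iff_left (by norm_num : 0 < 2)).mp hdvd'
    obtain ⟨k, hk⟩ := hdvd2
    have hlt : z.val < 2^n := ZMod.val_lt z
    have hk2 : k < 2 := by
      by_contra hk2
      push_neg at hk2
      have : (2:ℕ)^n ≤ 2^(n-1) * k := by
        calc (2:ℕ)^n = 2^(n-1) * 2 := by rw [← pow_succ]; congr 1; omega
          _ ≤ 2^(n-1) * k := Nat.mul_le_mul_left _ hk2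
      omega
    interval_cases k
    · left; rw [← hv, hk]; simp
    · right; rw [← hv, hk]; push_cast; ring
  · rintro (rfl | rfl)
    · simp
    · have h1 : (2:ZMod (2^n)) * 2^(n-1) = 2^n := by rw [← pow_succ']; congr 1; omega
      rw [h1]; exact aux_pow2_zero n n le_rfl

/-- For `σ₄ : a ↦ a^{2^{n-1}+1}`: the coefficient of `a^{4t}` in `x ⬝ x^{σ₄}`
equals `(α_{2t} + α_{2t+2^{n-1}})²`, indices modulo `2^n`. -/
theorem sigma4_coeff_of_four_t (F : Type) [Field F] [Fintype F] (hF : CharP F 2)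
    (n : ℕ) (hn : 2 < n) (x : GA F n) (t : ℕ) :
    (x * sigma F n (2^(n-1) + 1) x).coeff ((4*t : ℕ) : ZMod (2^n)) =
      (x.coeff ((2*t : ℕ) : ZMod (2^n)) + x.coeff ((2*t + 2^(n-1) : ℕ) : ZMod (2^n)))^2 := by
  classical
  haveI : NeZero ((2:ℕ)^n) := ⟨pow_ne_zero n two_ne_zero⟩
  haveI := hF
  set e : ZMod (2^n) := 2^(n-1) with he
  set c : ZMod (2^n) := 2^(n-1) + 1 with hcdef
  have hc : c = e + 1 := by rw [hcdef, he]
  set s : ZMod (2^n) := (t : ZMod (2^n)) with hs0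
  -- basic arithmetic facts
  have h2e : 2 * e = 0 := by
    rw [he]
    have h1 : (2:ZMod (2^n)) * 2^(n-1) = 2^n := by rw [← pow_succ']; congr 1; omega
    rw [h1]; exact aux_pow2_zero n n le_rfl
  have hee : e * e = 0 := by
    rw [he, ← pow_add]; exact aux_pow2_zero n _ (by omega)
  have h2n2e : (2:ZMod (2^n))^(n-2) * e = 0 := by
    rw [he, ← pow_add]; exact aux_pow2_zero n _ (by omega)
  have hpowe : (2:ZMod (2^n))^(n-2) * 2 = e := by
    rw [he, ← pow_succ]; congr 1; omega
  have hcc : c * c = 1 := by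
    have h : c * c = e*e + 2*e + 1 := by rw [hc]; ring
    rw [h, hee, h2e]; ring
  have hce : c * e = e := by
    have h : c * e = e*e + e := by rw [hc]; ring
    rw [h, hee, zero_add]
  have hc2s : c * (2*s) = 2*s := by
    have h : c * (2*s) = 2*s + (2*e)*s := by rw [hc]; ring
    rw [h, h2e, zero_mul, add_zero]
  have hc4s : c * (4*s) = 4*s := by
    have h : c * (4*s) = 4*s + 2*((2*e)*s) := by rw [hc]; ring
    rw [h, h2e, zero_mul, mul_zero, add_zero]
  -- the involution
  have hphiphi : ∀ i : ZMod (2^n), 4*s - c*(4*s - c*i) = i := by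
    intro i
    calc 4*s - c*(4*s - c*i) = 4*s - (c*(4*s) - (c*c)*i) := by ring
      _ = i := by rw [hc4s, hcc]; ring
  have hfix : ∀ i : ZMod (2^n), 4*s - c*i = i ↔ (i = 2*s ∨ i = 2*s + e) := by
    intro i
    constructor
    · intro h
      have hi : i + c*i = 4*s := by linear_combination -h
      have h1 : (2 + e) * (i - 2*s) = 0 := by
        linear_combination hi - i * hc - s * h2e
      have h2 : e * (i - 2*s) = 0 := by
        linear_combination (2:ZMod (2^n))^(n-2) * h1 - (i-2*s) * hpowe - (i-2*s) * h2n2e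
      have h3 : 2 * (i - 2*s) = 0 := by linear_combination h1 - h2
      rcases (aux_two_mul_eq_zero n (by omega) _).mp h3 with h4 | h4
      · left; linear_combination h4
      · right; rw [← he] at h4; linear_combination h4
    · rintro (rfl | rfl)
      · linear_combination -hc2s
      · linear_combination -hc2s - hce - h2e
  -- evaluation of sigma
  have hsig : ∀ k : ZMod (2^n), (sigma F n c x).coeff k = x.coeff (c * k) := by
    intro k
    have hinv : Function.Involutive (fun i : ZMod (2^n) => c * i) := by
      intro i
      simp only [← mul_assoc, hcc, one_mul]
    have hinj : Function.Injective (fun i : ZMod (2^n) => c * i) := hinv.injective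
    have hk : k = c * (c * k) := (hinv (k)).symm
    have hmd : (sigma F n c x).coeff = Finsupp.mapDomain (fun i : ZMod (2^n) => c * i) x.coeff := by
      rfl
    rw [hmd]
    conv_lhs => rw [hk]
    exact Finsupp.mapDomain_apply hinj x.coeff (c*k)
  -- the product coefficient as a sum
  have hcast : ((4*t : ℕ) : ZMod (2^n)) = 4*s := by rw [hs0]; push_cast; ring
  rw [hcast]
  have hmul : (x * sigma F n c x).coeff (4*s) = ∑ i : ZMod (2^n), x.coeff i * x.coeff (4*s - c*i) := by
    rw [AddMonoidAlgebra.coeff_mul_antidiag x (sigma F n c x) (4*s)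
      (Finset.univ.map ⟨fun i : ZMod (2^n) => (i, 4*s - i),
        fun a b hab => congrArg Prod.fst hab⟩) ?_]
    · rw [Finset.sum_map]
      refine Finset.sum_congr rfl (fun i _ => ?_)
      show x.coeff i * (sigma F n c x).coeff (4*s - i) = _
      rw [hsig]
      have harg : c * (4*s - i) = 4*s - c*i := by linear_combination hc4s
      rw [harg]
    · intro p
      simp only [Finset.mem_map, Finset.mem_univ, Function.Embedding.coeFn_mk, true_and]
      constructor
      · rintro ⟨i, rfl⟩; exact add_sub_cancel _ _
      · intro hp
        exact ⟨p.1, Prod.ext rfl (by rw [← hp]; exact add_sub_cancel_left _ _)⟩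
  rw [hmul]
  -- split off fixed points
  set P : Finset (ZMod (2^n)) := {2*s, 2*s+e} with hP
  have hene : e ≠ 0 := by
    rw [he]; intro h0
    have h0' : ((2^(n-1):ℕ) : ZMod (2^n)) = 0 := by push_cast; exact h0
    have hd := (ZMod.natCast_eq_zero_iff _ _).mp h0'
    have hle := Nat.le_of_dvd (by positivity) hd
    have h2 : (2:ℕ)^(n-1) < 2^n := Nat.pow_lt_pow_right one_lt_two (by omega)
    omega
  have hne : (2*s : ZMod (2^n)) ≠ 2*s + e := by
    intro h
    exact hene (left_eq_add.mp h)
  have hsplit : ∑ i : ZMod (2^n), x.coeff i * x.coeff (4*s - c*i)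
      = ∑ i ∈ Finset.univ \ P, x.coeff i * x.coeff (4*s - c*i) + ∑ i ∈ P, x.coeff i * x.coeff (4*s - c*i) :=
    (Finset.sum_sdiff (Finset.subset_univ P)).symm
  have hnotP : ∀ a : ZMod (2^n), a ∈ Finset.univ \ P → a ≠ 2*s ∧ a ≠ 2*s + e := by
    intro a ha
    rw [Finset.mem_sdiff, hP, Finset.mem_insert, Finset.mem_singleton] at ha
    exact ⟨fun h => ha.2 (Or.inl h), fun h => ha.2 (Or.inr h)⟩
  have hzero : ∑ i ∈ Finset.univ \ P, x.coeff i * x.coeff (4*s - c*i) = 0 := by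
    refine Finset.sum_involution (fun i _ => 4*s - c*i) ?_ ?_ ?_ ?_
    · intro a ha
      have : x.coeff (4*s - c*a) * x.coeff (4*s - c*(4*s - c*a)) = x.coeff a * x.coeff (4*s - c*a) := by
        rw [hphiphi]; ring
      rw [this]
      exact CharTwo.add_self_eq_zero _
    · intro a ha _
      intro h
      exact (hnotP a ha).1 (((hfix a).mp h).resolve_right (fun h2 => (hnotP a ha).2 h2))
    · intro a ha
      rw [Finset.mem_sdiff]
      refine ⟨Finset.mem_univ _, ?_⟩
      show 4*s - c*a ∉ P
      rw [hP]
      rw [Finset.mem_insert, Finset.mem_singleton]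
      rintro (h | h)
      · have : a = 2*s := by
          have := hphiphi a
          rw [h] at this
          rw [← this]
          exact ((hfix (2*s)).mpr (Or.inl rfl))
        exact (hnotP a ha).1 this
      · have : a = 2*s + e := by
          have := hphiphi a
          rw [h] at this
          rw [← this]
          exact ((hfix (2*s+e)).mpr (Or.inr rfl))
        exact (hnotP a ha).2 this
    · intro a ha
      exact hphiphi a
  have hpair : ∑ i ∈ P, x.coeff i * x.coeff (4*s - c*i)
      = x.coeff (2*s) * x.coeff (4*s - c*(2*s)) + x.coeff (2*s+e) * x.coeff (4*s - c*(2*s+e)) :=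
    Finset.sum_pair hne
  have hv1 : 4*s - c*(2*s) = 2*s := by linear_combination -hc2s
  have hv2 : 4*s - c*(2*s+e) = 2*s + e := by linear_combination -hc2s - hce - h2e
  have hcast1 : ((2*t : ℕ) : ZMod (2^n)) = 2*s := by rw [hs0]; push_cast; ring
  have hcast2 : ((2*t + 2^(n-1) : ℕ) : ZMod (2^n)) = 2*s + e := by
    rw [hs0, he]; push_cast; ring
  rw [hsplit, hzero, hpair, hv1, hv2, hcast1, hcast2, zero_add, CharTwo.add_sq,
    ← sq, ← sq]
end

section
/- Let G = C_{2^n} = ⟨a⟩ with n > 2, F a finite field of characteristic 2, and σ₃ the involution induced by a ↦ a^{2^{n-1}-1}. Then the intersection of V_{σ₃}(FG) with G (viewed inside V(FG)) is the subgroup ⟨a²⟩. In particular the exponent of V_{σ₃}(FG) is at least 2^{n-1}. -/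
open AddMonoidAlgebra

/-- The group element `a^i` as a unit of the group algebra. -/
noncomputable def aPow (F : Type) [Field F] (n : ℕ) (i : ZMod (2^n)) : (GA F n)ˣ where
  val := AddMonoidAlgebra.single i 1
  inv := AddMonoidAlgebra.single (-i) 1
  val_inv := by rw [AddMonoidAlgebra.single_mul_single]; simp [AddMonoidAlgebra.one_def]
  inv_val := by rw [AddMonoidAlgebra.single_mul_single]; simp [AddMonoidAlgebra.one_def]

/-- The canonical embedding of the cyclic group `C_{2^n}` into the units of `FC_{2^n}`. -/
noncomputable def aHom (F : Type) [Field F] (n : ℕ) :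
    Multiplicative (ZMod (2^n)) →* (GA F n)ˣ where
  toFun i := aPow F n i.toAdd
  map_one' := by ext; simp [aPow, AddMonoidAlgebra.one_def]
  map_mul' i j := by ext; simp [aPow, AddMonoidAlgebra.single_mul_single, add_comm]

section Aux

variable (F : Type) [Field F] (n : ℕ)

lemma aPow_val (i : ZMod (2^n)) : (aPow F n i).val = AddMonoidAlgebra.single i (1:F) := rfl

lemma aPow_pow (i : ZMod (2^n)) (k : ℕ) : (aPow F n i)^k = aPow F n (k • i) := by
  apply Units.ext
  rw [Units.val_pow_eq_pow_val, aPow_val, aPow_val, AddMonoidAlgebra.single_pow, one_pow]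

lemma aPow_inj : Function.Injective (aPow F n) := by
  intro i j hij
  have h : AddMonoidAlgebra.single i (1:F) = AddMonoidAlgebra.single j 1 :=
    congrArg Units.val hij
  exact AddMonoidAlgebra.single_left_injective one_ne_zero h

lemma aug_aPow (i : ZMod (2^n)) : aug F n (aPow F n i).val = 1 := by
  show aug F n (AddMonoidAlgebra.single i (1:F)) = 1
  simp [aug, AddMonoidAlgebra.lift_single]

lemma sigma_aPow (c i : ZMod (2^n)) :
    sigma F n c (aPow F n i).val = (aPow F n (c*i)).val := by
  show AddMonoidAlgebra.mapDomainRingHom F (AddMonoidHom.mulLeft c)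
      (AddMonoidAlgebra.single i (1:F)) = AddMonoidAlgebra.single (c*i) 1
  simp [AddMonoidAlgebra.mapDomainRingHom, Finsupp.mapDomain_single]

lemma aPow_mem_Vsig_iff (c i : ZMod (2^n)) :
    aPow F n i ∈ Vsig F n c ↔ (c+1)*i = 0 := by
  have hV : aPow F n i ∈ V F n := by
    rw [V, MonoidHom.mem_ker]
    ext
    simpa using aug_aPow F n i
  constructor
  · intro hmem
    rw [Vsig, Subgroup.mem_inf] at hmem
    obtain ⟨-, h2⟩ := hmem
    rw [MonoidHom.mem_ker, MonoidHom.mul_apply, MonoidHom.id_apply] at h2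
    have h2' : (Units.map (sigma F n c).toMonoidHom (aPow F n i)).val * (aPow F n i).val
        = (1 : GA F n) := congrArg Units.val h2
    rw [Units.coe_map] at h2'
    rw [show ((sigma F n c).toMonoidHom : (GA F n) →* GA F n) (aPow F n i).val
        = (aPow F n (c*i)).val from sigma_aPow F n c i] at h2'
    rw [aPow_val, aPow_val, AddMonoidAlgebra.single_mul_single, one_mul,
      AddMonoidAlgebra.one_def] at h2'
    have := AddMonoidAlgebra.single_left_injective (M := ZMod (2^n)) (one_ne_zero (α := F)) h2'
    rw [← this]; ring
  · intro h
    rw [Vsig, Subgroup.mem_inf]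
    refine ⟨hV, ?_⟩
    rw [MonoidHom.mem_ker, MonoidHom.mul_apply, MonoidHom.id_apply]
    apply Units.ext
    rw [Units.val_mul, Units.coe_map]
    rw [show ((sigma F n c).toMonoidHom : (GA F n) →* GA F n) (aPow F n i).val
        = (aPow F n (c*i)).val from sigma_aPow F n c i]
    rw [aPow_val, aPow_val, AddMonoidAlgebra.single_mul_single, one_mul,
      show c*i + i = (c+1)*i by ring, h, Units.val_one, AddMonoidAlgebra.one_def]

end Aux

/-- For `σ₃ : a ↦ a^{2^{n-1}-1}`: the intersection of `V_{σ₃}(FG)` with `G` (viewed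
inside `V(FG)`) is `⟨a²⟩`; in particular the exponent of `V_{σ₃}(FG)` is at
least `2^{n-1}`. -/
theorem sigma3_unitary_meet_group (F : Type) [Field F] [Fintype F] (hF : CharP F 2)
    (n : ℕ) (hn : 2 < n) :
    Vsig F n (2^(n-1) - 1) ⊓ (aHom F n).range = Subgroup.zpowers (aPow F n 2) ∧
      2^(n-1) ≤ Monoid.exponent ↥(Vsig F n (2^(n-1) - 1)) := by
  have hn1 : 1 ≤ n := by omega
  haveI : NeZero (2^n) := ⟨by positivity⟩
  have hc1 : ((2:ZMod (2^n))^(n-1) - 1) + 1 = 2^(n-1) := by ring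
  have h2n : ((2:ZMod (2^n)))^(n-1) * 2 = 0 := by
    have h0 : (((2^n : ℕ)) : ZMod (2^n)) = 0 := ZMod.natCast_self _
    push_cast at h0
    calc (2:ZMod (2^n))^(n-1)*2 = 2^(n-1+1) := by rw [pow_succ]
    _ = 2^n := by rw [Nat.sub_add_cancel hn1]
    _ = 0 := h0
  have mem2 : aPow F n 2 ∈ Vsig F n (2^(n-1) - 1) := by
    rw [aPow_mem_Vsig_iff, hc1]
    exact h2n
  have memrange : aPow F n 2 ∈ (aHom F n).range :=
    ⟨Multiplicative.ofAdd (2 : ZMod (2^n)), rfl⟩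
  have haHom_inj : Function.Injective (aHom F n) := by
    intro x y h
    have := aPow_inj F n h
    exact Multiplicative.toAdd.injective this
  constructor
  · apply le_antisymm
    · intro u hu
      rw [Subgroup.mem_inf] at hu
      obtain ⟨huV, m, rfl⟩ := hu
      have hdef : aHom F n m = aPow F n m.toAdd := rfl
      rw [hdef] at huV ⊢
      rw [aPow_mem_Vsig_iff, hc1] at huV
      set i := m.toAdd with hi0
      have hi : ((i.val : ℕ) : ZMod (2^n)) = i := ZMod.natCast_zmod_val i
      have hcast : (((2^(n-1) * i.val : ℕ)) : ZMod (2^n)) = 0 := by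
        push_cast [hi]
        exact huV
      have hdvd : 2^n ∣ 2^(n-1) * i.val :=
        (ZMod.natCast_eq_zero_iff _ _).mp hcast
      have hsplit : (2:ℕ)^n = 2^(n-1) * 2 := by
        rw [← pow_succ, Nat.sub_add_cancel hn1]
      have hdvd2 : (2:ℕ)^(n-1)*2 ∣ 2^(n-1) * i.val := by rw [← hsplit]; exact hdvd
      have h2dvd : 2 ∣ i.val :=
        (Nat.mul_dvd_mul_iff_left (Nat.pow_pos (n := n-1) two_pos)).mp hdvd2
      obtain ⟨j, hj⟩ := h2dvd
      refine ⟨(j : ℤ), ?_⟩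
      show (aPow F n 2) ^ ((j:ℕ):ℤ) = aPow F n i
      rw [zpow_natCast, aPow_pow]
      congr 1
      rw [← hi, hj]
      push_cast
      rw [nsmul_eq_mul]
      ring
    · rw [Subgroup.zpowers_le]
      exact Subgroup.mem_inf.mpr ⟨mem2, memrange⟩
  · classical
    haveI : Fintype (ZMod (2^n)) := ZMod.fintype _
    haveI : Fintype (GA F n) := Fintype.ofEquiv _ AddMonoidAlgebra.coeffEquiv.symm
    set x : ↥(Vsig F n (2^(n-1) - 1)) := ⟨aPow F n 2, mem2⟩ with hx
    have h1 : orderOf ((Vsig F n (2^(n-1) - 1)).subtype x) = orderOf x :=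
      orderOf_injective _ (Subgroup.subtype_injective _) x
    have hsub : (Vsig F n (2^(n-1) - 1)).subtype x = aPow F n 2 := rfl
    have h2 : orderOf (aPow F n (2 : ZMod (2^n)))
        = orderOf (Multiplicative.ofAdd (2 : ZMod (2^n))) :=
      orderOf_injective (aHom F n) haHom_inj _
    have h3 : orderOf (Multiplicative.ofAdd (2 : ZMod (2^n)))
        = addOrderOf (2 : ZMod (2^n)) := orderOf_ofAdd_eq_addOrderOf _
    have h4 : addOrderOf (2 : ZMod (2^n)) = 2^(n-1) := by
      have : ((2:ℕ) : ZMod (2^n)) = (2 : ZMod (2^n)) := by push_cast; ring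
      rw [← this, ZMod.addOrderOf_coe 2 (by positivity),
        Nat.gcd_eq_right (dvd_pow_self 2 (by omega))]
      have h5 := Nat.pow_div (x := 2) hn1 two_pos
      simpa using h5
    have horder : orderOf x = 2^(n-1) := by
      rw [← h1, hsub, h2, h3, h4]
    rw [← horder]
    exact Nat.le_of_dvd (Nat.pos_of_ne_zero Monoid.exponent_ne_zero_of_finite)
      (Monoid.order_dvd_exponent x)
end

section
/- Let F be a finite field of characteristic 2 and n > 2. The three unitary subgroups of FC_{2^n} corresponding to the three involutory automorphisms of C_{2^n} (a ↦ a^{-1}, a ↦ a^{2^{n-1}-1}, a ↦ a^{2^{n-1}+1}) are pairwise non-isomorphic groups. -/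
open AddMonoidAlgebra

namespace UnitaryAux

variable {F : Type} [Field F] {n : ℕ}

lemma sigma_apply' (c : ZMod (2^n)) (x : GA F n) :
    sigma F n c x = AddMonoidAlgebra.mapDomain (fun i => c * i) x := by
  show AddMonoidAlgebra.mapDomainRingHom F (AddMonoidHom.mulLeft c) x = _
  simp [AddMonoidAlgebra.mapDomainRingHom, AddMonoidHom.coe_mulLeft]

lemma sigma_coeff (c : ZMod (2^n)) (hc : c * c = 1) (x : GA F n) (a : ZMod (2^n)) :
    (sigma F n c x).coeff a = x.coeff (c * a) := by
  have hinv : ∀ b : ZMod (2^n), c * (c * b) = b := fun b => by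
    rw [← mul_assoc, hc, one_mul]
  have hinj : Function.Injective (fun i : ZMod (2^n) => c * i) :=
    Function.LeftInverse.injective (g := fun i : ZMod (2^n) => c * i) hinv
  conv_lhs => rw [sigma_apply', AddMonoidAlgebra.coeff_mapDomain, ← hinv a]
  exact Finsupp.mapDomain_apply hinj x.coeff (c * a)

lemma aug_single (j : ZMod (2^n)) (b : F) : aug F n (AddMonoidAlgebra.single j b) = b := by
  show ((AddMonoidAlgebra.lift F F (ZMod (2^n))) 1) (AddMonoidAlgebra.single j b) = b
  rw [AddMonoidAlgebra.lift_single]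
  simp

lemma finsupp_eq_sum_single (x : GA F n) :
    x = ∑ j : ZMod (2^n), AddMonoidAlgebra.single j (x.coeff j) := by
  conv_lhs => rw [← AddMonoidAlgebra.sum_coeff_single x]
  exact Finsupp.sum_fintype x.coeff _ (fun i => AddMonoidAlgebra.single_zero i)

lemma aug_eq_sum (x : GA F n) : aug F n x = ∑ j : ZMod (2^n), x.coeff j := by
  conv_lhs => rw [finsupp_eq_sum_single x]
  rw [map_sum]
  exact Finset.sum_congr rfl fun j _ => aug_single j (x.coeff j)

/-- coefficient of a product -/
lemma coeff_mul (x y : GA F n) (k : ZMod (2^n)) :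
    (x * y).coeff k = ∑ i : ZMod (2^n), x.coeff i * y.coeff (k - i) := by
  classical
  rw [AddMonoidAlgebra.coeff_mul]
  rw [Finsupp.sum_fintype _ _ (fun a => by simp [Finsupp.sum])]
  refine Finset.sum_congr rfl fun a₁ _ => ?_
  rw [Finsupp.sum_fintype _ _ (fun a => by simp)]
  rw [Finset.sum_eq_single (k - a₁)]
  · rw [if_pos (by ring)]
  · intro b _ hb
    rw [if_neg]
    intro h
    exact hb (by rw [← h]; ring)
  · intro h
    exact absurd (Finset.mem_univ _) h

/-- The key cancellation lemma: coefficient `k` of `σ_c(x) * x` when `c*c = 1`, `c*k = k`. -/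
lemma coeff_sigma_mul (hF : CharP F 2) (c k : ZMod (2^n)) (hc : c * c = 1)
    (hk : c * k = k) (x : GA F n) :
    (sigma F n c x * x).coeff k
      = ∑ j ∈ Finset.univ.filter (fun j : ZMod (2^n) => k - c * j = j), x.coeff j * x.coeff j := by
  classical
  haveI := hF
  rw [coeff_mul]
  have hcoef : ∀ i, (sigma F n c x).coeff i = x.coeff (c * i) := fun i => sigma_coeff c hc x i
  simp_rw [hcoef]
  -- reindex i = c * j
  have hinvol : Function.Involutive (fun i : ZMod (2^n) => c * i) := by
    intro b; simp only; rw [← mul_assoc, hc, one_mul]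
  rw [← Equiv.sum_comp (Function.Involutive.toPerm _ hinvol)
      (fun i => x.coeff (c * i) * x.coeff (k - i))]
  have hterm : ∀ j : ZMod (2^n),
      x.coeff (c * (c * j)) * x.coeff (k - c * j) = x.coeff j * x.coeff (k - c * j) := by
    intro j
    have h2 : c * (c * j) = j := by rw [← mul_assoc, hc, one_mul]
    rw [h2]
  simp only [Function.Involutive.coe_toPerm]
  simp_rw [hterm]
  -- now sum over j of f j = x.coeff j * x.coeff (k - c*j); split on fixed points of φ j = k - c*j
  rw [← Finset.sum_filter_add_sum_filter_not Finset.univ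
    (fun j : ZMod (2^n) => k - c * j = j) (fun j => x.coeff j * x.coeff (k - c * j))]
  have hzero : ∑ j ∈ Finset.univ.filter (fun j : ZMod (2^n) => ¬ (k - c * j = j)),
      x.coeff j * x.coeff (k - c * j) = 0 := by
    apply Finset.sum_involution (fun j _ => k - c * j)
    · intro a _
      have h1 : k - c * (k - c * a) = a := by
        have : c * (k - c * a) = k - a := by
          rw [mul_sub, hk, ← mul_assoc, hc, one_mul]
        rw [this]; ring
      rw [h1, mul_comm]
      exact CharTwo.add_self_eq_zero _
    · intro a ha _
      simpa using (Finset.mem_filter.mp ha).2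
    · intro a ha
      simp only [Finset.mem_filter, Finset.mem_univ, true_and] at ha ⊢
      have h1 : k - c * (k - c * a) = a := by
        have : c * (k - c * a) = k - a := by
          rw [mul_sub, hk, ← mul_assoc, hc, one_mul]
        rw [this]; ring
      rw [h1]
      exact fun h => ha h.symm
    · intro a _
      have : c * (k - c * a) = k - a := by
        rw [mul_sub, hk, ← mul_assoc, hc, one_mul]
      rw [this]; ring
  rw [hzero, add_zero]
  refine Finset.sum_congr rfl fun j hj => ?_
  have := (Finset.mem_filter.mp hj).2
  rw [this]

lemma single_finset_sum' {ι : Type} (s : Finset ι) (m : ZMod (2^n)) (f : ι → F) :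
    AddMonoidAlgebra.single m (∑ i ∈ s, f i) = ∑ i ∈ s, (AddMonoidAlgebra.single m (f i) : GA F n) := by
  apply AddMonoidAlgebra.ext
  rw [AddMonoidAlgebra.coeff_sum]
  simp only [AddMonoidAlgebra.coeff_single]
  exact Finsupp.single_finset_sum _ _ _

lemma charP_GA (hF : CharP F 2) : CharP (GA F n) 2 := by
  haveI := hF
  exact charP_of_injective_ringHom
    (f := (AddMonoidAlgebra.singleZeroRingHom : F →+* GA F n))
    (fun a b h => by
      have : AddMonoidAlgebra.single (0 : ZMod (2^n)) a
          = AddMonoidAlgebra.single (0 : ZMod (2^n)) b := h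
      simpa using (AddMonoidAlgebra.single_right_inj.mp this)) 2

/-- Frobenius power formula. -/
lemma pow_two_pow (hF : CharP F 2) (x : GA F n) (m : ℕ) :
    x ^ (2^m) = ∑ j : ZMod (2^n),
      AddMonoidAlgebra.single ((2 : ZMod (2^n))^m * j) (x.coeff j ^ (2^m)) := by
  haveI := hF
  haveI : CharP (GA F n) 2 := charP_GA hF
  induction m with
  | zero =>
      simpa [pow_one] using finsupp_eq_sum_single x
  | succ m ih =>
      have h1 : x ^ (2^(m+1)) = (x ^ (2^m)) ^ 2 := by
        rw [← pow_mul, pow_succ]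
      rw [h1, ih, sum_pow_char]
      refine Finset.sum_congr rfl fun j _ => ?_
      rw [sq, AddMonoidAlgebra.single_mul_single, ← sq, ← pow_mul, ← pow_succ]
      congr 1
      ring

lemma sum_pow_two_pow (hF : CharP F 2) {ι : Type} (s : Finset ι) (f : ι → F) (m : ℕ) :
    (∑ i ∈ s, f i) ^ (2^m) = ∑ i ∈ s, f i ^ (2^m) := by
  haveI := hF
  exact sum_pow_char_pow 2 m s f

/-- Unpack membership in `Vsig`. -/
lemma mem_Vsig_iff (c : ZMod (2^n)) (u : (GA F n)ˣ) :
    u ∈ Vsig F n c ↔ aug F n ↑u = 1 ∧ sigma F n c ↑u * ↑u = 1 := by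
  rw [Vsig, Subgroup.mem_inf]
  constructor
  · rintro ⟨h1, h2⟩
    rw [V, MonoidHom.mem_ker] at h1
    rw [MonoidHom.mem_ker] at h2
    constructor
    · have := congrArg Units.val h1
      simpa using this
    · have := congrArg Units.val h2
      simpa using this
  · rintro ⟨h1, h2⟩
    constructor
    · rw [V, MonoidHom.mem_ker]
      apply Units.ext
      simpa using h1
    · rw [MonoidHom.mem_ker]
      apply Units.ext
      simpa using h2

section ZModFacts

variable (m : ℕ)

lemma h2top : (2:ZMod (2^(m+3)))^(m+3) = 0 := by
  have : ((2^(m+3) : ℕ) : ZMod (2^(m+3))) = 0 := ZMod.natCast_self _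
  push_cast at this
  exact this

lemma hpow_ne {k : ℕ} (hk : k < m + 3) : (2:ZMod (2^(m+3)))^k ≠ 0 := by
  intro h
  have h2 : ((2^k : ℕ) : ZMod (2^(m+3))) = 0 := by push_cast; exact h
  rw [ZMod.natCast_eq_zero_iff] at h2
  have := (Nat.pow_dvd_pow_iff_le_right (by norm_num : (1:ℕ) < 2)).mp h2
  omega

lemma two_torsion {x : ZMod (2^(m+3))} (hx : 2 * x = 0) :
    x = 0 ∨ x = (2:ZMod (2^(m+3)))^(m+2) := by
  have hval : ((2 * x.val : ℕ) : ZMod (2^(m+3))) = 0 := by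
    push_cast
    rw [ZMod.natCast_val, ZMod.cast_id]
    exact hx
  rw [ZMod.natCast_eq_zero_iff] at hval
  have hdvd : 2^(m+2) ∣ x.val := by
    obtain ⟨s, hs⟩ := hval
    refine ⟨s, ?_⟩
    have h2 : 2 * x.val = 2 * (2^(m+2) * s) := by rw [hs]; ring
    omega
  obtain ⟨t, ht⟩ := hdvd
  have hlt : x.val < 2^(m+3) := ZMod.val_lt x
  have ht2 : t < 2 := by
    by_contra h
    push_neg at h
    have : 2^(m+3) ≤ x.val := by
      rw [ht]
      calc (2:ℕ)^(m+3) = 2^(m+2) * 2 := by ring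
      _ ≤ 2^(m+2) * t := by exact Nat.mul_le_mul_left _ h
    omega
  have hx' : x = ((x.val : ℕ) : ZMod (2^(m+3))) := by
    rw [ZMod.natCast_val, ZMod.cast_id]
  interval_cases t
  · left; rw [hx', ht]; simp
  · right; rw [hx', ht]; push_cast; ring

end ZModFacts

section Exponents

variable {F : Type} [Field F]

/-- Every element of the unitary subgroup for `a ↦ a^(2^(n-1)-1)` satisfies
`u^(2^(n-1)) = 1`. -/
lemma sigma2_exponent (hF : CharP F 2) {m : ℕ} (u : (GA F (m+3))ˣ)
    (hu : u ∈ Vsig F (m+3) ((2:ZMod (2^(m+3)))^(m+2) - 1)) :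
    u ^ (2^(m+2)) = 1 := by
  haveI := hF
  set M := ZMod (2^(m+3))
  set c : M := (2:M)^(m+2) - 1 with hcdef
  have h2n : (2:M)^(m+3) = 0 := h2top m
  have hxx : (2:M)^(m+2) * (2:M)^(m+2) = 0 := by
    have h : (2:M)^(m+2) * (2:M)^(m+2) = (2:M)^(m+3) * (2:M)^(m+1) := by ring
    rw [h, h2n, zero_mul]
  have hx2 : (2:M)^(m+2) + (2:M)^(m+2) = 0 := by
    have h : (2:M)^(m+2) + (2:M)^(m+2) = (2:M)^(m+3) := by ring
    rw [h, h2n]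
  have hc : c * c = 1 := by rw [hcdef]; linear_combination hxx - hx2
  obtain ⟨ha, hs⟩ := (mem_Vsig_iff _ u).mp hu
  -- the coefficient of the product at 0
  have h0 : (sigma F (m+3) c ↑u * ↑u).coeff (0 : M) = 1 := by
    rw [hs, AddMonoidAlgebra.one_def]
    simp
  rw [coeff_sigma_mul hF c 0 hc (mul_zero c)] at h0
  have hfilter : (Finset.univ.filter (fun j : M => (0:M) - c * j = j))
      = Finset.univ.filter (fun j : M => (2:M)^(m+2) * j = 0) := by
    apply Finset.filter_congr
    intro j _
    constructor
    · intro h; linear_combination -h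
    · intro h; linear_combination -h
  rw [hfilter] at h0
  set S := Finset.univ.filter (fun j : M => (2:M)^(m+2) * j = 0) with hSdef
  -- A = 1
  have h2F : (2:F) = 0 := by
    have := CharP.cast_eq_zero F 2
    push_cast at this
    exact this
  simp_rw [← sq] at h0
  rw [← sum_pow_char] at h0
  have hA : (∑ j ∈ S, (↑u : GA F (m+3)).coeff j) = 1 := by
    set A := ∑ j ∈ S, (↑u : GA F (m+3)).coeff j with hAdef
    have hsq : (A + 1)^2 = 0 := by linear_combination h0 + (A + 1) * h2F
    have h1 : A + 1 = 0 := pow_eq_zero_iff (by norm_num : (2:ℕ) ≠ 0) |>.mp hsq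
    linear_combination h1 - h2F
  -- B = 0
  have haug : (∑ j : M, (↑u : GA F (m+3)).coeff j) = 1 := by
    rw [← aug_eq_sum]; exact ha
  have hB : (∑ j ∈ Finset.univ.filter (fun j : M => ¬ ((2:M)^(m+2) * j = 0)),
      (↑u : GA F (m+3)).coeff j) = 0 := by
    have hsplit := Finset.sum_filter_add_sum_filter_not Finset.univ
      (fun j : M => (2:M)^(m+2) * j = 0) (fun j => (↑u : GA F (m+3)).coeff j)
    rw [haug] at hsplit
    rw [← hSdef] at hsplit
    linear_combination hsplit - hA
  -- now compute u ^ 2^(m+2)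
  apply Units.ext
  rw [Units.val_pow_eq_pow_val, Units.val_one]
  rw [pow_two_pow hF]
  rw [← Finset.sum_filter_add_sum_filter_not Finset.univ
    (fun j : M => (2:M)^(m+2) * j = 0)]
  have hpart1 : (∑ j ∈ S, AddMonoidAlgebra.single ((2:M)^(m+2) * j)
      ((↑u : GA F (m+3)).coeff j ^ 2^(m+2))) = 1 := by
    have hcongr : ∀ j ∈ S, AddMonoidAlgebra.single ((2:M)^(m+2) * j)
        ((↑u : GA F (m+3)).coeff j ^ 2^(m+2))
          = AddMonoidAlgebra.single (0:M) ((↑u : GA F (m+3)).coeff j ^ 2^(m+2)) := by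
      intro j hj
      have := (Finset.mem_filter.mp hj).2
      rw [this]
    rw [Finset.sum_congr rfl hcongr, ← single_finset_sum',
      ← sum_pow_two_pow hF, hA, one_pow]
    show AddMonoidAlgebra.single (0:M) (1:F) = 1
    rw [← AddMonoidAlgebra.one_def]
  have hpart2 : (∑ j ∈ Finset.univ.filter (fun j : M => ¬ ((2:M)^(m+2) * j = 0)),
      AddMonoidAlgebra.single ((2:M)^(m+2) * j)
        ((↑u : GA F (m+3)).coeff j ^ 2^(m+2))) = 0 := by
    have hcongr : ∀ j ∈ Finset.univ.filter (fun j : M => ¬ ((2:M)^(m+2) * j = 0)),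
        AddMonoidAlgebra.single ((2:M)^(m+2) * j)
          ((↑u : GA F (m+3)).coeff j ^ 2^(m+2))
        = AddMonoidAlgebra.single ((2:M)^(m+2)) ((↑u : GA F (m+3)).coeff j ^ 2^(m+2)) := by
      intro j hj
      have hne := (Finset.mem_filter.mp hj).2
      have h2t : 2 * ((2:M)^(m+2) * j) = 0 := by
        have : 2 * ((2:M)^(m+2) * j) = (2:M)^(m+3) * j := by ring
        rw [this, h2n, zero_mul]
      rcases two_torsion m h2t with h | h
      · exact absurd h hne
      · rw [h]
    rw [Finset.sum_congr rfl hcongr, ← single_finset_sum',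
      ← sum_pow_two_pow hF, hB]
    rw [zero_pow (by positivity)]
    exact AddMonoidAlgebra.single_zero _
  rw [hpart1, hpart2, add_zero]

/-- Every element of the unitary subgroup for `a ↦ a^(2^(n-1)+1)` squares to 1. -/
lemma sigma3_sq (hF : CharP F 2) {m : ℕ} (u : (GA F (m+3))ˣ)
    (hu : u ∈ Vsig F (m+3) ((2:ZMod (2^(m+3)))^(m+2) + 1)) :
    u ^ 2 = 1 := by
  haveI := hF
  set M := ZMod (2^(m+3))
  set c : M := (2:M)^(m+2) + 1 with hcdef
  have h2n : (2:M)^(m+3) = 0 := h2top m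
  have hxx : (2:M)^(m+2) * (2:M)^(m+2) = 0 := by
    have h : (2:M)^(m+2) * (2:M)^(m+2) = (2:M)^(m+3) * (2:M)^(m+1) := by ring
    rw [h, h2n, zero_mul]
  have hx2 : (2:M)^(m+2) + (2:M)^(m+2) = 0 := by
    have h : (2:M)^(m+2) + (2:M)^(m+2) = (2:M)^(m+3) := by ring
    rw [h, h2n]
  have hc : c * c = 1 := by rw [hcdef]; linear_combination hxx + hx2
  obtain ⟨ha, hs⟩ := (mem_Vsig_iff _ u).mp hu
  have hsigone : sigma F (m+3) (1 : M) (↑u : GA F (m+3)) = ↑u := by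
    apply AddMonoidAlgebra.ext
    rw [sigma_apply', AddMonoidAlgebra.coeff_mapDomain]
    simp only [one_mul]
    exact Finsupp.mapDomain_id
  apply Units.ext
  rw [Units.val_pow_eq_pow_val, Units.val_one, sq]
  apply AddMonoidAlgebra.ext
  apply Finsupp.ext
  intro k
  have hsq := coeff_sigma_mul hF (1 : M) k (one_mul 1) (one_mul k) (↑u : GA F (m+3))
  rw [hsigone] at hsq
  rw [hsq]
  by_cases hex : ∃ j₀ : M, k - 1 * j₀ = j₀
  · obtain ⟨j₀, hj₀⟩ := hex
    simp only [one_mul] at hj₀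
    set k' : M := ((2:M)^(m+1) + 1) * k with hk'def
    have hk' : c * k' = k' := by
      rw [hcdef, hk'def]
      have hk2 : k = j₀ + j₀ := by linear_combination hj₀
      linear_combination ((2:M)^(m+2) * ((2:M)^(m+1) + 1)) * hk2
        + (((2:M)^(m+1) + 1) * j₀) * h2n
    have h3 := coeff_sigma_mul hF c k' hc hk' (↑u : GA F (m+3))
    rw [hs] at h3
    have hsets : (Finset.univ.filter (fun j : M => k' - c * j = j))
        = Finset.univ.filter (fun j : M => k - 1 * j = j) := by
      apply Finset.filter_congr
      intro j _
      simp only [one_mul]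
      constructor
      · intro h
        have h₀ : k' - c * j₀ = j₀ := by
          rw [hcdef, hk'def]
          linear_combination ((2:M)^(m+1) + 1) * hj₀
        have hd : ((2:M)^(m+2) + 2) * (j₀ - j) = 0 := by
          rw [hcdef] at h h₀
          linear_combination h - h₀
        have hd2 : (2:M)^(m+2) * (j₀ - j) = 0 := by
          linear_combination (2:M)^(m+1) * hd - ((2:M)^m * (j₀ - j)) * h2n
        linear_combination hj₀ + hd - hd2
      · intro h
        rw [hcdef, hk'def]
        linear_combination ((2:M)^(m+1) + 1) * h
    rw [← hsets, ← h3]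
    -- now show (1 : GA) k' = (1 : GA) k
    by_cases hk0 : k = 0
    · rw [hk0]
      have : k' = 0 := by rw [hk'def, hk0, mul_zero]
      rw [this]
    · have hk'0 : k' ≠ 0 := by
        intro h0'
        have hk2 : k = j₀ + j₀ := by linear_combination hj₀
        have h2k : 2 * k = 0 := by
          rw [hk'def] at h0'
          linear_combination 2 * h0' - (2:M)^(m+2) * hk2 - j₀ * h2n
        rcases two_torsion m h2k with h | h
        · exact hk0 h
        · have hke : k' = (2:M)^(m+2) := by
            rw [hk'def, h]
            linear_combination (2:M)^m * h2n
          exact hpow_ne m (show m+2 < m+3 by omega) (by rw [← hke, h0'])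
      rw [AddMonoidAlgebra.one_def, AddMonoidAlgebra.coeff_single]
      rw [Finsupp.single_apply, Finsupp.single_apply]
      rw [if_neg (fun h => hk'0 h.symm), if_neg (fun h => hk0 h.symm)]
  · push_neg at hex
    have hempty : (Finset.univ.filter (fun j : M => k - 1 * j = j)) = ∅ := by
      apply Finset.filter_eq_empty_iff.mpr
      intro j _
      exact hex j
    rw [hempty, Finset.sum_empty]
    have hk0 : k ≠ 0 := by
      intro h
      exact hex 0 (by rw [h]; simp)
    rw [AddMonoidAlgebra.one_def, AddMonoidAlgebra.coeff_single]
    rw [Finsupp.single_apply, if_neg (by exact fun h => hk0 h.symm)]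

end Exponents

section Units

variable {F : Type} [Field F] {n : ℕ}

/-- The group-element unit `a^j`. -/
noncomputable def aU (j : ZMod (2^n)) : (GA F n)ˣ where
  val := AddMonoidAlgebra.single j 1
  inv := AddMonoidAlgebra.single (-j) 1
  val_inv := by
    rw [AddMonoidAlgebra.single_mul_single, mul_one, add_neg_cancel,
      ← AddMonoidAlgebra.one_def]
  inv_val := by
    rw [AddMonoidAlgebra.single_mul_single, mul_one, neg_add_cancel,
      ← AddMonoidAlgebra.one_def]

lemma aU_pow (j : ZMod (2^n)) (r : ℕ) :
    ((aU j ^ r : (GA F n)ˣ) : GA F n) = AddMonoidAlgebra.single ((r : ZMod (2^n)) * j) 1 := by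
  rw [Units.val_pow_eq_pow_val]
  show (AddMonoidAlgebra.single j (1:F)) ^ r = _
  rw [AddMonoidAlgebra.single_pow, one_pow, nsmul_eq_mul]

lemma aU_pow_ne_one (j : ZMod (2^n)) (r : ℕ) (h : (r : ZMod (2^n)) * j ≠ 0) :
    (aU j ^ r : (GA F n)ˣ) ≠ 1 := by
  intro he
  have h2 := congrArg Units.val he
  rw [aU_pow, Units.val_one, AddMonoidAlgebra.one_def] at h2
  exact h ((AddMonoidAlgebra.single_left_inj (one_ne_zero)).mp h2)

lemma aU_mem_Vsig (j c : ZMod (2^n)) (hcj : c * j + j = 0) :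
    (aU j : (GA F n)ˣ) ∈ Vsig F n c := by
  rw [mem_Vsig_iff]
  refine ⟨aug_single j 1, ?_⟩
  show sigma F n c (AddMonoidAlgebra.single j 1) * AddMonoidAlgebra.single j 1 = 1
  rw [sigma_apply', AddMonoidAlgebra.mapDomain_single, AddMonoidAlgebra.single_mul_single,
    mul_one, hcj, ← AddMonoidAlgebra.one_def]

lemma subgroup_pow_ne {S : Subgroup (GA F n)ˣ} {u : (GA F n)ˣ} (hm : u ∈ S) (r : ℕ)
    (h : u ^ r ≠ 1) : (⟨u, hm⟩ : ↥S) ^ r ≠ 1 := by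
  intro he
  apply h
  have h2 := congrArg (Subtype.val) he
  simpa using h2

lemma subgroup_exponent {S : Subgroup (GA F n)ˣ} (r : ℕ)
    (h : ∀ u : (GA F n)ˣ, u ∈ S → u ^ r = 1) : ∀ y : ↥S, y ^ r = 1 := by
  intro y
  apply Subtype.ext
  have h2 := h (y : (GA F n)ˣ) y.2
  simpa using h2

end Units

lemma no_iso {G H : Type} [Group G] [Group H] (r : ℕ) (x : G) (hx : x ^ r ≠ 1)
    (hH : ∀ y : H, y ^ r = 1) : IsEmpty (G ≃* H) := by
  constructor
  intro e
  apply hx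
  have h1 : e (x ^ r) = 1 := by rw [map_pow]; exact hH (e x)
  rw [← map_one e] at h1
  exact e.injective h1

end UnitaryAux

open UnitaryAux in
/-- The three unitary subgroups of `FC_{2^n}` (n > 2) corresponding to the three
involutory automorphisms `a ↦ a⁻¹`, `a ↦ a^{2^{n-1}-1}`, `a ↦ a^{2^{n-1}+1}`
are pairwise non-isomorphic. -/
theorem unitary_subgroups_pairwise_nonisomorphic (F : Type) [Field F] [Fintype F]
    (hF : CharP F 2) (n : ℕ) (hn : 2 < n) :
    IsEmpty (↥(Vsig F n (-1)) ≃* ↥(Vsig F n (2^(n-1) - 1))) ∧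
    IsEmpty (↥(Vsig F n (-1)) ≃* ↥(Vsig F n (2^(n-1) + 1))) ∧
    IsEmpty (↥(Vsig F n (2^(n-1) - 1)) ≃* ↥(Vsig F n (2^(n-1) + 1))) := by
  obtain ⟨m, rfl⟩ : ∃ m, n = m + 3 := ⟨n - 3, by omega⟩
  haveI := hF
  set M := ZMod (2^(m+3))
  -- memberships of the witness units
  have hmem1 : (aU 1 : (GA F (m+3))ˣ) ∈ Vsig F (m+3) (-1 : M) :=
    aU_mem_Vsig 1 (-1) (by ring)
  have hmem2 : (aU 2 : (GA F (m+3))ˣ) ∈ Vsig F (m+3) ((2:M)^(m+2) - 1) :=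
    aU_mem_Vsig 2 _ (by linear_combination h2top m)
  -- nontriviality of powers
  have hx_big : (aU 1 : (GA F (m+3))ˣ) ^ (2^(m+2)) ≠ 1 := by
    apply aU_pow_ne_one
    rw [mul_one]
    push_cast
    exact hpow_ne m (by omega)
  have hx_two : (aU 1 : (GA F (m+3))ˣ) ^ 2 ≠ 1 := by
    apply aU_pow_ne_one
    rw [mul_one]
    have : ((2:ℕ) : M) = (2:M)^1 := by push_cast; ring
    rw [this]
    exact hpow_ne m (by omega)
  have hx2_two : (aU 2 : (GA F (m+3))ˣ) ^ 2 ≠ 1 := by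
    apply aU_pow_ne_one
    have : ((2:ℕ) : M) * 2 = (2:M)^2 := by push_cast; ring
    rw [this]
    exact hpow_ne m (by omega)
  -- exponent bounds
  have hH2 : ∀ y : ↥(Vsig F (m+3) ((2:M)^(m+2) - 1)), y ^ (2^(m+2)) = 1 :=
    subgroup_exponent _ (fun u hu => sigma2_exponent hF u hu)
  have hH3 : ∀ y : ↥(Vsig F (m+3) ((2:M)^(m+2) + 1)), y ^ 2 = 1 :=
    subgroup_exponent _ (fun u hu => sigma3_sq hF u hu)
  refine ⟨?_, ?_, ?_⟩
  · exact no_iso (2^(m+2)) ⟨aU 1, hmem1⟩ (subgroup_pow_ne hmem1 _ hx_big) hH2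
  · exact no_iso 2 ⟨aU 1, hmem1⟩ (subgroup_pow_ne hmem1 _ hx_two) hH3
  · exact no_iso 2 ⟨aU 2, hmem2⟩ (subgroup_pow_ne hmem2 _ hx2_two) hH3
end

section
/- Let F be a finite field of characteristic 2, n > 2, G = C_{2^n} = ⟨a⟩, H = ⟨a^{2^{n-1}}⟩, Ĥ = 1 + a^{2^{n-1}}, and σ₃ the involution induced by a ↦ a^{2^{n-1}-1}. For any α ∈ F and 1 ≤ i ≤ 2^{n-2}-1, the element x = 1 + α(a^i + a^{2^{n-1}+i}) satisfies x·x^{σ₃} = 1 + α(a^i + a^{2^{n-1}-i})·Ĥ. -/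
open AddMonoidAlgebra

private lemma key_ring {R : Type*} [CommRing R] (two : (2:R) = 0) (A A' B : R)
    (hA : A * A' = 1) (hB : B * B = 1) (a : R) :
    (1 + a*A + a*(B*A)) * (1 + a*A' + a*(B*A')) = 1 + a*((A + B*A')*(1+B)) := by
  linear_combination (a^2*(1+B)^2) * hA + (a^2 - a*A') * hB + (a^2 + a^2*B) * two

private lemma sigma_single (F : Type) [Field F] (n : ℕ) (c g : ZMod (2^n)) (r : F) :
    sigma F n c (AddMonoidAlgebra.single g r) = AddMonoidAlgebra.single (c*g) r := by
  simp [sigma, Finsupp.mapDomain_single]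

/-- For `σ₃ : a ↦ a^{2^{n-1}-1}`, `Ĥ = 1 + a^{2^{n-1}}`, `α ∈ F` and
`1 ≤ i ≤ 2^{n-2}-1`, the element `x = 1 + α(a^i + a^{2^{n-1}+i})` satisfies
`x ⬝ x^{σ₃} = 1 + α(a^i + a^{2^{n-1}-i}) ⬝ Ĥ`. -/
theorem sigma3_generator_formula (F : Type) [Field F] [Fintype F] (hF : CharP F 2)
    (n : ℕ) (hn : 2 < n) (α : F) (i : ℕ) (hi1 : 1 ≤ i) (hi2 : i ≤ 2^(n-2) - 1) :
    (1 + α • (AddMonoidAlgebra.single ((i : ℕ) : ZMod (2^n)) (1 : F) +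
        AddMonoidAlgebra.single ((2^(n-1) + i : ℕ) : ZMod (2^n)) (1 : F))) *
      sigma F n (2^(n-1) - 1)
        (1 + α • (AddMonoidAlgebra.single ((i : ℕ) : ZMod (2^n)) (1 : F) +
          AddMonoidAlgebra.single ((2^(n-1) + i : ℕ) : ZMod (2^n)) (1 : F))) =
    1 + α • ((AddMonoidAlgebra.single ((i : ℕ) : ZMod (2^n)) (1 : F) +
        AddMonoidAlgebra.single (((2^(n-1) : ℕ) : ZMod (2^n)) - (i : ZMod (2^n))) (1 : F)) *
      (1 + AddMonoidAlgebra.single ((2^(n-1) : ℕ) : ZMod (2^n)) (1 : F))) := by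
  obtain ⟨m, rfl⟩ : ∃ m, n = m + 1 := ⟨n - 1, by omega⟩
  have hm2 : 1 ≤ m := by omega
  simp only [Nat.add_sub_cancel]
  set h : ZMod (2^(m+1)) := ((2^m : ℕ) : ZMod (2^(m+1))) with hh_def
  have hhh : h + h = 0 := by
    rw [hh_def, ← Nat.cast_add, show (2:ℕ)^m + 2^m = 2^(m+1) by ring, ZMod.natCast_self]
  have hsq : h * h = 0 := by
    rw [hh_def, ← Nat.cast_mul,
      show (2:ℕ)^m * 2^m = 2^(m+1) * 2^(m-1) by rw [← pow_add, ← pow_add]; congr 1; omega,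
      Nat.cast_mul, ZMod.natCast_self, zero_mul]
  have hneg : -h = h := neg_eq_of_add_eq_zero_left hhh
  have hmul : h * (i : ZMod (2^(m+1))) = 0 ∨ h * (i : ZMod (2^(m+1))) = h := by
    rcases Nat.even_or_odd i with ⟨j, hj⟩ | ⟨j, hj⟩
    · left
      rw [hh_def, hj, ← Nat.cast_mul,
        show (2:ℕ)^m * (j + j) = 2^(m+1) * j by rw [pow_succ]; ring,
        Nat.cast_mul, ZMod.natCast_self, zero_mul]
    · right
      rw [hh_def, hj, ← Nat.cast_mul,
        show (2:ℕ)^m * (2*j + 1) = 2^(m+1) * j + 2^m by rw [pow_succ]; ring,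
        Nat.cast_add, Nat.cast_mul, ZMod.natCast_self, zero_mul, zero_add]
  have he1 : ((2^m + i : ℕ) : ZMod (2^(m+1))) = h + (i : ZMod (2^(m+1))) := by
    rw [hh_def]; push_cast; ring
  set c : ZMod (2^(m+1)) := h - 1 with hc_def
  have hcast : ((2:ZMod (2^(m+1)))^m - 1) = c := by rw [hc_def, hh_def]; push_cast; ring
  have hch : c * (h + (i : ZMod (2^(m+1)))) = h + c * i := by
    rw [hc_def, mul_add, sub_mul, one_mul, hsq, zero_sub, hneg, ← hc_def]
  -- atoms
  haveI := hF
  let a : GA F (m+1) := AddMonoidAlgebra.single 0 α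
  let A : GA F (m+1) := AddMonoidAlgebra.single (i : ZMod (2^(m+1))) 1
  let A' : GA F (m+1) := AddMonoidAlgebra.single (-(i : ZMod (2^(m+1)))) 1
  let B : GA F (m+1) := AddMonoidAlgebra.single h 1
  have ha_def : a = AddMonoidAlgebra.single 0 α := rfl
  have hA_def : A = AddMonoidAlgebra.single (i : ZMod (2^(m+1))) 1 := rfl
  have hA'_def : A' = AddMonoidAlgebra.single (-(i : ZMod (2^(m+1)))) 1 := rfl
  have hB_def : B = AddMonoidAlgebra.single h 1 := rfl
  have hAA' : A * A' = 1 := by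
    rw [hA_def, hA'_def, AddMonoidAlgebra.single_mul_single, add_neg_cancel, mul_one,
      AddMonoidAlgebra.one_def]
  have hBB : B * B = 1 := by
    rw [hB_def, AddMonoidAlgebra.single_mul_single, hhh, mul_one, AddMonoidAlgebra.one_def]
  have h2F : (1:F) + 1 = 0 := by
    have h2 := CharP.cast_eq_zero F 2
    rw [one_add_one_eq_two]
    exact_mod_cast h2
  have two : (2 : GA F (m+1)) = 0 := by
    rw [← one_add_one_eq_two, AddMonoidAlgebra.one_def, ← AddMonoidAlgebra.single_add, h2F,
      AddMonoidAlgebra.single_zero]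
  have hsmul : ∀ y : GA F (m+1), α • y = a * y := by
    intro y
    rw [Algebra.smul_def, AddMonoidAlgebra.coe_algebraMap, ha_def]
    simp
  have hBA' : AddMonoidAlgebra.single (h - (i : ZMod (2^(m+1)))) (1:F) = B * A' := by
    rw [hA'_def, hB_def, AddMonoidAlgebra.single_mul_single, mul_one, sub_eq_add_neg]
  have hsA : AddMonoidAlgebra.single ((i : ZMod (2^(m+1)))) α = a * A := by
    rw [ha_def, hA_def, AddMonoidAlgebra.single_mul_single, zero_add, mul_one]
  have hsA' : AddMonoidAlgebra.single (-(i : ZMod (2^(m+1)))) α = a * A' := by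
    rw [ha_def, hA'_def, AddMonoidAlgebra.single_mul_single, zero_add, mul_one]
  have hsBA : AddMonoidAlgebra.single (h + (i : ZMod (2^(m+1)))) α = a * (B * A) := by
    rw [ha_def, hA_def, hB_def, AddMonoidAlgebra.single_mul_single,
      AddMonoidAlgebra.single_mul_single, mul_one, zero_add, mul_one]
  have hsBA' : AddMonoidAlgebra.single (h - (i : ZMod (2^(m+1)))) α = a * (B * A') := by
    rw [ha_def, hA'_def, hB_def, AddMonoidAlgebra.single_mul_single,
      AddMonoidAlgebra.single_mul_single, mul_one, zero_add, mul_one, sub_eq_add_neg]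
  rw [hcast, map_add, map_one]
  simp only [smul_add, AddMonoidAlgebra.smul_single', mul_one]
  rw [map_add, sigma_single, sigma_single, he1, hch]
  rcases hmul with hm | hm
  · have h1 : c * (i : ZMod (2^(m+1))) = -(i : ZMod (2^(m+1))) := by
      rw [hc_def, sub_mul, one_mul, hm, zero_sub]
    rw [h1, show h + -(i : ZMod (2^(m+1))) = h - (i : ZMod (2^(m+1))) from
      (sub_eq_add_neg _ _).symm, hsmul, hsA, hsA', hsBA, hsBA', hBA']
    linear_combination key_ring two A A' B hAA' hBB a
  · have h1 : c * (i : ZMod (2^(m+1))) = h - (i : ZMod (2^(m+1))) := by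
      rw [hc_def, sub_mul, one_mul, hm]
    have h2 : h + (h - (i : ZMod (2^(m+1)))) = -(i : ZMod (2^(m+1))) := by
      rw [← add_sub_assoc, hhh, zero_sub]
    rw [h1, h2, hsmul, hsA, hsA', hsBA, hsBA', hBA']
    linear_combination key_ring two A A' B hAA' hBB a
end
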